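/- arXiv:0801.2650 — 5 statements merged into one kernel-verified Lean document; each statement's English description precedes it below -/
import Mathlib

section
/- Let n ≥ 1 and let f, g : ℝⁿ → ℝ be real analytic on a neighbourhood of the origin with f(0) = g(0) = 0, neither vanishing identically on any neighbourhood of the origin. Let m (resp. k) be the order of f (resp. g) at 0, i.e. the least degree of a nonvanishing homogeneous term in the Taylor expansion at 0, and let f_m (resp. g_k) denote this initial homogeneous form, f_m(x) = (1/m!)·Dᵐf(0)(x,…,x). If there exists a C¹ diffeomorphism germ σ : (ℝⁿ,0) → (ℝⁿ,0) with f = g ∘ σ on a neighbourhood of the origin, then k = m and f_m(x) = g_m(A·x) for every x ∈ ℝⁿ, where A = Dσ(0) is the (invertible) derivative of σ at 0; in particular the initial homogeneous forms of f and g are linearly equivalent. -/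
open Filter Topology Asymptotics ENNReal

noncomputable section


section Polar

variable {E : Type*} [NormedAddCommGroup E] [NormedSpace ℝ E]
  {F : Type*} [NormedAddCommGroup F] [NormedSpace ℝ F]

/-- Polarization: a symmetric continuous multilinear map vanishing on the diagonal is zero. -/
lemma symm_diag_zero :
    ∀ (m : ℕ) (M : ContinuousMultilinearMap ℝ (fun _ : Fin m => E) F),
      (∀ (π : Equiv.Perm (Fin m)) (v : Fin m → E), M (fun i => v (π i)) = M v) →
      (∀ y : E, M (fun _ => y) = 0) → M = 0 := by
  intro m
  induction m with
  | zero =>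
    intro M _ hdiag
    ext v
    have hv : v = fun _ => (0 : E) := funext fun i => i.elim0
    rw [hv, hdiag 0, ContinuousMultilinearMap.zero_apply]
  | succ m ih =>
    intro M hsym hdiag
    have step : ∀ (y w : E), M (Function.update (fun _ : Fin (m+1) => y) 0 w) = 0 := by
      intro y w
      set L : E →L[ℝ] (Fin (m+1) → E) :=
        ContinuousLinearMap.pi (fun _ : Fin (m+1) => ContinuousLinearMap.id ℝ E) with hLdef
      have hder : HasFDerivAt (fun z : E => M (L z))
          ((M.linearDeriv (L y)).comp L) y :=
        (M.hasFDerivAt (L y)).comp y L.hasFDerivAt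
      have hzero : (fun z : E => M (L z)) = fun _ => (0 : F) := funext fun z => hdiag z
      rw [hzero] at hder
      have hD : (M.linearDeriv (L y)).comp L = 0 := hder.unique (hasFDerivAt_const 0 y)
      have h1 : (0:F) = ∑ i : Fin (m+1), M (Function.update (L y) i w) := by
        have h2 := congrArg (fun (T : E →L[ℝ] F) => T w) hD
        simpa [ContinuousMultilinearMap.linearDeriv_apply, hLdef] using h2.symm
      have h2 : ∀ i : Fin (m+1),
          M (Function.update (L y) i w) = M (Function.update (L y) 0 w) := by
        intro i
        have hs := hsym (Equiv.swap 0 i) (Function.update (L y) 0 w)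
        rw [← hs]
        congr 1
        funext j
        rcases eq_or_ne j i with rfl | hj
        · simp [hLdef, Equiv.swap_apply_right, Function.update_apply]
        · rcases eq_or_ne j 0 with rfl | hj0
          · simp [hLdef, Equiv.swap_apply_left, Function.update_apply, hj, Ne.symm hj]
          · simp [hLdef, Equiv.swap_apply_of_ne_of_ne hj0 hj, Function.update_apply, hj, hj0]
      rw [Finset.sum_congr rfl (fun i _ => h2 i), Finset.sum_const, Finset.card_univ,
        Fintype.card_fin] at h1
      have h3 : ((m+1 : ℕ) : ℝ) • M (Function.update (L y) 0 w) = 0 := by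
        rw [Nat.cast_smul_eq_nsmul]; exact h1.symm
      have h4 := (smul_eq_zero.mp h3).resolve_left (by positivity)
      convert h4 using 2
      rfl
    have stepc : ∀ (y w : E), M (Fin.cons w (fun _ : Fin m => y)) = 0 := by
      intro y w
      have : Fin.cons w (fun _ : Fin m => y)
          = Function.update (fun _ : Fin (m+1) => y) 0 w := by
        funext j
        cases j using Fin.cases with
        | zero => simp
        | succ i => simp [Function.update_apply, Fin.succ_ne_zero]
      rw [this]; exact step y w
    ext v
    have hN : M.curryLeft (v 0) = 0 := by
      apply ih
      · intro π u
        simp only [ContinuousMultilinearMap.curryLeft_apply]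
        have hs := hsym ((Equiv.Perm.decomposeFin).symm (0, π)) (Fin.cons (v 0) u)
        rw [← hs]
        congr 1
        funext j
        cases j using Fin.cases with
        | zero => simp
        | succ i => simp [Equiv.Perm.decomposeFin_symm_apply_succ]
      · intro y
        simp only [ContinuousMultilinearMap.curryLeft_apply]
        exact stepc y (v 0)
    have : M v = M.curryLeft (v 0) (Fin.tail v) := by
      rw [ContinuousMultilinearMap.curryLeft_apply, Fin.cons_self_tail]
    simp [this, hN]

end Polar

section SymmSeries

variable {E : Type*} [NormedAddCommGroup E] [NormedSpace ℝ E]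
  {F : Type*} [NormedAddCommGroup F] [NormedSpace ℝ F]

/-- The symmetrization of a formal multilinear series. -/
def symmSeries (p : FormalMultilinearSeries ℝ E F) : FormalMultilinearSeries ℝ E F :=
  fun j => (j.factorial : ℝ)⁻¹ • ∑ π : Equiv.Perm (Fin j), (p j).domDomCongr π

lemma symmSeries_diag (p : FormalMultilinearSeries ℝ E F) (j : ℕ) (y : E) :
    symmSeries p j (fun _ => y) = p j (fun _ => y) := by
  simp only [symmSeries, ContinuousMultilinearMap.smul_apply,
    ContinuousMultilinearMap.sum_apply, ContinuousMultilinearMap.domDomCongr_apply]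
  rw [Finset.sum_const, Finset.card_univ, Fintype.card_perm, Fintype.card_fin,
    ← Nat.cast_smul_eq_nsmul ℝ, inv_smul_smul₀ (by positivity)]

lemma symmSeries_symm (p : FormalMultilinearSeries ℝ E F) (j : ℕ)
    (ρ : Equiv.Perm (Fin j)) (v : Fin j → E) :
    symmSeries p j (fun i => v (ρ i)) = symmSeries p j v := by
  simp only [symmSeries, ContinuousMultilinearMap.smul_apply,
    ContinuousMultilinearMap.sum_apply, ContinuousMultilinearMap.domDomCongr_apply]
  congr 1
  exact Fintype.sum_equiv (Equiv.mulLeft ρ) _ _ (fun π => rfl)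

lemma symmSeries_norm_le (p : FormalMultilinearSeries ℝ E F) (j : ℕ) :
    ‖symmSeries p j‖ ≤ ‖p j‖ := by
  have h1 : ‖∑ π : Equiv.Perm (Fin j), (p j).domDomCongr π‖ ≤ (j.factorial : ℝ) * ‖p j‖ := by
    refine le_trans (norm_sum_le _ _) ?_
    rw [Finset.sum_congr rfl (fun π _ => ContinuousMultilinearMap.norm_domDomCongr ℝ E F π (p j)),
      Finset.sum_const, Finset.card_univ, Fintype.card_perm, Fintype.card_fin, nsmul_eq_mul]
  simp only [symmSeries]
  refine le_trans (ContinuousMultilinearMap.opNorm_smul_le _ _) ?_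
  rw [Real.norm_eq_abs, abs_of_nonneg (by positivity)]
  have h3 : ((j.factorial : ℝ))⁻¹ * ‖∑ π : Equiv.Perm (Fin j), (p j).domDomCongr π‖
      ≤ ((j.factorial : ℝ))⁻¹ * ((j.factorial : ℝ) * ‖p j‖) := by gcongr
  refine le_trans h3 ?_
  rw [inv_mul_cancel_left₀ (by positivity)]

lemma hasFPowerSeriesOnBall_symmSeries {f : E → F} {p : FormalMultilinearSeries ℝ E F}
    {r : ℝ≥0∞} (h : HasFPowerSeriesOnBall f p 0 r) :
    HasFPowerSeriesOnBall f (symmSeries p) 0 r where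
  r_le := le_trans h.r_le
    (FormalMultilinearSeries.radius_le_of_le fun n => symmSeries_norm_le p n)
  r_pos := h.r_pos
  hasSum := by
    intro y hy
    have := h.hasSum hy
    convert this using 1
    funext n
    exact symmSeries_diag p n y

end SymmSeries

universe u

lemma derivSeries_coeff_zero {E : Type*} [NormedAddCommGroup E] [NormedSpace ℝ E]
    {F : Type*} [NormedAddCommGroup F] [NormedSpace ℝ F]
    (p : FormalMultilinearSeries ℝ E F) (j : ℕ) (h : p (1 + j) = 0) :
    p.derivSeries j = 0 := by
  have hterm : ∀ (s : Finset (Fin (1 + j))) (hs : s.card = j),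
      p.changeOriginSeriesTerm 1 j s hs = 0 := by
    intro s hs
    rw [FormalMultilinearSeries.changeOriginSeriesTerm, h]
    exact LinearIsometryEquiv.map_zero _
  have hcos : p.changeOriginSeries 1 j = 0 := by
    rw [FormalMultilinearSeries.changeOriginSeries]
    exact Finset.sum_eq_zero fun s _ => hterm s.1 s.2
  show (ContinuousLinearMap.compFormalMultilinearSeries _ (p.changeOriginSeries 1)) j = 0
  rw [ContinuousLinearMap.compFormalMultilinearSeries_apply, hcos]
  ext v
  simp

lemma iteratedFDeriv_zero_of_coeff_zero {E : Type u} [NormedAddCommGroup E] [NormedSpace ℝ E] :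
    ∀ (m : ℕ) {F : Type u} [NormedAddCommGroup F] [NormedSpace ℝ F] [CompleteSpace F]
      {f : E → F} {p : FormalMultilinearSeries ℝ E F} {r : ℝ≥0∞},
      HasFPowerSeriesOnBall f p 0 r → (∀ j ≤ m, p j = 0) →
      iteratedFDeriv ℝ m f 0 = 0 := by
  intro m
  induction m with
  | zero =>
    intro F _ _ _ f p r h hc
    rw [h.iteratedFDeriv_zero_apply_diag, hc 0 le_rfl]
  | succ m ih =>
    intro F _ _ _ f p r h hc
    have hd : HasFPowerSeriesOnBall (fderiv ℝ f) p.derivSeries 0 r := h.fderiv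
    have hcd : ∀ j ≤ m, p.derivSeries j = 0 := fun j hj =>
      derivSeries_coeff_zero p j (hc (1 + j) (by omega))
    have hIH := ih hd hcd
    ext v
    rw [iteratedFDeriv_succ_apply_right, hIH]
    simp

lemma lim_aux {E : Type*} [NormedAddCommGroup E] [NormedSpace ℝ E]
    {f : E → ℝ} {p : FormalMultilinearSeries ℝ E ℝ} (hp : HasFPowerSeriesAt f p 0)
    (m : ℕ) (hdiag : ∀ j < m, ∀ y : E, p j (fun _ => y) = 0)
    {c : ℝ → E} {L : E} (hc : Tendsto (fun t => t⁻¹ • c t) (𝓝[≠] (0:ℝ)) (𝓝 L)) :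
    Tendsto (fun t => f (c t) / t ^ m) (𝓝[≠] (0:ℝ)) (𝓝 (p m (fun _ => L))) := by
  set u : ℝ → E := fun t => t⁻¹ • c t with hu
  have hne : ∀ᶠ t in 𝓝[≠] (0:ℝ), t ≠ 0 := self_mem_nhdsWithin
  have hcu : ∀ᶠ t in 𝓝[≠] (0:ℝ), c t = t • u t := by
    filter_upwards [hne] with t ht
    rw [hu]; rw [smul_smul, mul_inv_cancel₀ ht, one_smul]
  have hc0 : Tendsto c (𝓝[≠] (0:ℝ)) (𝓝 0) := by
    have hid : Tendsto (fun t : ℝ => t) (𝓝[≠] (0:ℝ)) (𝓝 0) :=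
      tendsto_id.mono_left nhdsWithin_le_nhds
    have h1 : Tendsto (fun t : ℝ => t • u t) (𝓝[≠] (0:ℝ)) (𝓝 ((0:ℝ) • L)) := hid.smul hc
    rw [zero_smul] at h1
    exact h1.congr' (by filter_upwards [hcu] with t ht; rw [← ht])
  have hOpart : (fun y : E => f y - p.partialSum (m+1) y) =O[𝓝 0] (fun y => ‖y‖^(m+1)) := by
    have h2 := hp.isBigO_sub_partialSum_pow (m+1)
    simpa using h2
  have hPS : ∀ y : E, p.partialSum (m+1) y = p m (fun _ => y) := by
    intro y
    rw [FormalMultilinearSeries.partialSum]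
    refine Finset.sum_eq_single_of_mem m (Finset.self_mem_range_succ m) fun j hj hjm => ?_
    exact hdiag j (by simp only [Finset.mem_range] at hj; omega) y
  have hO1 : (fun t => f (c t) - p m (fun _ => c t)) =O[𝓝[≠] (0:ℝ)]
      (fun t => ‖c t‖^(m+1)) := by
    have h3 := hOpart.comp_tendsto hc0
    have heq : (fun t => f (c t) - p m (fun _ => c t))
        = (fun y : E => f y - p.partialSum (m+1) y) ∘ c := by
      funext t; simp [Function.comp, hPS]
    rw [heq]; exact h3
  have hub : ∀ᶠ t in 𝓝[≠] (0:ℝ), ‖u t‖ ≤ ‖L‖ + 1 :=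
    hc.norm.eventually (eventually_le_nhds (lt_add_one ‖L‖))
  have hO2 : (fun t => ‖c t‖^(m+1)) =O[𝓝[≠] (0:ℝ)] (fun t => |t|^(m+1)) := by
    rw [isBigO_iff]
    refine ⟨(‖L‖+1)^(m+1), ?_⟩
    filter_upwards [hub, hcu] with t h1 h2
    have hct : ‖c t‖ ≤ (‖L‖+1) * |t| := by
      rw [h2, norm_smul, Real.norm_eq_abs]
      rw [mul_comm]
      exact mul_le_mul_of_nonneg_right h1 (abs_nonneg t) |>.trans_eq (by ring) |>.trans_eq rfl
    have h4 : ‖c t‖^(m+1) ≤ ((‖L‖+1) * |t|)^(m+1) :=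
      pow_le_pow_left₀ (norm_nonneg _) hct _
    rw [Real.norm_eq_abs, abs_of_nonneg (by positivity), Real.norm_eq_abs,
      abs_of_nonneg (by positivity)]
    calc ‖c t‖^(m+1) ≤ ((‖L‖+1) * |t|)^(m+1) := h4
      _ = (‖L‖+1)^(m+1) * |t|^(m+1) := mul_pow _ _ _
  have hO3 : (fun t => f (c t) - p m (fun _ => c t)) =O[𝓝[≠] (0:ℝ)]
      (fun t => |t|^(m+1)) := hO1.trans hO2
  have hO4 : (fun t => f (c t) / t^m - p m (fun _ => u t)) =O[𝓝[≠] (0:ℝ)]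
      (fun t : ℝ => |t|) := by
    rw [isBigO_iff] at hO3 ⊢
    obtain ⟨C, hC⟩ := hO3
    refine ⟨C, ?_⟩
    filter_upwards [hC, hcu, hne] with t h1 h2 ht
    have hdm : p m (fun _ => c t) = t^m * p m (fun _ => u t) := by
      rw [h2, show (fun _ : Fin m => t • u t) = fun _ => t • (u t) from rfl,
        ContinuousMultilinearMap.map_smul_univ]
      simp [smul_eq_mul]
    have htm : (t:ℝ)^m ≠ 0 := pow_ne_zero _ ht
    have heq2 : f (c t) / t^m - p m (fun _ => u t)
        = (f (c t) - p m (fun _ => c t)) / t^m := by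
      rw [hdm]; field_simp
    rw [heq2, Real.norm_eq_abs, abs_div, abs_pow, div_le_iff₀ (by positivity)]
    have h5 : |f (c t) - p m (fun _ => c t)| ≤ C * |t|^(m+1) := by
      have := h1
      rwa [Real.norm_eq_abs, Real.norm_eq_abs, abs_pow, abs_abs] at this
    calc |f (c t) - p m (fun _ => c t)| ≤ C * |t|^(m+1) := h5
      _ = C * |t| * |t|^m := by ring
      _ = C * ‖|t|‖ * |t|^m := by rw [Real.norm_eq_abs, abs_abs]
  have h5 : Tendsto (fun t => f (c t)/t^m - p m (fun _ => u t)) (𝓝[≠] (0:ℝ)) (𝓝 0) := by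
    refine hO4.trans_tendsto ?_
    have : Tendsto (fun t : ℝ => |t|) (𝓝 (0:ℝ)) (𝓝 |0|) := continuous_abs.tendsto 0
    simpa using this.mono_left nhdsWithin_le_nhds
  have h6 : Tendsto (fun t => p m (fun _ => u t)) (𝓝[≠] (0:ℝ)) (𝓝 (p m (fun _ => L))) := by
    have hcont : Continuous fun y : E => p m (fun _ => y) :=
      (p m).cont.comp (continuous_pi fun _ => continuous_id)
    exact (hcont.tendsto L).comp hc
  have h7 := h5.add h6
  rw [zero_add] at h7
  refine h7.congr fun t => ?_
  ring


/-- A C¹ diffeomorphism germ at the origin: a continuously differentiable map defined on an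
open neighbourhood of the origin, fixing the origin, which is a homeomorphism onto an open
neighbourhood of the origin with continuously differentiable inverse. -/
def IsC1DiffeoGerm {E : Type*} [NormedAddCommGroup E] [NormedSpace ℝ E] (σ : E → E) : Prop :=
  σ 0 = 0 ∧ ∃ (U V : Set E) (τ : E → E), IsOpen U ∧ IsOpen V ∧ (0 : E) ∈ U ∧ (0 : E) ∈ V ∧
    Set.MapsTo σ U V ∧ Set.MapsTo τ V U ∧ (∀ x ∈ U, τ (σ x) = x) ∧ (∀ y ∈ V, σ (τ y) = y) ∧
    ContDiffOn ℝ 1 σ U ∧ ContDiffOn ℝ 1 τ V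

/-- If `f = g ∘ σ` near the origin for a C¹ diffeomorphism germ `σ`, then the orders of `f`
and `g` at the origin coincide and the initial homogeneous forms are linearly equivalent via
`A = Dσ(0)`, which is invertible. -/
theorem stmt0 (n : ℕ) (hn : 1 ≤ n) (f g : (Fin n → ℝ) → ℝ)
    (hf : AnalyticAt ℝ f 0) (hg : AnalyticAt ℝ g 0) (hf0 : f 0 = 0) (hg0 : g 0 = 0)
    (hfne : ¬ ∀ᶠ x in 𝓝 (0 : Fin n → ℝ), f x = 0)
    (hgne : ¬ ∀ᶠ x in 𝓝 (0 : Fin n → ℝ), g x = 0)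
    (m k : ℕ)
    (hm : (∀ j < m, iteratedFDeriv ℝ j f 0 = 0) ∧ iteratedFDeriv ℝ m f 0 ≠ 0)
    (hk : (∀ j < k, iteratedFDeriv ℝ j g 0 = 0) ∧ iteratedFDeriv ℝ k g 0 ≠ 0)
    (σ : (Fin n → ℝ) → (Fin n → ℝ)) (hσ : IsC1DiffeoGerm σ)
    (hfg : ∀ᶠ x in 𝓝 (0 : Fin n → ℝ), f x = g (σ x)) :
    k = m ∧ Function.Bijective (fderiv ℝ σ 0) ∧
      ∀ x : Fin n → ℝ,
        ((m.factorial : ℝ))⁻¹ • iteratedFDeriv ℝ m f 0 (fun _ => x) =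
          ((m.factorial : ℝ))⁻¹ • iteratedFDeriv ℝ m g 0 (fun _ => fderiv ℝ σ 0 x) := by
  obtain ⟨hσ0, U, V, τ, hU, hV, h0U, h0V, hσUV, hτVU, hlinv, hrinv, hσC1, hτC1⟩ := hσ
  have hτ0 : τ 0 = 0 := by have h := hlinv 0 h0U; rwa [hσ0] at h
  have hUe : U ∈ 𝓝 (0 : Fin n → ℝ) := hU.mem_nhds h0U
  have hVe : V ∈ 𝓝 (0 : Fin n → ℝ) := hV.mem_nhds h0V
  have hσd : DifferentiableAt ℝ σ 0 :=
    (hσC1.differentiableOn one_ne_zero).differentiableAt hUe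
  have hτd : DifferentiableAt ℝ τ 0 :=
    (hτC1.differentiableOn one_ne_zero).differentiableAt hVe
  set A := fderiv ℝ σ 0 with hA
  set B := fderiv ℝ τ 0 with hB
  have hcomp1 : HasFDerivAt (τ ∘ σ) (B.comp A) 0 := by
    have h1 : HasFDerivAt τ B (σ 0) := by rw [hσ0]; exact hτd.hasFDerivAt
    exact h1.comp 0 hσd.hasFDerivAt
  have hid1 : HasFDerivAt (id : (Fin n → ℝ) → (Fin n → ℝ)) (B.comp A) 0 := by
    refine hcomp1.congr_of_eventuallyEq ?_
    filter_upwards [hUe] with x hx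
    exact (hlinv x hx).symm
  have hBA : B.comp A = ContinuousLinearMap.id ℝ (Fin n → ℝ) :=
    hid1.unique (hasFDerivAt_id 0)
  have hcomp2 : HasFDerivAt (σ ∘ τ) (A.comp B) 0 := by
    have h1 : HasFDerivAt σ A (τ 0) := by rw [hτ0]; exact hσd.hasFDerivAt
    exact h1.comp 0 hτd.hasFDerivAt
  have hid2 : HasFDerivAt (id : (Fin n → ℝ) → (Fin n → ℝ)) (A.comp B) 0 := by
    refine hcomp2.congr_of_eventuallyEq ?_
    filter_upwards [hVe] with x hx
    exact (hrinv x hx).symm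
  have hAB : A.comp B = ContinuousLinearMap.id ℝ (Fin n → ℝ) :=
    hid2.unique (hasFDerivAt_id 0)
  have hleft : Function.LeftInverse B A := by
    intro x
    have h := congrArg (fun (T : (Fin n → ℝ) →L[ℝ] (Fin n → ℝ)) => T x) hBA
    simpa using h
  have hright : Function.RightInverse B A := by
    intro x
    have h := congrArg (fun (T : (Fin n → ℝ) →L[ℝ] (Fin n → ℝ)) => T x) hAB
    simpa using h
  have hbij : Function.Bijective A := ⟨hleft.injective, hright.surjective⟩
  obtain ⟨p, hp⟩ := hf
  obtain ⟨q, hq⟩ := hg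
  obtain ⟨rf, hpr⟩ := hp
  obtain ⟨rg, hqr⟩ := hq
  have hp' : HasFPowerSeriesAt f p 0 := ⟨rf, hpr⟩
  have hq' : HasFPowerSeriesAt g q 0 := ⟨rg, hqr⟩
  have hdiagf : ∀ j < m, ∀ y : Fin n → ℝ, p j (fun _ => y) = 0 := by
    intro j hj y
    have h1 := hpr.factorial_smul y j
    rw [hm.1 j hj] at h1
    simp only [ContinuousMultilinearMap.zero_apply] at h1
    rw [← Nat.cast_smul_eq_nsmul ℝ] at h1
    exact (smul_eq_zero.mp h1).resolve_left (Nat.cast_ne_zero.mpr j.factorial_ne_zero)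
  have hdiagg : ∀ j < k, ∀ y : Fin n → ℝ, q j (fun _ => y) = 0 := by
    intro j hj y
    have h1 := hqr.factorial_smul y j
    rw [hk.1 j hj] at h1
    simp only [ContinuousMultilinearMap.zero_apply] at h1
    rw [← Nat.cast_smul_eq_nsmul ℝ] at h1
    exact (smul_eq_zero.mp h1).resolve_left (Nat.cast_ne_zero.mpr j.factorial_ne_zero)
  have hfmrep : ∀ y : Fin n → ℝ,
      ((m.factorial : ℝ))⁻¹ • iteratedFDeriv ℝ m f 0 (fun _ => y) = p m (fun _ => y) := by
    intro y
    rw [← hpr.factorial_smul y m, ← Nat.cast_smul_eq_nsmul ℝ,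
      inv_smul_smul₀ (Nat.cast_ne_zero.mpr m.factorial_ne_zero)]
  have hgmrep : ∀ y : Fin n → ℝ,
      ((k.factorial : ℝ))⁻¹ • iteratedFDeriv ℝ k g 0 (fun _ => y) = q k (fun _ => y) := by
    intro y
    rw [← hqr.factorial_smul y k, ← Nat.cast_smul_eq_nsmul ℝ,
      inv_smul_smul₀ (Nat.cast_ne_zero.mpr k.factorial_ne_zero)]
  -- limit for f along rays
  have hc1 : ∀ x : Fin n → ℝ,
      Tendsto (fun t : ℝ => t⁻¹ • (t • x)) (𝓝[≠] (0:ℝ)) (𝓝 x) := by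
    intro x
    have heq : ∀ᶠ t in 𝓝[≠] (0:ℝ), x = t⁻¹ • (t • x) := by
      filter_upwards [self_mem_nhdsWithin] with t ht
      rw [smul_smul, inv_mul_cancel₀ ht, one_smul]
    exact tendsto_const_nhds.congr' heq
  have hLIMf : ∀ x : Fin n → ℝ,
      Tendsto (fun t : ℝ => f (t • x) / t^m) (𝓝[≠] (0:ℝ)) (𝓝 (p m (fun _ => x))) :=
    fun x => lim_aux hp' m hdiagf (hc1 x)
  have hc2 : ∀ x : Fin n → ℝ,
      Tendsto (fun t : ℝ => t⁻¹ • σ (t • x)) (𝓝[≠] (0:ℝ)) (𝓝 (A x)) := by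
    intro x
    have hcurve : HasDerivAt (fun t : ℝ => σ (t • x)) (A x) 0 := by
      have hsm : HasDerivAt (fun t : ℝ => t • x) x 0 := by
        simpa using (hasDerivAt_id (0:ℝ)).smul_const x
      have hσA : HasFDerivAt σ A ((0:ℝ) • x) := by
        rw [zero_smul]; exact hσd.hasFDerivAt
      exact hσA.comp_hasDerivAt 0 hsm
    have h1 := hasDerivAt_iff_tendsto_slope.mp hcurve
    refine h1.congr fun t => ?_
    simp [slope, hσ0]
  have hLIMg : ∀ x : Fin n → ℝ,
      Tendsto (fun t : ℝ => g (σ (t • x)) / t^k) (𝓝[≠] (0:ℝ)) (𝓝 (q k (fun _ => A x))) :=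
    fun x => lim_aux hq' k hdiagg (hc2 x)
  have hEV : ∀ x : Fin n → ℝ, ∀ᶠ t : ℝ in 𝓝[≠] (0:ℝ), f (t • x) = g (σ (t • x)) := by
    intro x
    have hsmt : Tendsto (fun t : ℝ => t • x) (𝓝[≠] (0:ℝ)) (𝓝 0) := by
      have hcont : Continuous fun t : ℝ => t • x := continuous_id.smul continuous_const
      have h2 := (hcont.tendsto 0).mono_left (nhdsWithin_le_nhds (s := {(0:ℝ)}ᶜ))
      simpa using h2
    exact hsmt.eventually hfg
  rcases lt_trichotomy k m with hkm | hkm | hkm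
  · exfalso
    have hzero : ∀ x : Fin n → ℝ, q k (fun _ => A x) = 0 := by
      intro x
      have h2 : Tendsto (fun t : ℝ => t^(m-k) * (f (t • x) / t^m)) (𝓝[≠] (0:ℝ))
          (𝓝 (0 * (p m fun _ => x))) := by
        refine Tendsto.mul ?_ (hLIMf x)
        have h3 := (continuous_pow (m-k)).tendsto (0:ℝ)
        rw [zero_pow (by omega : m - k ≠ 0)] at h3
        exact h3.mono_left nhdsWithin_le_nhds
      rw [zero_mul] at h2
      have h4 : Tendsto (fun t : ℝ => g (σ (t • x)) / t^k) (𝓝[≠] (0:ℝ)) (𝓝 0) := by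
        refine h2.congr' ?_
        filter_upwards [self_mem_nhdsWithin, hEV x] with t ht hteq
        have hpow : t ^ m = t ^ (m - k) * t ^ k := by
          rw [← pow_add]; congr 1; omega
        rw [← hteq, hpow, mul_div_assoc', mul_div_mul_left _ _ (pow_ne_zero _ ht)]
      exact (tendsto_nhds_unique (hLIMg x) h4)
    have hzero' : ∀ y : Fin n → ℝ, q k (fun _ => y) = 0 := by
      intro y
      obtain ⟨x, hx⟩ := hbij.2 y
      rw [← hx]; exact hzero x
    have hqs : HasFPowerSeriesOnBall g (symmSeries q) 0 rg :=
      hasFPowerSeriesOnBall_symmSeries hqr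
    have hcoeff : ∀ j ≤ k, symmSeries q j = 0 := by
      intro j hj
      refine symm_diag_zero j (symmSeries q j) (symmSeries_symm q j) fun y => ?_
      rw [symmSeries_diag]
      rcases lt_or_eq_of_le hj with h | h
      · exact hdiagg j h y
      · subst h; exact hzero' y
    exact hk.2 (iteratedFDeriv_zero_of_coeff_zero k hqs hcoeff)
  · subst hkm
    refine ⟨rfl, hbij, fun x => ?_⟩
    rw [hfmrep x, hgmrep (A x)]
    have h1 := hLIMf x
    have h2 : Tendsto (fun t : ℝ => f (t • x) / t^k) (𝓝[≠] (0:ℝ))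
        (𝓝 (q k (fun _ => A x))) := by
      refine (hLIMg x).congr' ?_
      filter_upwards [hEV x] with t ht
      rw [ht]
    exact tendsto_nhds_unique h1 h2
  · exfalso
    have hzero' : ∀ x : Fin n → ℝ, p m (fun _ => x) = 0 := by
      intro x
      have h2 : Tendsto (fun t : ℝ => t^(k-m) * (g (σ (t • x)) / t^k)) (𝓝[≠] (0:ℝ))
          (𝓝 (0 * (q k fun _ => A x))) := by
        refine Tendsto.mul ?_ (hLIMg x)
        have h3 := (continuous_pow (k-m)).tendsto (0:ℝ)
        rw [zero_pow (by omega : k - m ≠ 0)] at h3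
        exact h3.mono_left nhdsWithin_le_nhds
      rw [zero_mul] at h2
      have h4 : Tendsto (fun t : ℝ => f (t • x) / t^m) (𝓝[≠] (0:ℝ)) (𝓝 0) := by
        refine h2.congr' ?_
        filter_upwards [self_mem_nhdsWithin, hEV x] with t ht hteq
        have hpow : t ^ k = t ^ (k - m) * t ^ m := by
          rw [← pow_add]; congr 1; omega
        rw [hteq, hpow, mul_div_assoc', mul_div_mul_left _ _ (pow_ne_zero _ ht)]
      exact tendsto_nhds_unique (hLIMf x) h4
    have hps : HasFPowerSeriesOnBall f (symmSeries p) 0 rf :=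
      hasFPowerSeriesOnBall_symmSeries hpr
    have hcoeff : ∀ j ≤ m, symmSeries p j = 0 := by
      intro j hj
      refine symm_diag_zero j (symmSeries p j) (symmSeries_symm p j) fun y => ?_
      rw [symmSeries_diag]
      rcases lt_or_eq_of_le hj with h | h
      · exact hdiagf j h y
      · subst h; exact hzero' y
    exact hm.2 (iteratedFDeriv_zero_of_coeff_zero m hps hcoeff)
end
end

section
/- Let σ : (ℝ²,0) → (ℝ²,0) be a bi-Lipschitz homeomorphism germ, let γ : x = λ(y) and γ̃ : x = λ̃(y) be allowable real analytic demi-branches, and suppose there exist ξ₀ > 1 and N > 0 such that σ(γ) ⊂ H_{ξ₀}(γ̃; N) as germs at the origin (i.e. for all sufficiently small y > 0 the point σ(λ(y), y) lies in H_{ξ₀}(γ̃; N)). Then for every ξ with 1 < ξ ≤ ξ₀ and every M > 0 there exist M̃ > 0 and a neighbourhood U₀ of the origin such that σ(H_ξ(γ; M) ∩ U₀) ⊂ H_ξ(γ̃; M̃). Moreover there is a constant A > 0, depending on σ, γ, γ̃ and ξ but not on M, such that M̃ can be taken equal to A·M when ξ < ξ₀ and equal to A·M + N when ξ = ξ₀.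 -/
open Filter Topology

noncomputable section

/-- A bi-Lipschitz homeomorphism germ at the origin of the plane. -/
def IsBiLipschitzGerm (σ : ℝ × ℝ → ℝ × ℝ) : Prop :=
  σ 0 = 0 ∧ ∃ (U V : Set (ℝ × ℝ)) (τ : ℝ × ℝ → ℝ × ℝ) (K : NNReal),
    IsOpen U ∧ IsOpen V ∧ (0 : ℝ × ℝ) ∈ U ∧ (0 : ℝ × ℝ) ∈ V ∧
    Set.MapsTo σ U V ∧ Set.MapsTo τ V U ∧
    (∀ x ∈ U, τ (σ x) = x) ∧ (∀ y ∈ V, σ (τ y) = y) ∧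
    LipschitzOnWith K σ U ∧ LipschitzOnWith K τ V

/-- An allowable real analytic demi-branch `x = λ(y)`, `y ≥ 0`: `λ(y) = μ(y^{1/N})` for a real
analytic `μ` with `μ(0) = 0`, and `|λ(y)| ≤ C·y` near `0`. -/
def AllowableBranch (lam : ℝ → ℝ) : Prop :=
  ∃ (N : ℕ) (μ : ℝ → ℝ), 0 < N ∧ AnalyticAt ℝ μ 0 ∧ μ 0 = 0 ∧
    (∀ᶠ y in 𝓝[≥] (0 : ℝ), lam y = μ (y ^ ((N : ℝ)⁻¹))) ∧
    ∃ C > (0 : ℝ), ∀ᶠ y in 𝓝[≥] (0 : ℝ), |lam y| ≤ C * y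

/-- The horn neighbourhood `H_ξ(γ; N)` of the demi-branch `x = λ(y)`. -/
def Horn (ξ : ℝ) (lam : ℝ → ℝ) (N : ℝ) : Set (ℝ × ℝ) :=
  {p : ℝ × ℝ | 0 < p.2 ∧ |p.1 - lam p.2| ≤ N * p.2 ^ ξ}

private lemma ev_ge {P : ℝ → Prop} (h : ∀ᶠ y in 𝓝[≥] (0 : ℝ), P y) :
    ∃ δ > (0:ℝ), ∀ y : ℝ, 0 ≤ y → y < δ → P y := by
  rw [eventually_nhdsWithin_iff, Metric.eventually_nhds_iff] at h
  obtain ⟨ε, hε, h⟩ := h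
  exact ⟨ε, hε, fun y hy hyε =>
    h (by rwa [Real.dist_eq, sub_zero, abs_of_nonneg hy]) hy⟩

private lemma ev_gt {P : ℝ → Prop} (h : ∀ᶠ y in 𝓝[>] (0 : ℝ), P y) :
    ∃ δ > (0:ℝ), ∀ y : ℝ, 0 < y → y < δ → P y := by
  rw [eventually_nhdsWithin_iff, Metric.eventually_nhds_iff] at h
  obtain ⟨ε, hε, h⟩ := h
  exact ⟨ε, hε, fun y hy hyε =>
    h (by rwa [Real.dist_eq, sub_zero, abs_of_nonneg hy.le]) hy⟩

private lemma one_add_pow_le (n : ℕ) {d : ℝ} (hd : 0 ≤ d) (hd1 : d ≤ 1) :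
    (1 + d) ^ n ≤ 1 + 3 ^ n * d := by
  induction n with
  | zero => simpa using hd
  | succ n ih =>
    have h3 : (1:ℝ) ≤ 3 ^ n := one_le_pow₀ (by norm_num)
    calc (1 + d) ^ (n + 1) = (1 + d) ^ n * (1 + d) := by ring
    _ ≤ (1 + 3 ^ n * d) * (1 + d) := by nlinarith
    _ ≤ 1 + 3 ^ (n + 1) * d := by
        rw [pow_succ]; nlinarith [mul_le_of_le_one_left hd hd1]


private lemma branch_lip {lam : ℝ → ℝ} (h : AllowableBranch lam) :
    ∃ L > (0:ℝ), ∃ δ > (0:ℝ), ∀ a b : ℝ, 0 ≤ a → a < δ → 0 ≤ b → b < δ →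
      |lam a - lam b| ≤ L * |a - b| := by
  obtain ⟨n, μ, hn, hμ, hμ0, heq, C, hC, hb⟩ := h
  have hn' : (n : ℕ) ≠ 0 := hn.ne'
  obtain ⟨δ₁, hδ₁, heq'⟩ := ev_ge heq
  by_cases htop : analyticOrderAt μ 0 = ⊤
  · -- μ vanishes near 0
    obtain ⟨ε, hε, hz⟩ := Metric.eventually_nhds_iff.mp (analyticOrderAt_eq_top.mp htop)
    refine ⟨1, one_pos, min δ₁ (ε ^ n), by positivity, ?_⟩
    have key : ∀ y : ℝ, 0 ≤ y → y < min δ₁ (ε ^ n) → lam y = 0 := by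
      intro y hy hyδ
      rw [heq' y hy (lt_of_lt_of_le hyδ (min_le_left _ _))]
      apply hz
      rw [Real.dist_eq, sub_zero, abs_of_nonneg (Real.rpow_nonneg hy _)]
      calc y ^ ((n:ℝ)⁻¹) < (ε ^ n) ^ ((n:ℝ)⁻¹) :=
            Real.rpow_lt_rpow hy (lt_of_lt_of_le hyδ (min_le_right _ _)) (by positivity)
      _ = ε := Real.pow_rpow_inv_natCast hε.le hn'
    intro a b ha haδ hb hbδ
    rw [key a ha haδ, key b hb hbδ]
    simpa using abs_nonneg (a - b)
  · -- finite order k ≥ n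
    lift analyticOrderAt μ 0 to ℕ using htop with k hk
    obtain ⟨g, hg, hg0, hgeq⟩ := (hμ.analyticOrderAt_eq_natCast).mp hk.symm
    simp only [sub_zero, smul_eq_mul] at hgeq
    obtain ⟨ε₂, hε₂, hgz⟩ := Metric.eventually_nhds_iff.mp hgeq
    obtain ⟨δb, hδb, hb'⟩ := ev_ge hb
    -- first: n ≤ k
    have hnk : n ≤ k := by
      by_contra hlt
      push_neg at hlt
      have hev : ∀ᶠ s in 𝓝[>] (0:ℝ), |g s| ≤ C * s ^ (n - k) := by
        rw [eventually_nhdsWithin_iff, Metric.eventually_nhds_iff]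
        refine ⟨min ε₂ (min (δ₁ ^ ((n:ℝ)⁻¹)) (δb ^ ((n:ℝ)⁻¹))), by positivity, ?_⟩
        intro s hs hs0
        have hs0 : (0:ℝ) < s := hs0
        rw [Real.dist_eq, sub_zero, abs_of_nonneg hs0.le] at hs
        have hsε₂ : s < ε₂ := lt_of_lt_of_le hs (min_le_left _ _)
        have hsn : ∀ d : ℝ, 0 < d → s < d ^ ((n:ℝ)⁻¹) → s ^ n < d := by
          intro d hd hsd
          calc s ^ n < (d ^ ((n:ℝ)⁻¹)) ^ n := by
                exact pow_lt_pow_left₀ hsd hs0.le hn'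
          _ = d := Real.rpow_inv_natCast_pow hd.le hn'
        have h1 : s ^ n < δ₁ := hsn δ₁ hδ₁ (lt_of_lt_of_le hs ((min_le_right _ _).trans (min_le_left _ _)))
        have h2 : s ^ n < δb := hsn δb hδb (lt_of_lt_of_le hs ((min_le_right _ _).trans (min_le_right _ _)))
        have hyeq : lam (s ^ n) = μ s := by
          rw [heq' _ (by positivity) h1, Real.pow_rpow_inv_natCast hs0.le hn']
        have hmb : |μ s| ≤ C * s ^ n := by
          rw [← hyeq]; exact hb' _ (by positivity) h2
        rw [hgz (by rwa [Real.dist_eq, sub_zero, abs_of_nonneg hs0.le]), abs_mul,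
          abs_of_nonneg (pow_nonneg hs0.le k)] at hmb
        have hkn : s ^ n = s ^ k * s ^ (n - k) := by
          rw [← pow_add]; congr 1; omega
        rw [hkn, ← mul_assoc] at hmb
        have hsk : (0:ℝ) < s ^ k := by positivity
        calc |g s| = s ^ k * |g s| / s ^ k := by field_simp
        _ ≤ C * s ^ k * s ^ (n - k) / s ^ k := by gcongr
        _ = C * s ^ (n - k) := by field_simp
      have h1 : Tendsto (fun s => |g s|) (𝓝[>] (0:ℝ)) (𝓝 |g 0|) :=
        (hg.continuousAt.continuousWithinAt.tendsto).abs
      have h2 : Tendsto (fun s : ℝ => C * s ^ (n - k)) (𝓝[>] (0:ℝ)) (𝓝 0) := by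
        have : Tendsto (fun s : ℝ => C * s ^ (n - k)) (𝓝 (0:ℝ)) (𝓝 (C * 0 ^ (n - k))) := by
          exact (continuous_const.mul (continuous_pow _)).tendsto 0
        rw [zero_pow (by omega), mul_zero] at this
        exact this.mono_left nhdsWithin_le_nhds
      have : |g 0| ≤ 0 := le_of_tendsto_of_tendsto h1 h2 hev
      exact hg0 (abs_eq_zero.mp (le_antisymm this (abs_nonneg _)))
    -- the analytic factor G
    set m := k - n with hm
    set G : ℝ → ℝ := fun s => s ^ m * g s with hG
    have hGa : AnalyticAt ℝ G 0 := ((analyticAt_id).pow m).mul hg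
    obtain ⟨Kg, t, ht, hlip⟩ := (hGa.contDiffAt (n := 1)).exists_lipschitzOnWith
    obtain ⟨ε₃, hε₃, hball⟩ := Metric.mem_nhds_iff.mp ht
    set ε' : ℝ := min (ε₃ / 2) (min ε₂ 1) with hε'
    have hε'pos : 0 < ε' := by positivity
    have hε'1 : ε' ≤ 1 := (min_le_right _ _).trans (min_le_right _ _)
    have hmem : ∀ s : ℝ, 0 ≤ s → s ≤ ε' → s ∈ t := by
      intro s hs hsε
      apply hball
      rw [Metric.mem_ball, Real.dist_eq, sub_zero, abs_of_nonneg hs]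
      exact lt_of_le_of_lt (hsε.trans (min_le_left _ _)) (by linarith)
    set Gb : ℝ := |G 0| + Kg * ε' with hGb
    have hGbound : ∀ s : ℝ, 0 ≤ s → s ≤ ε' → |G s| ≤ Gb := by
      intro s hs hsε
      have := hlip.dist_le_mul s (hmem s hs hsε) 0 (hmem 0 le_rfl hε'pos.le)
      rw [Real.dist_eq, Real.dist_eq, sub_zero] at this
      calc |G s| ≤ |G s - G 0| + |G 0| := by
            simpa using abs_add_le (G s - G 0) (G 0)
      _ ≤ Kg * |s| + |G 0| := by linarith
      _ ≤ Gb := by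
            rw [hGb, abs_of_nonneg hs]
            have hKg0 : (0:ℝ) ≤ (Kg:ℝ) := Kg.2
            nlinarith [mul_le_mul_of_nonneg_left hsε hKg0]
    set δ : ℝ := min δ₁ (ε' ^ n) with hδ
    have hδpos : 0 < δ := by positivity
    -- representation lam y = y * G (y^{1/n}) on [0, δ)
    have hrep : ∀ y : ℝ, 0 ≤ y → y < δ → lam y = y * G (y ^ ((n:ℝ)⁻¹)) := by
      intro y hy hyδ
      set s := y ^ ((n:ℝ)⁻¹) with hs
      have hs0 : 0 ≤ s := Real.rpow_nonneg hy _
      have hsε : s < ε' := by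
        calc s < (ε' ^ n) ^ ((n:ℝ)⁻¹) :=
              Real.rpow_lt_rpow hy (lt_of_lt_of_le hyδ (min_le_right _ _)) (by positivity)
        _ = ε' := Real.pow_rpow_inv_natCast hε'pos.le hn'
      have hsn : s ^ n = y := Real.rpow_inv_natCast_pow hy hn'
      rw [heq' y hy (lt_of_lt_of_le hyδ (min_le_left _ _)),
        hgz (y := s) (by rw [Real.dist_eq, sub_zero, abs_of_nonneg hs0]
                         exact lt_of_lt_of_le hsε ((min_le_right _ _).trans (min_le_left _ _)))]
      have : s ^ k = s ^ n * s ^ m := by rw [← pow_add]; congr 1; omega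
      rw [this, hsn]; ring
    refine ⟨Gb + Kg + 1, by positivity, δ, hδpos, ?_⟩
    have main : ∀ a b : ℝ, 0 ≤ a → a < δ → 0 ≤ b → b < δ → b ≤ a →
        |lam a - lam b| ≤ (Gb + Kg + 1) * |a - b| := by
      intro a b ha haδ hb hbδ hba
      set sa := a ^ ((n:ℝ)⁻¹) with hsa
      set sb := b ^ ((n:ℝ)⁻¹) with hsb
      have hsa0 : 0 ≤ sa := Real.rpow_nonneg ha _
      have hsb0 : 0 ≤ sb := Real.rpow_nonneg hb _
      have hsba : sb ≤ sa := Real.rpow_le_rpow hb hba (by positivity)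
      have hsaε : sa < ε' := by
        calc sa < (ε' ^ n) ^ ((n:ℝ)⁻¹) :=
              Real.rpow_lt_rpow ha (lt_of_lt_of_le haδ (min_le_right _ _)) (by positivity)
        _ = ε' := Real.pow_rpow_inv_natCast hε'pos.le hn'
      have hsan : sa ^ n = a := Real.rpow_inv_natCast_pow ha hn'
      have hsbn : sb ^ n = b := Real.rpow_inv_natCast_pow hb hn'
      have hGsa : |G sa| ≤ Gb := hGbound sa hsa0 hsaε.le
      have hGdiff : |G sa - G sb| ≤ Kg * (sa - sb) := by
        have := hlip.dist_le_mul sa (hmem sa hsa0 hsaε.le) sb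
          (hmem sb hsb0 (hsba.trans hsaε.le))
        rw [Real.dist_eq, Real.dist_eq, abs_of_nonneg (by linarith : (0:ℝ) ≤ sa - sb)] at this
        exact this
      -- key: b * (sa - sb) ≤ a - b
      have hkey : b * (sa - sb) ≤ a - b := by
        have e1 : sb ^ (n-1) * sa ≤ sa ^ (n-1) * sa :=
          mul_le_mul_of_nonneg_right (pow_le_pow_left₀ hsb0 hsba (n-1)) hsa0
        have e2 : sa ^ (n-1) * sa = a := by
          rw [← hsan, ← pow_succ]; congr 1; omega
        have e3 : sb ^ (n-1) * sb = b := by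
          rw [← hsbn, ← pow_succ]; congr 1; omega
        have e4 : sb ^ (n-1) * (sa - sb) ≤ a - b := by
          rw [mul_sub]; linarith
        have e5 : b * (sa - sb) = sb * (sb ^ (n-1) * (sa - sb)) := by
          rw [← e3]; ring
        have e6 : 0 ≤ sb ^ (n-1) * (sa - sb) :=
          mul_nonneg (pow_nonneg hsb0 _) (sub_nonneg.mpr hsba)
        have hsb1 : sb ≤ 1 := le_trans (hsba.trans hsaε.le) hε'1
        calc b * (sa - sb) = sb * (sb ^ (n-1) * (sa - sb)) := e5
        _ ≤ 1 * (a - b) := mul_le_mul hsb1 e4 e6 one_pos.le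
        _ = a - b := one_mul _
      rw [hrep a ha haδ, hrep b hb hbδ, ← hsa, ← hsb]
      have expand : a * G sa - b * G sb = (a - b) * G sa + b * (G sa - G sb) := by ring
      rw [expand]
      have habs : |a - b| = a - b := abs_of_nonneg (by linarith)
      have hKg0 : (0:ℝ) ≤ (Kg : ℝ) := Kg.2
      calc |(a - b) * G sa + b * (G sa - G sb)|
          ≤ |(a - b) * G sa| + |b * (G sa - G sb)| := abs_add_le _ _
      _ = (a - b) * |G sa| + b * |G sa - G sb| := by
            rw [abs_mul (a - b) (G sa), abs_mul b (G sa - G sb), habs, abs_of_nonneg hb]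
      _ ≤ (a - b) * Gb + b * ((Kg : ℝ) * (sa - sb)) := by
            apply add_le_add
            · exact mul_le_mul_of_nonneg_left hGsa (by linarith)
            · exact mul_le_mul_of_nonneg_left hGdiff hb
      _ = (a - b) * Gb + (Kg : ℝ) * (b * (sa - sb)) := by ring
      _ ≤ (a - b) * Gb + (Kg : ℝ) * (a - b) :=
            add_le_add_right (mul_le_mul_of_nonneg_left hkey hKg0) _
      _ ≤ (Gb + (Kg : ℝ) + 1) * |a - b| := by rw [habs]; nlinarith
    intro a b ha haδ hb hbδ
    rcases le_total b a with hba | hab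
    · exact main a b ha haδ hb hbδ hba
    · rw [abs_sub_comm (lam a) (lam b), abs_sub_comm a b]
      exact main b a hb hbδ ha haδ hab

set_option maxHeartbeats 1000000 in
/-- If a bi-Lipschitz germ `σ` sends the demi-branch `γ` into the horn `H_{ξ₀}(γ̃; N)`, then,
for `1 < ξ ≤ ξ₀`, it sends horn neighbourhoods `H_ξ(γ; M)` into horn neighbourhoods
`H_ξ(γ̃; M̃)`, with `M̃ = A·M` for `ξ < ξ₀` and `M̃ = A·M + N` for `ξ = ξ₀`, where `A` does
not depend on `M`. -/
theorem stmt3 (σ : ℝ × ℝ → ℝ × ℝ) (hσ : IsBiLipschitzGerm σ)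
    (lam lam' : ℝ → ℝ) (hγ : AllowableBranch lam) (hγ' : AllowableBranch lam')
    (ξ₀ N : ℝ) (hξ₀ : 1 < ξ₀) (hN : 0 < N)
    (hincl : ∀ᶠ y in 𝓝[>] (0 : ℝ), σ (lam y, y) ∈ Horn ξ₀ lam' N) :
    ∀ ξ : ℝ, 1 < ξ → ξ ≤ ξ₀ →
      ∃ A > (0 : ℝ), ∀ M > (0 : ℝ), ∃ U₀ : Set (ℝ × ℝ), IsOpen U₀ ∧ (0 : ℝ × ℝ) ∈ U₀ ∧
        ∀ p ∈ Horn ξ lam M ∩ U₀,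
          σ p ∈ Horn ξ lam' (if ξ < ξ₀ then A * M else A * M + N) := by
  intro ξ hξ1 hξξ₀
  obtain ⟨hσ0, U, V, τ, K, hU, hV, hU0, hV0, hmUV, hmVU, hτσ, hστ, hLσ, hLτ⟩ := hσ
  obtain ⟨L', hL'pos, δ', hδ'pos, hL'⟩ := branch_lip hγ'
  obtain ⟨-, -, -, -, -, -, C, hC, hCb⟩ := hγ
  obtain ⟨-, -, -, -, -, -, C', hC', hC'b⟩ := hγ'
  obtain ⟨δC, hδC, hCb'⟩ := ev_ge hCb
  obtain ⟨δC', hδC', hC'b'⟩ := ev_ge hC'b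
  obtain ⟨δi, hδi, hincl'⟩ := ev_gt hincl
  obtain ⟨rU, hrU, hballU⟩ := Metric.mem_nhds_iff.mp (hU.mem_nhds hU0)
  set K₁ : ℝ := (K : ℝ) + 1 with hK₁def
  have hK₁ : 0 < K₁ := by positivity
  have lipσ : ∀ a ∈ U, ∀ b ∈ U, dist (σ a) (σ b) ≤ K₁ * dist a b := by
    intro a ha b hb
    calc dist (σ a) (σ b) ≤ K * dist a b := hLσ.dist_le_mul a ha b hb
    _ ≤ K₁ * dist a b := by
        apply mul_le_mul_of_nonneg_right _ dist_nonneg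
        rw [hK₁def]; linarith
  have lipτ : ∀ a ∈ V, ∀ b ∈ V, dist (τ a) (τ b) ≤ K₁ * dist a b := by
    intro a ha b hb
    calc dist (τ a) (τ b) ≤ K * dist a b := hLτ.dist_le_mul a ha b hb
    _ ≤ K₁ * dist a b := by
        apply mul_le_mul_of_nonneg_right _ dist_nonneg
        rw [hK₁def]; linarith
  set B : ℝ := K₁ * max 1 (C' + N) with hBdef
  have hB : 0 < B := by
    rw [hBdef]; exact mul_pos hK₁ (lt_of_lt_of_le one_pos (le_max_left _ _))
  have h2B : (0:ℝ) < 2 * B := by linarith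
  set E : ℝ := K₁ * (C + 1) * (2 * B) with hEdef
  have hE : 0 < E := by rw [hEdef]; positivity
  set nξ : ℕ := ⌈ξ₀⌉₊ with hnξdef
  have hWpos : (0:ℝ) < (2*B) ^ ξ := Real.rpow_pos_of_pos h2B ξ
  have hEξ₀pos : (0:ℝ) < E ^ ξ₀ := Real.rpow_pos_of_pos hE ξ₀
  have h3pos : (0:ℝ) < 3 ^ nξ := by positivity
  set A : ℝ := K₁ * (1 + L') * (2*B) ^ ξ + N * 3 ^ nξ * K₁ * (2*B) ^ ξ + 1 with hAdef
  have hA : 0 < A := by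
    rw [hAdef]
    have h1 : 0 < K₁ * (1 + L') * (2*B) ^ ξ :=
      mul_pos (mul_pos hK₁ (by linarith)) hWpos
    have h2 : 0 < N * 3 ^ nξ * K₁ * (2*B) ^ ξ :=
      mul_pos (mul_pos (mul_pos hN h3pos) hK₁) hWpos
    linarith
  refine ⟨A, hA, ?_⟩
  intro M hM
  have evlin : ∀ c : ℝ, 0 < c → ∀ᶠ r in 𝓝[>] (0:ℝ), r < c := by
    intro c hc
    exact (tendsto_id.eventually_lt_const hc).filter_mono nhdsWithin_le_nhds
  have evpow : ∀ t c : ℝ, 0 < t → 0 < c → ∀ᶠ r in 𝓝[>] (0:ℝ), r ^ t < c := by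
    intro t c ht hc
    have hcont : ContinuousAt (fun r : ℝ => r ^ t) 0 :=
      Real.continuousAt_rpow_const 0 t (Or.inr ht.le)
    have h0 : (0:ℝ) ^ t = 0 := Real.zero_rpow ht.ne'
    have htend : Tendsto (fun r : ℝ => r ^ t) (𝓝 0) (𝓝 0) := by
      have := hcont.tendsto; rwa [h0] at this
    exact (htend.eventually_lt_const hc).filter_mono nhdsWithin_le_nhds
  have hK₁ξ1pos : (0:ℝ) < K₁ ^ (ξ - 1) := Real.rpow_pos_of_pos hK₁ _
  have hK₁ξ₀ξpos : (0:ℝ) < K₁ ^ (ξ₀ - ξ) := Real.rpow_pos_of_pos hK₁ _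
  have e10ev : ∀ᶠ r in 𝓝[>] (0:ℝ),
      ξ < ξ₀ → r ^ (ξ₀ - ξ) < M / (N * E ^ ξ₀ * K₁ ^ (ξ₀ - ξ)) := by
    by_cases hlt : ξ < ξ₀
    · exact (evpow _ _ (by linarith) (by
        apply div_pos hM
        exact mul_pos (mul_pos hN hEξ₀pos) hK₁ξ₀ξpos)).mono (fun r h _ => h)
    · exact Eventually.of_forall (fun r h => absurd h hlt)
  have hall := (((((((((((evlin 1 one_pos).and (evlin rU hrU)).and
      (evlin (rU / (C+1)) (by positivity))).and (evlin δi hδi)).and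
      (evlin δC hδC)).and (evlin (δC' / (K₁ * (C+1))) (by positivity))).and
      (evlin (δ' / (K₁ * (C+1) + K₁ * M)) (by positivity))).and
      (evlin (1 / (K₁ * (C+1))) (by positivity))).and
      (evpow (ξ-1) (1 / (2*B*K₁*M)) (by linarith) (by positivity))).and
      ((e10ev.and (evpow (ξ-1) (1 / (K₁*M*(2*B)^ξ*K₁^(ξ-1)))
        (by linarith) (by positivity))).and
      (evlin (1 / K₁) (by positivity)))).and eventually_mem_nhdsWithin).exists
  obtain ⟨r, ⟨⟨⟨⟨⟨⟨⟨⟨⟨e1, e2⟩, e3⟩, e4⟩, e5⟩, e6⟩, e7⟩, e8⟩, e9⟩,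
    ⟨⟨e10, e11⟩, e12⟩⟩, hr0⟩ := hall
  rw [Set.mem_Ioi] at hr0
  refine ⟨Metric.ball 0 r, Metric.isOpen_ball, Metric.mem_ball_self hr0, ?_⟩
  rintro p ⟨⟨hy, hxl⟩, hpball⟩
  have dfst : ∀ P Q : ℝ × ℝ, |P.1 - Q.1| ≤ dist P Q := by
    intro P Q; rw [Prod.dist_eq, ← Real.dist_eq]; exact le_max_left _ _
  have dsnd : ∀ P Q : ℝ × ℝ, |P.2 - Q.2| ≤ dist P Q := by
    intro P Q; rw [Prod.dist_eq, ← Real.dist_eq]; exact le_max_right _ _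
  have hpr : dist p 0 < r := Metric.mem_ball.mp hpball
  have hyr : p.2 < r := by
    have h1 := dsnd p 0
    simp only [Prod.snd_zero, sub_zero] at h1
    have h2 : p.2 ≤ |p.2| := le_abs_self _
    linarith only [h1, h2, hpr]
  have hy1 : p.2 < 1 := hyr.trans e1
  set q : ℝ × ℝ := (lam p.2, p.2) with hqdef
  have hlamy : |lam p.2| ≤ C * p.2 := hCb' p.2 hy.le (hyr.trans e5)
  have hqd : dist q 0 ≤ (C + 1) * p.2 := by
    rw [Prod.dist_eq]
    apply max_le
    · simp only [hqdef, Prod.fst_zero, Real.dist_eq, sub_zero]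
      linarith only [hlamy, hy]
    · simp only [hqdef, Prod.snd_zero, Real.dist_eq, sub_zero, abs_of_nonneg hy.le]
      linarith only [mul_nonneg hC.le hy.le]
  have hC1r : r * (C + 1) < rU := (lt_div_iff₀ (by positivity)).mp e3
  have hqU : q ∈ U := by
    apply hballU
    rw [Metric.mem_ball]
    calc dist q 0 ≤ (C + 1) * p.2 := hqd
    _ < (C + 1) * r := mul_lt_mul_of_pos_left hyr (by linarith)
    _ ≤ rU := by linarith only [hC1r]
  have hpU : p ∈ U := hballU (by rw [Metric.mem_ball]; exact hpr.trans e2)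
  have hσqH : σ q ∈ Horn ξ₀ lam' N := hincl' p.2 hy (hyr.trans e4)
  obtain ⟨hv, huv⟩ := hσqH
  set v : ℝ := (σ q).2 with hvdef
  set u : ℝ := (σ q).1 with hudef
  have hσq0 : dist (σ q) 0 ≤ K₁ * ((C + 1) * p.2) := by
    have h1 := lipσ q hqU 0 hU0
    rw [hσ0] at h1
    calc dist (σ q) 0 ≤ K₁ * dist q 0 := h1
    _ ≤ K₁ * ((C + 1) * p.2) := mul_le_mul_of_nonneg_left hqd hK₁.le
  have hvley : v ≤ K₁ * ((C + 1) * p.2) := by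
    have h1 := dsnd (σ q) 0
    simp only [Prod.snd_zero, sub_zero] at h1
    have h2 : v ≤ |v| := le_abs_self _
    linarith only [h1, h2, hσq0]
  have hK₁C1 : (0:ℝ) ≤ K₁ * (C + 1) := mul_nonneg hK₁.le (by linarith)
  have hPy : K₁ * (C + 1) * p.2 ≤ K₁ * (C + 1) * r :=
    mul_le_mul_of_nonneg_left hyr.le hK₁C1
  have he8 : r * (K₁ * (C + 1)) < 1 := (lt_div_iff₀ (by positivity)).mp e8
  have hv1 : v ≤ 1 := by linarith only [hvley, hPy, he8]
  have he6 : r * (K₁ * (C + 1)) < δC' := (lt_div_iff₀ (by positivity)).mp e6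
  have hlam'v : |lam' v| ≤ C' * v :=
    hC'b' v hv.le (by linarith only [hvley, hPy, he6])
  have hvξ₀ : v ^ ξ₀ ≤ v := by
    calc v ^ ξ₀ ≤ v ^ (1:ℝ) := Real.rpow_le_rpow_of_exponent_ge hv hv1 hξ₀.le
    _ = v := Real.rpow_one v
  have hσqd : dist (σ q) 0 ≤ max 1 (C' + N) * v := by
    rw [Prod.dist_eq]
    apply max_le
    · simp only [Prod.fst_zero, Real.dist_eq, sub_zero]
      have habs : |u| ≤ |u - lam' v| + |lam' v| := by
        have := abs_add_le (u - lam' v) (lam' v); simpa using this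
      have hNv : N * v ^ ξ₀ ≤ N * v := mul_le_mul_of_nonneg_left hvξ₀ hN.le
      calc |(σ q).1| = |u| := by rw [hudef]
      _ ≤ (C' + N) * v := by linarith only [habs, huv, hlam'v, hNv]
      _ ≤ max 1 (C' + N) * v := mul_le_mul_of_nonneg_right (le_max_right _ _) hv.le
    · simp only [Prod.snd_zero, Real.dist_eq, sub_zero]
      rw [← hvdef, abs_of_nonneg hv.le]
      have := mul_le_mul_of_nonneg_right (le_max_left (1:ℝ) (C' + N)) hv.le
      linarith only [this]
  have hτ0 : τ 0 = 0 := by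
    have := hτσ 0 hU0; rwa [hσ0] at this
  have hqd2 : dist q 0 ≤ K₁ * (max 1 (C' + N) * v) := by
    have h1 : dist q 0 = dist (τ (σ q)) (τ 0) := by rw [hτσ q hqU, hτ0]
    rw [h1]
    calc dist (τ (σ q)) (τ 0) ≤ K₁ * dist (σ q) 0 := lipτ (σ q) (hmUV hqU) 0 hV0
    _ ≤ K₁ * (max 1 (C' + N) * v) := mul_le_mul_of_nonneg_left hσqd hK₁.le
  have hyBv : p.2 ≤ B * v := by
    have h1 := dsnd q 0
    simp only [hqdef, Prod.snd_zero, sub_zero, abs_of_nonneg hy.le] at h1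
    rw [hBdef]
    calc p.2 ≤ dist q 0 := by rw [hqdef]; exact h1
    _ ≤ K₁ * (max 1 (C' + N) * v) := hqd2
    _ = K₁ * max 1 (C' + N) * v := by ring
  set t : ℝ := K₁ * (M * p.2 ^ ξ) with htdef
  have hyξpos : (0:ℝ) < p.2 ^ ξ := Real.rpow_pos_of_pos hy ξ
  have ht0 : 0 ≤ t := by
    rw [htdef]; exact mul_nonneg hK₁.le (mul_nonneg hM.le hyξpos.le)
  have hdσ : dist (σ p) (σ q) ≤ t := by
    have h1 := lipσ p hpU q hqU
    have h2 : dist p q = |p.1 - lam p.2| := by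
      rw [Prod.dist_eq, hqdef]
      simp only [Real.dist_eq, dist_self]
      exact max_eq_left (abs_nonneg _)
    calc dist (σ p) (σ q) ≤ K₁ * dist p q := h1
    _ ≤ t := by rw [h2, htdef]; exact mul_le_mul_of_nonneg_left hxl hK₁.le
  have hsplit : p.2 ^ ξ = p.2 ^ (ξ - 1) * p.2 := by
    rw [← Real.rpow_add_one hy.ne' (ξ - 1)]
    congr 1; ring
  have hmono : p.2 ^ (ξ - 1) ≤ r ^ (ξ - 1) :=
    Real.rpow_le_rpow hy.le hyr.le (by linarith)
  have he9 : r ^ (ξ-1) * (2*B*K₁*M) < 1 := (lt_div_iff₀ (by positivity)).mp e9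
  have hty : 2 * B * t ≤ p.2 := by
    have ha : 2*B*K₁*M * (p.2 ^ (ξ-1)) ≤ 2*B*K₁*M * (r ^ (ξ-1)) :=
      mul_le_mul_of_nonneg_left hmono (by positivity)
    have hkey := mul_le_mul_of_nonneg_right
      (ha.trans (by linarith only [he9] : 2*B*K₁*M * (r ^ (ξ-1)) ≤ 1)) hy.le
    calc 2 * B * t = (2*B*K₁*M * (p.2 ^ (ξ-1))) * p.2 := by rw [htdef, hsplit]; ring
    _ ≤ 1 * p.2 := hkey
    _ = p.2 := one_mul _
  set v' : ℝ := (σ p).2 with hv'def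
  have hdv : |v' - v| ≤ t := by
    have := dsnd (σ p) (σ q); rw [← hv'def, ← hvdef] at this
    linarith only [this, hdσ]
  have hdu : |(σ p).1 - u| ≤ t := by
    have := dfst (σ p) (σ q); rw [← hudef] at this
    linarith only [this, hdσ]
  have h2tv : 2 * t ≤ v := by
    have h := hty.trans hyBv
    exact (mul_le_mul_iff_right₀ hB).mp (by linarith only [h])
  have hdvle := abs_le.mp hdv
  have hv'pos : 0 < v' := by linarith only [hdvle.1, h2tv, hv]
  have hyv' : p.2 ≤ 2 * B * v' := by
    have hQ : (2*B) * (v - t) ≤ (2*B) * v' :=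
      mul_le_mul_of_nonneg_left (by linarith only [hdvle.1]) h2B.le
    linarith only [hQ, hty, hyBv]
  have hv'Kr : v' ≤ K₁ * r := by
    have h1 := dsnd (σ p) 0
    simp only [Prod.snd_zero, sub_zero] at h1
    rw [← hv'def] at h1
    have h2 : dist (σ p) 0 ≤ K₁ * dist p 0 := by
      have h3 := lipσ p hpU 0 hU0; rwa [hσ0] at h3
    have h4 : v' ≤ |v'| := le_abs_self _
    have h5 : K₁ * dist p 0 ≤ K₁ * r := mul_le_mul_of_nonneg_left hpr.le hK₁.le
    linarith only [h1, h2, h4, h5]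
  have he12 : r * K₁ < 1 := (lt_div_iff₀ hK₁).mp e12
  have hv'1 : v' ≤ 1 := by linarith only [hv'Kr, he12]
  have hyξy : p.2 ^ ξ ≤ p.2 := by
    calc p.2 ^ ξ ≤ p.2 ^ (1:ℝ) :=
          Real.rpow_le_rpow_of_exponent_ge hy hy1.le hξ1.le
    _ = p.2 := Real.rpow_one _
  have htlin : t ≤ K₁ * M * p.2 := by
    rw [htdef]
    calc K₁ * (M * p.2 ^ ξ) ≤ K₁ * (M * p.2) :=
          mul_le_mul_of_nonneg_left (mul_le_mul_of_nonneg_left hyξy hM.le) hK₁.le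
    _ = K₁ * M * p.2 := by ring
  have he7 : r * (K₁ * (C+1) + K₁ * M) < δ' := (lt_div_iff₀ (by positivity)).mp e7
  have hK₁Mr : K₁ * M * p.2 ≤ K₁ * M * r :=
    mul_le_mul_of_nonneg_left hyr.le (mul_nonneg hK₁.le hM.le)
  have hK₁Mr0 : 0 ≤ K₁ * M * r := mul_nonneg (mul_nonneg hK₁.le hM.le) hr0.le
  have hvδ' : v < δ' := by linarith only [hvley, hPy, he7, hK₁Mr0]
  have hv'δ' : v' < δ' := by
    linarith only [hdvle.2, htlin, hvley, hPy, hK₁Mr, he7]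
  have hlip' : |lam' v - lam' v'| ≤ L' * |v - v'| :=
    hL' v v' hv.le hvδ' hv'pos.le hv'δ'
  have hvv'abs : |v - v'| ≤ t := by rw [abs_sub_comm]; exact hdv
  have base : |(σ p).1 - lam' v'| ≤ (1 + L') * t + N * v ^ ξ₀ := by
    have tri1 := abs_sub_le ((σ p).1) u (lam' v')
    have tri2 := abs_sub_le u (lam' v) (lam' v')
    have hl2 : |lam' v - lam' v'| ≤ L' * t :=
      hlip'.trans (mul_le_mul_of_nonneg_left hvv'abs hL'pos.le)
    linarith only [tri1, tri2, hl2, hdu, huv]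
  have hv'ξpos : (0:ℝ) < v' ^ ξ := Real.rpow_pos_of_pos hv'pos ξ
  have hyξv' : p.2 ^ ξ ≤ (2*B) ^ ξ * v' ^ ξ := by
    calc p.2 ^ ξ ≤ (2 * B * v') ^ ξ :=
          Real.rpow_le_rpow hy.le hyv' (by linarith)
    _ = (2*B) ^ ξ * v' ^ ξ := Real.mul_rpow h2B.le hv'pos.le
  have ht_v' : t ≤ K₁ * M * ((2*B) ^ ξ * v' ^ ξ) := by
    rw [htdef]
    calc K₁ * (M * p.2 ^ ξ) ≤ K₁ * (M * ((2*B) ^ ξ * v' ^ ξ)) := by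
          apply mul_le_mul_of_nonneg_left _ hK₁.le
          exact mul_le_mul_of_nonneg_left hyξv' hM.le
    _ = K₁ * M * ((2*B) ^ ξ * v' ^ ξ) := by ring
  have hbig : (1 + L') * t ≤ (1 + L') * (K₁ * M * ((2*B) ^ ξ * v' ^ ξ)) :=
    mul_le_mul_of_nonneg_left ht_v' (by linarith)
  by_cases hlt : ξ < ξ₀
  · simp only [Horn, Set.mem_setOf_eq, if_pos hlt]
    refine ⟨hv'pos, ?_⟩
    have hvE : v ≤ E * v' := by
      rw [hEdef]
      have h1 : K₁ * ((C+1) * p.2) ≤ K₁ * ((C+1) * (2 * B * v')) := by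
        apply mul_le_mul_of_nonneg_left _ hK₁.le
        exact mul_le_mul_of_nonneg_left hyv' (by linarith)
      calc v ≤ K₁ * ((C+1) * p.2) := hvley
      _ ≤ K₁ * ((C+1) * (2 * B * v')) := h1
      _ = K₁ * (C + 1) * (2 * B) * v' := by ring
    have s1 : v ^ ξ₀ ≤ E ^ ξ₀ * v' ^ ξ₀ := by
      calc v ^ ξ₀ ≤ (E * v') ^ ξ₀ := Real.rpow_le_rpow hv.le hvE (by linarith)
      _ = E ^ ξ₀ * v' ^ ξ₀ := Real.mul_rpow hE.le hv'pos.le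
    have s2 : v' ^ ξ₀ = v' ^ (ξ₀ - ξ) * v' ^ ξ := by
      rw [← Real.rpow_add hv'pos]; congr 1; ring
    have s3 : v' ^ (ξ₀ - ξ) ≤ K₁ ^ (ξ₀ - ξ) * r ^ (ξ₀ - ξ) := by
      calc v' ^ (ξ₀ - ξ) ≤ (K₁ * r) ^ (ξ₀ - ξ) :=
            Real.rpow_le_rpow hv'pos.le hv'Kr (by linarith)
      _ = K₁ ^ (ξ₀ - ξ) * r ^ (ξ₀ - ξ) := Real.mul_rpow hK₁.le hr0.le
    have s4 : N * E ^ ξ₀ * (K₁ ^ (ξ₀ - ξ) * r ^ (ξ₀ - ξ)) ≤ M := by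
      have h5 := (lt_div_iff₀ (by positivity)).mp (e10 hlt)
      linarith only [h5]
    have hNv : N * v ^ ξ₀ ≤ M * v' ^ ξ := by
      calc N * v ^ ξ₀ ≤ N * (E ^ ξ₀ * v' ^ ξ₀) := mul_le_mul_of_nonneg_left s1 hN.le
      _ = (N * E ^ ξ₀ * (v' ^ (ξ₀ - ξ))) * v' ^ ξ := by rw [s2]; ring
      _ ≤ (N * E ^ ξ₀ * (K₁ ^ (ξ₀ - ξ) * r ^ (ξ₀ - ξ))) * v' ^ ξ := by
            apply mul_le_mul_of_nonneg_right _ hv'ξpos.le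
            exact mul_le_mul_of_nonneg_left s3 (by positivity)
      _ ≤ M * v' ^ ξ := mul_le_mul_of_nonneg_right s4 hv'ξpos.le
    have hAge : (1 + L') * K₁ * (2*B) ^ ξ + 1 ≤ A := by
      rw [hAdef]
      have h2 : 0 ≤ N * 3 ^ nξ * K₁ * (2*B) ^ ξ :=
        le_of_lt (mul_pos (mul_pos (mul_pos hN h3pos) hK₁) hWpos)
      linarith only [h2]
    have hslack : ((1 + L') * K₁ * (2*B) ^ ξ + 1) * (M * v' ^ ξ) ≤ A * (M * v' ^ ξ) :=
      mul_le_mul_of_nonneg_right hAge (mul_nonneg hM.le hv'ξpos.le)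
    have hfin : |(σ p).1 - lam' v'| ≤ A * (M * v' ^ ξ) := by
      linarith only [base, hbig, hNv, hslack]
    calc |(σ p).1 - lam' ((σ p).2)| = |(σ p).1 - lam' v'| := by rw [hv'def]
    _ ≤ A * (M * v' ^ ξ) := hfin
    _ = A * M * (σ p).2 ^ ξ := by rw [hv'def]; ring
  · have hξeq : ξ = ξ₀ := le_antisymm hξξ₀ (not_lt.mp hlt)
    subst hξeq
    simp only [Horn, Set.mem_setOf_eq, if_neg hlt]
    refine ⟨hv'pos, ?_⟩
    set d : ℝ := K₁ * M * ((2*B) ^ ξ * v' ^ (ξ - 1)) with hddef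
    have hv'ξ1pos : (0:ℝ) < v' ^ (ξ - 1) := Real.rpow_pos_of_pos hv'pos _
    have hd0 : 0 ≤ d := by
      rw [hddef]
      exact mul_nonneg (mul_nonneg hK₁.le hM.le) (mul_nonneg hWpos.le hv'ξ1pos.le)
    have hv'ξ1r : v' ^ (ξ - 1) ≤ K₁ ^ (ξ - 1) * r ^ (ξ - 1) := by
      calc v' ^ (ξ - 1) ≤ (K₁ * r) ^ (ξ - 1) :=
            Real.rpow_le_rpow hv'pos.le hv'Kr (by linarith)
      _ = K₁ ^ (ξ - 1) * r ^ (ξ - 1) := Real.mul_rpow hK₁.le hr0.le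
    have he11 : r ^ (ξ-1) * (K₁*M*(2*B)^ξ*K₁^(ξ-1)) < 1 :=
      (lt_div_iff₀ (by positivity)).mp e11
    have hd1 : d ≤ 1 := by
      rw [hddef]
      have h1 : K₁ * M * ((2*B) ^ ξ * (v' ^ (ξ - 1)))
          ≤ K₁ * M * ((2*B) ^ ξ * (K₁ ^ (ξ - 1) * r ^ (ξ - 1))) := by
        apply mul_le_mul_of_nonneg_left _ (mul_nonneg hK₁.le hM.le)
        exact mul_le_mul_of_nonneg_left hv'ξ1r hWpos.le
      linarith only [h1, he11]
    have hv'split : v' ^ ξ = v' ^ (ξ - 1) * v' := by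
      rw [← Real.rpow_add_one hv'pos.ne' (ξ - 1)]
      congr 1; ring
    have htd : t ≤ d * v' := by
      calc t ≤ K₁ * M * ((2*B) ^ ξ * v' ^ ξ) := ht_v'
      _ = d * v' := by rw [hddef, hv'split]; ring
    have hvd : v ≤ v' * (1 + d) := by linarith only [hdvle.1, htd]
    have hvξ : v ^ ξ ≤ v' ^ ξ * (1 + d) ^ ξ := by
      calc v ^ ξ ≤ (v' * (1 + d)) ^ ξ := Real.rpow_le_rpow hv.le hvd (by linarith)
      _ = v' ^ ξ * (1 + d) ^ ξ := Real.mul_rpow hv'pos.le (by linarith)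
    have hpow1 : (1 + d) ^ ξ ≤ (1 + d) ^ (nξ : ℝ) :=
      Real.rpow_le_rpow_of_exponent_le (by linarith) (Nat.le_ceil ξ)
    have hpow2 : (1 + d) ^ (nξ : ℝ) = (1 + d) ^ nξ := Real.rpow_natCast _ _
    have hpow3 : (1 + d) ^ nξ ≤ 1 + 3 ^ nξ * d := one_add_pow_le nξ hd0 hd1
    have hvξ2 : v ^ ξ ≤ v' ^ ξ * (1 + 3 ^ nξ * d) := by
      have h1 : (1 + d) ^ ξ ≤ 1 + 3 ^ nξ * d := by
        rw [hpow2] at hpow1; exact hpow1.trans hpow3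
      calc v ^ ξ ≤ v' ^ ξ * (1 + d) ^ ξ := hvξ
      _ ≤ v' ^ ξ * (1 + 3 ^ nξ * d) := mul_le_mul_of_nonneg_left h1 hv'ξpos.le
    have hv'ξ11 : v' ^ (ξ - 1) ≤ 1 :=
      Real.rpow_le_one hv'pos.le hv'1 (by linarith)
    have hdv'ξ : d * v' ^ ξ ≤ K₁ * M * (2*B) ^ ξ * v' ^ ξ := by
      have h1 : K₁ * M * ((2*B) ^ ξ * v' ^ (ξ - 1)) ≤ K₁ * M * ((2*B) ^ ξ * 1) := by
        apply mul_le_mul_of_nonneg_left _ (mul_nonneg hK₁.le hM.le)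
        exact mul_le_mul_of_nonneg_left hv'ξ11 hWpos.le
      have h2 := mul_le_mul_of_nonneg_right
        (hddef ▸ h1 : d ≤ K₁ * M * ((2*B) ^ ξ * 1)) hv'ξpos.le
      linarith only [h2]
    have hNv : N * v ^ ξ ≤ N * v' ^ ξ + N * 3 ^ nξ * K₁ * M * (2*B) ^ ξ * v' ^ ξ := by
      have h1 : N * v ^ ξ ≤ N * (v' ^ ξ * (1 + 3 ^ nξ * d)) :=
        mul_le_mul_of_nonneg_left hvξ2 hN.le
      have h2 : N * 3 ^ nξ * (d * v' ^ ξ) ≤ N * 3 ^ nξ * (K₁ * M * (2*B) ^ ξ * v' ^ ξ) :=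
        mul_le_mul_of_nonneg_left hdv'ξ (le_of_lt (mul_pos hN h3pos))
      linarith only [h1, h2]
    rw [hAdef]
    have hMv' : 0 ≤ M * v' ^ ξ := mul_nonneg hM.le hv'ξpos.le
    calc |(σ p).1 - lam' ((σ p).2)| = |(σ p).1 - lam' v'| := by rw [hv'def]
    _ ≤ (1 + L') * t + N * v ^ ξ := base
    _ ≤ ((K₁ * (1 + L') * (2*B) ^ ξ + N * 3 ^ nξ * K₁ * (2*B) ^ ξ + 1) * M + N) * v' ^ ξ := by
          linarith only [hbig, hNv, hMv']
    _ = ((K₁ * (1 + L') * (2*B) ^ ξ + N * 3 ^ nξ * K₁ * (2*B) ^ ξ + 1) * M + N) * (σ p).2 ^ ξ := by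
          rw [hv'def]
end
end

section
/- Let ξ ≥ 1, e ∈ ℝ, let P ∈ ℝ[z] be a polynomial, and let g be a real-valued function defined on {(x, y) : |x| < δ, 0 < y < δ} for some δ > 0 such that for every R > 0, sup_{|z| ≤ R} |g(z·y^ξ, y) − P(z)·y^e| = o(y^e) as y → 0⁺. Let α, β : (0, δ) → ℝ satisfy α(y) = o(y) and β(y) = o(y) as y → 0⁺. Then for every R > 0, sup_{|z| ≤ R} |g((z + α(y))·y^ξ, y + β(y)) − P(z)·y^e| = o(y^e) as y → 0⁺. -/
set_option maxHeartbeats 1000000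


open Filter Topology Asymptotics Polynomial

noncomputable section

/-- Substitution lemma: the expansion `g(z·y^ξ, y) = P(z)·y^e + o(y^e)` (uniformly on compact
sets of `z`) is stable under perturbations `z ↦ z + α(y)`, `y ↦ y + β(y)` with
`α(y) = o(y)`, `β(y) = o(y)`. -/
theorem stmt6 (ξ e : ℝ) (hξ : 1 ≤ ξ) (P : Polynomial ℝ) (g : ℝ × ℝ → ℝ)
    (hg : ∀ R > (0 : ℝ), ∀ ε > (0 : ℝ), ∀ᶠ y in 𝓝[>] (0 : ℝ), ∀ z : ℝ, |z| ≤ R →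
      |g (z * y ^ ξ, y) - P.eval z * y ^ e| ≤ ε * y ^ e)
    (α β : ℝ → ℝ)
    (hα : (fun y => α y) =o[𝓝[>] (0 : ℝ)] fun y => y)
    (hβ : (fun y => β y) =o[𝓝[>] (0 : ℝ)] fun y => y) :
    ∀ R > (0 : ℝ), ∀ ε > (0 : ℝ), ∀ᶠ y in 𝓝[>] (0 : ℝ), ∀ z : ℝ, |z| ≤ R →
      |g ((z + α y) * y ^ ξ, y + β y) - P.eval z * y ^ e| ≤ ε * y ^ e := by
  intro R hR ε hε
  have hl : ∀ᶠ y in 𝓝[>] (0:ℝ), 0 < y := eventually_mem_nhdsWithin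
  have tendsto_y0 : Tendsto (fun y : ℝ => y) (𝓝[>] (0:ℝ)) (𝓝 0) :=
    tendsto_id.mono_left nhdsWithin_le_nhds
  -- bound on P on the compact interval
  obtain ⟨M, hM⟩ : ∃ M, ∀ z ∈ Set.Icc (-(R+1)) (R+1), |P.eval z| ≤ M := by
    obtain ⟨C, hC⟩ := (isCompact_Icc (a := -(R+1)) (b := R+1)).exists_bound_of_continuousOn
      P.continuous.continuousOn
    exact ⟨C, fun z hz => hC z hz⟩
  have hM0 : 0 ≤ M := le_trans (abs_nonneg _) (hM 0 ⟨by linarith, by linarith⟩)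
  -- uniform continuity of eval P on the interval
  have hUC := (isCompact_Icc (a := -(R+1)) (b := R+1)).uniformContinuousOn_of_continuous
    (f := fun z => P.eval z) P.continuous.continuousOn
  rw [Metric.uniformContinuousOn_iff] at hUC
  obtain ⟨δ₀, hδ₀pos, hδ₀⟩ := hUC (ε/8) (by positivity)
  -- eventually β is small
  have hβ2 : ∀ᶠ y in 𝓝[>] (0:ℝ), |β y| ≤ y / 2 := by
    filter_upwards [hβ.bound (by norm_num : (0:ℝ) < 1/2), hl] with y h1 h2
    rw [Real.norm_eq_abs, Real.norm_eq_abs, abs_of_pos h2] at h1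
    linarith
  -- y + β y tends to 0 within (0, ∞)
  have hβ0 : Tendsto β (𝓝[>] (0:ℝ)) (𝓝 0) := hβ.isBigO.trans_tendsto tendsto_y0
  have hy'T : Tendsto (fun y => y + β y) (𝓝[>] (0:ℝ)) (𝓝[>] (0:ℝ)) := by
    apply tendsto_nhdsWithin_of_tendsto_nhds_of_eventually_within
    · simpa using tendsto_y0.add hβ0
    · filter_upwards [hβ2, hl] with y h1 h2
      have : |β y| ≤ y/2 := h1
      have := abs_le.mp this
      exact Set.mem_Ioi.mpr (by linarith [this.1])
  -- ratio tendsto facts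
  have h1 : Tendsto (fun y => 1 + β y / y) (𝓝[>] (0:ℝ)) (𝓝 1) := by
    simpa using tendsto_const_nhds.add hβ.tendsto_div_nhds_zero
  have hrT : Tendsto (fun y => (y + β y) / y) (𝓝[>] (0:ℝ)) (𝓝 1) := by
    apply h1.congr'
    filter_upwards [hl] with y hy
    rw [add_div, div_self (ne_of_gt hy)]
  have hrT' : Tendsto (fun y => y / (y + β y)) (𝓝[>] (0:ℝ)) (𝓝 1) := by
    have h2 := (h1.inv₀ one_ne_zero)
    rw [inv_one] at h2
    apply h2.congr'
    filter_upwards [hl] with y hy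
    rw [show 1 + β y / y = (y + β y) / y by rw [add_div, div_self (ne_of_gt hy)], inv_div]
  have hsT : Tendsto (fun y => (y / (y + β y)) ^ ξ) (𝓝[>] (0:ℝ)) (𝓝 1) := by
    simpa using hrT'.rpow_const (Or.inl one_ne_zero)
  have htT : Tendsto (fun y => ((y + β y) / y) ^ e) (𝓝[>] (0:ℝ)) (𝓝 1) := by
    simpa using hrT.rpow_const (Or.inl one_ne_zero)
  -- expansion at the perturbed point
  have hg' : ∀ᶠ y in 𝓝[>] (0:ℝ), ∀ z : ℝ, |z| ≤ R + 1 →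
      |g (z * (y + β y) ^ ξ, y + β y) - P.eval z * (y + β y) ^ e| ≤ ε/8 * (y + β y) ^ e :=
    hy'T.eventually (hg (R+1) (by linarith) (ε/8) (by positivity))
  -- α tends to 0
  have hα0 : Tendsto α (𝓝[>] (0:ℝ)) (𝓝 0) := hα.isBigO.trans_tendsto tendsto_y0
  have hαsmall : ∀ᶠ y in 𝓝[>] (0:ℝ), |α y| ≤ min (δ₀/4) (1/2) := by
    have := Metric.tendsto_nhds.mp hα0 (min (δ₀/4) (1/2)) (by positivity)
    filter_upwards [this] with y hy
    rw [Real.dist_eq, sub_zero] at hy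
    exact hy.le
  have hssmall : ∀ᶠ y in 𝓝[>] (0:ℝ),
      |(y / (y + β y)) ^ ξ - 1| ≤ min (δ₀/(4*(R+1))) (1/(2*(R+1))) := by
    have := Metric.tendsto_nhds.mp hsT (min (δ₀/(4*(R+1))) (1/(2*(R+1))))
      (lt_min (div_pos hδ₀pos (by linarith)) (div_pos one_pos (by linarith)))
    filter_upwards [this] with y hy
    rw [Real.dist_eq] at hy
    exact hy.le
  have htsmall : ∀ᶠ y in 𝓝[>] (0:ℝ),
      |((y + β y) / y) ^ e - 1| ≤ min (ε/(8*(M+1))) 1 := by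
    have := Metric.tendsto_nhds.mp htT (min (ε/(8*(M+1))) 1) (by positivity)
    filter_upwards [this] with y hy
    rw [Real.dist_eq] at hy
    exact hy.le
  -- main computation
  filter_upwards [hl, hβ2, hg', hαsmall, hssmall, htsmall] with y hy hb hgy ha hs ht z hz
  set y' := y + β y with hy'def
  have hby := abs_le.mp hb
  have hy'pos : 0 < y' := by simp only [hy'def]; linarith [hby.1]
  have hype : 0 < y ^ e := Real.rpow_pos_of_pos hy e
  have hy'pe : 0 < y' ^ e := Real.rpow_pos_of_pos hy'pos e
  set s := (y / y') ^ ξ with hsdef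
  set t := (y' / y) ^ e with htdef
  set w := (z + α y) * s with hwdef
  -- key algebraic identities
  have hkey : w * y' ^ ξ = (z + α y) * y ^ ξ := by
    rw [hwdef, hsdef, Real.div_rpow hy.le hy'pos.le, mul_assoc,
      div_mul_cancel₀ _ (ne_of_gt (Real.rpow_pos_of_pos hy'pos ξ))]
  have hkey2 : y' ^ e = t * y ^ e := by
    rw [htdef, Real.div_rpow hy'pos.le hy.le, div_mul_cancel₀ _ (ne_of_gt hype)]
  have hab := abs_le.mp ha
  have hsm1 : |s - 1| ≤ min (δ₀/(4*(R+1))) (1/(2*(R+1))) := hs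
  have hR1 : (0:ℝ) < R + 1 := by linarith
  have hza : |z + α y| ≤ R + 1 := by
    calc |z + α y| ≤ |z| + |α y| := abs_add_le _ _
    _ ≤ R + 1 := by have := min_le_right (δ₀/4) (1/2); linarith [ha.trans this]
  have hwz : |w - z| ≤ δ₀/2 := by
    have : w - z = (z + α y) * (s - 1) + α y := by ring
    rw [this]
    calc |(z + α y) * (s - 1) + α y| ≤ |z + α y| * |s - 1| + |α y| := by
          exact (abs_add_le _ _).trans (by rw [abs_mul])
    _ ≤ (R+1) * (δ₀/(4*(R+1))) + δ₀/4 := by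
          gcongr
          · exact hsm1.trans (min_le_left _ _)
          · exact ha.trans (min_le_left _ _)
    _ = δ₀/2 := by field_simp; ring
  have hwz1 : |w - z| ≤ 1 := by
    have : w - z = (z + α y) * (s - 1) + α y := by ring
    rw [this]
    calc |(z + α y) * (s - 1) + α y| ≤ |z + α y| * |s - 1| + |α y| := by
          exact (abs_add_le _ _).trans (by rw [abs_mul])
    _ ≤ (R+1) * (1/(2*(R+1))) + 1/2 := by
          gcongr
          · exact hsm1.trans (min_le_right _ _)
          · exact ha.trans (min_le_right _ _)
    _ = 1 := by field_simp; ring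
  have hw : |w| ≤ R + 1 := by
    have h := abs_sub_abs_le_abs_sub w z
    linarith
  -- memberships
  have hzmem : z ∈ Set.Icc (-(R+1)) (R+1) := by
    have := abs_le.mp hz; exact ⟨by linarith [this.1], by linarith [this.2]⟩
  have hwmem : w ∈ Set.Icc (-(R+1)) (R+1) := by
    have := abs_le.mp hw; exact ⟨this.1, this.2⟩
  -- apply hypotheses
  have hG : |g (w * y' ^ ξ, y') - P.eval w * y' ^ e| ≤ ε/8 * y' ^ e := hgy w hw
  have hPC : |P.eval w - P.eval z| ≤ ε/8 := by
    rcases eq_or_ne w z with h | h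
    · simp [h]; positivity
    · have := hδ₀ w hwmem z hzmem (by rw [Real.dist_eq]; linarith [hwz, hδ₀pos])
      rw [Real.dist_eq] at this
      exact this.le
  have htb := abs_le.mp ht
  have ht2 : t ≤ 2 := by
    have := (min_le_right (ε/(8*(M+1))) 1); linarith [htb.2, htb.2.trans this]
  have htc : |t - 1| ≤ ε/(8*(M+1)) := ht.trans (min_le_left _ _)
  have hPzM : |P.eval z| ≤ M := hM z hzmem
  -- final estimate
  rw [hkey] at hG
  have step : |g ((z + α y) * y ^ ξ, y') - P.eval z * y ^ e| ≤
      ε/8 * y' ^ e + |P.eval w - P.eval z| * y' ^ e + |P.eval z| * |y' ^ e - y ^ e| := by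
    have expand : g ((z + α y) * y ^ ξ, y') - P.eval z * y ^ e =
        (g ((z + α y) * y ^ ξ, y') - P.eval w * y' ^ e)
        + (P.eval w - P.eval z) * y' ^ e + P.eval z * (y' ^ e - y ^ e) := by ring
    rw [expand]
    have t1 := abs_add_le ((g ((z + α y) * y ^ ξ, y') - P.eval w * y' ^ e)
      + (P.eval w - P.eval z) * y' ^ e) (P.eval z * (y' ^ e - y ^ e))
    have t2 := abs_add_le (g ((z + α y) * y ^ ξ, y') - P.eval w * y' ^ e)
      ((P.eval w - P.eval z) * y' ^ e)
    have t3 : |(P.eval w - P.eval z) * y' ^ e| = |P.eval w - P.eval z| * y' ^ e := by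
      rw [abs_mul, abs_of_pos hy'pe]
    have t4 : |P.eval z * (y' ^ e - y ^ e)| = |P.eval z| * |y' ^ e - y ^ e| := abs_mul _ _
    linarith
  have final : ε/8 * y' ^ e + |P.eval w - P.eval z| * y' ^ e
      + |P.eval z| * |y' ^ e - y ^ e| ≤ ε * y ^ e := by
    have e1 : y' ^ e ≤ 2 * y ^ e := by rw [hkey2]; exact mul_le_mul_of_nonneg_right ht2 hype.le
    have e2 : |y' ^ e - y ^ e| ≤ ε/(8*(M+1)) * y ^ e := by
      rw [hkey2, show t * y ^ e - y ^ e = (t - 1) * y ^ e by ring, abs_mul, abs_of_pos hype]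
      exact mul_le_mul_of_nonneg_right htc hype.le
    have e3 : |P.eval z| * |y' ^ e - y ^ e| ≤ M * (ε/(8*(M+1)) * y ^ e) := by
      apply mul_le_mul hPzM e2 (abs_nonneg _) hM0
    have e4 : M * (ε/(8*(M+1)) * y ^ e) ≤ ε * y ^ e / 8 := by
      have hM1 : (0:ℝ) < M + 1 := by linarith
      have key : M * (ε/(8*(M+1)) * y ^ e) = (M/(M+1)) * (ε * y ^ e / 8) := by
        field_simp
        try ring_nf
        try exact Or.inl trivial
      have h1 : M / (M+1) ≤ 1 := by rw [div_le_one hM1]; linarith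
      rw [key]
      have h2 : (0:ℝ) ≤ ε * y ^ e / 8 := by positivity
      nlinarith [mul_le_mul_of_nonneg_right h1 h2]
    have e5 : |P.eval w - P.eval z| * y' ^ e ≤ ε/8 * (2 * y ^ e) :=
      mul_le_mul hPC e1 hy'pe.le (by positivity)
    have e6 : ε/8 * y' ^ e ≤ ε/8 * (2 * y ^ e) :=
      mul_le_mul_of_nonneg_left e1 (by positivity)
    have e7 : (0:ℝ) ≤ ε * y ^ e := by positivity
    have r1 : ε/8 * (2 * y ^ e) = ε * y ^ e / 4 := by ring
    linarith
  exact step.trans final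

end
end

section
/- Let σ : (ℝ²,0) → (ℝ²,0) be a C¹ diffeomorphism germ with Dσ(0) = Id, and let f, g : (ℝ²,0) → (ℝ,0) be real analytic germs, mini-regular in x, with f = g ∘ σ on a neighbourhood of the origin. Let γ : x = λ(y) and γ̃ : x = λ̃(y) be allowable real analytic demi-branches with σ(γ) = γ̃ as set germs at the origin. Then for every ξ ≥ 1: if f admits along γ the expansion (e, P) at rate ξ and g admits along γ̃ the expansion (ẽ, Q) at rate ξ, with P and Q nonzero polynomials, then e = ẽ and P = Q. -/
open Filter Topology Polynomial

noncomputable section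

/-- The demi-branch `x = λ(y)`, `y ≥ 0`, considered as a subset of the plane. -/
def branchSet (lam : ℝ → ℝ) : Set (ℝ × ℝ) :=
  {p : ℝ × ℝ | 0 ≤ p.2 ∧ p.1 = lam p.2}

/-- `f` admits along the demi-branch `x = λ(y)` the expansion `(e, P)` at rate `ξ`. -/
def AdmitsExpansion (f : ℝ × ℝ → ℝ) (lam : ℝ → ℝ) (ξ e : ℝ) (P : Polynomial ℝ) : Prop :=
  ∀ R > (0 : ℝ), ∀ ε > (0 : ℝ), ∀ᶠ y in 𝓝[>] (0 : ℝ), ∀ z : ℝ, |z| ≤ R →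
    |f (lam y + z * y ^ ξ, y) - P.eval z * y ^ e| ≤ ε * y ^ e

/-- `f` is mini-regular in `x`: its initial homogeneous form does not vanish at `(1,0)`. -/
def MiniRegularInX (f : ℝ × ℝ → ℝ) : Prop :=
  ∃ m : ℕ, (∀ j < m, iteratedFDeriv ℝ j f 0 = 0) ∧
    iteratedFDeriv ℝ m f 0 (fun _ => ((1 : ℝ), (0 : ℝ))) ≠ 0

lemma rpow_tendsto {d : ℝ} (hd : 0 < d) :
    Tendsto (fun y : ℝ => y ^ d) (𝓝[>] (0:ℝ)) (𝓝 0) := by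
  have h := (Real.continuousAt_rpow_const 0 d (Or.inr hd.le)).continuousWithinAt
    (s := Set.Ioi (0:ℝ))
  simpa [ContinuousWithinAt, Real.zero_rpow hd.ne'] using h

lemma uniq_helper {P Q : Polynomial ℝ} {e e' : ℝ}
    (h : ∀ z : ℝ, ∀ ε > (0:ℝ), ∀ᶠ y in 𝓝[>] (0:ℝ),
      |P.eval z * y ^ e - Q.eval z * y ^ e'| ≤ ε * (y ^ e + y ^ e'))
    (hee : e ≤ e') (hP : P ≠ 0) : e = e' ∧ P = Q := by
  set d := e' - e with hd
  have hd0 : 0 ≤ d := by simp [hd]; linarith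
  have key : ∀ z : ℝ, ∀ ε > (0:ℝ), ∀ᶠ y in 𝓝[>] (0:ℝ),
      |P.eval z - Q.eval z * y ^ d| ≤ ε * (1 + y ^ d) := by
    intro z ε hε
    filter_upwards [h z ε hε, self_mem_nhdsWithin] with y hy hy0
    have hy0' : (0:ℝ) < y := hy0
    have hye : (0:ℝ) < y ^ e := Real.rpow_pos_of_pos hy0' e
    have hsplit : y ^ e' = y ^ e * y ^ d := by
      rw [← Real.rpow_add hy0', hd]; ring_nf
    rw [hsplit] at hy
    have : |P.eval z - Q.eval z * y ^ d| * y ^ e ≤ ε * (1 + y ^ d) * y ^ e := by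
      calc |P.eval z - Q.eval z * y ^ d| * y ^ e
          = |(P.eval z - Q.eval z * y ^ d) * y ^ e| := by
            rw [abs_mul, abs_of_pos hye]
        _ = |P.eval z * y ^ e - Q.eval z * (y ^ e * y ^ d)| := by ring_nf
        _ ≤ ε * (y ^ e + y ^ e * y ^ d) := hy
        _ = ε * (1 + y ^ d) * y ^ e := by ring
    exact le_of_mul_le_mul_right this hye
  have hdz : d = 0 := by
    by_contra hne
    have hdpos : 0 < d := lt_of_le_of_ne hd0 (Ne.symm hne)
    obtain ⟨z, hz⟩ : ∃ z : ℝ, P.eval z ≠ 0 := by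
      by_contra hc
      push_neg at hc
      exact hP (Polynomial.funext (by simp [hc]))
    have habs : ∀ ε > (0:ℝ), |P.eval z| ≤ 3 * ε := by
      intro ε hε
      have h1 : ∀ᶠ y in 𝓝[>] (0:ℝ), y ^ d ≤ min 1 (ε / (|Q.eval z| + 1)) := by
        have hmin : (0:ℝ) < min 1 (ε / (|Q.eval z| + 1)) := by
          apply lt_min one_pos; positivity
        exact (rpow_tendsto hdpos).eventually (ge_mem_nhds hmin)
      obtain ⟨y, hy1, hy2, hy3⟩ :=
        (h1.and ((key z ε hε).and self_mem_nhdsWithin)).exists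
      have hy0 : (0:ℝ) < y := hy3
      have hyd0 : 0 ≤ y ^ d := (Real.rpow_pos_of_pos hy0 d).le
      have hybd : y ^ d ≤ ε / (|Q.eval z| + 1) := (le_min_iff.mp hy1).2
      have hyd1 : y ^ d ≤ 1 := (le_min_iff.mp hy1).1
      have hq : |Q.eval z * y ^ d| ≤ ε := by
        rw [abs_mul, abs_of_nonneg hyd0]
        have h2 : |Q.eval z| * y ^ d ≤ (|Q.eval z| + 1) * (ε / (|Q.eval z| + 1)) := by
          apply mul_le_mul (by linarith [abs_nonneg (Q.eval z)]) hybd hyd0 (by positivity)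
        rwa [mul_div_cancel₀ _ (by positivity : |Q.eval z| + 1 ≠ 0)] at h2
      calc |P.eval z| = |(P.eval z - Q.eval z * y ^ d) + Q.eval z * y ^ d| := by ring_nf
        _ ≤ |P.eval z - Q.eval z * y ^ d| + |Q.eval z * y ^ d| := abs_add_le _ _
        _ ≤ ε * (1 + y ^ d) + ε := add_le_add hy2 hq
        _ ≤ 3 * ε := by nlinarith
    have : |P.eval z| ≤ 0 := by
      by_contra hc
      push_neg at hc
      have := habs (|P.eval z| / 6) (by linarith)
      linarith
    exact hz (abs_eq_zero.mp (le_antisymm this (abs_nonneg _)))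
  have hee' : e = e' := by simp [hd] at hdz; linarith
  refine ⟨hee', Polynomial.funext fun z => ?_⟩
  have heq : ∀ ε > (0:ℝ), |P.eval z - Q.eval z| ≤ 2 * ε := by
    intro ε hε
    obtain ⟨y, hy1, hy2⟩ := ((key z ε hε).and self_mem_nhdsWithin).exists
    rw [hdz, Real.rpow_zero, mul_one] at hy1
    linarith [hy1]
  by_contra hc
  have hpos : 0 < |P.eval z - Q.eval z| := abs_pos.mpr (sub_ne_zero.mpr hc)
  have := heq (|P.eval z - Q.eval z| / 4) (by linarith)
  linarith

lemma uniq {f : ℝ × ℝ → ℝ} {lam : ℝ → ℝ} {ξ e e' : ℝ} {P Q : Polynomial ℝ}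
    (hP : P ≠ 0) (hQ : Q ≠ 0)
    (h1 : AdmitsExpansion f lam ξ e P) (h2 : AdmitsExpansion f lam ξ e' Q) :
    e = e' ∧ P = Q := by
  have h : ∀ z : ℝ, ∀ ε > (0:ℝ), ∀ᶠ y in 𝓝[>] (0:ℝ),
      |P.eval z * y ^ e - Q.eval z * y ^ e'| ≤ ε * (y ^ e + y ^ e') := by
    intro z ε hε
    filter_upwards [h1 (|z| + 1) (by positivity) ε hε, h2 (|z| + 1) (by positivity) ε hε,
      self_mem_nhdsWithin] with y k1 k2 hy0
    have hz : |z| ≤ |z| + 1 := by linarith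
    have := k1 z hz; have := k2 z hz
    calc |P.eval z * y ^ e - Q.eval z * y ^ e'|
        = |(f (lam y + z * y ^ ξ, y) - Q.eval z * y ^ e')
            - (f (lam y + z * y ^ ξ, y) - P.eval z * y ^ e)| := by ring_nf
      _ ≤ |f (lam y + z * y ^ ξ, y) - Q.eval z * y ^ e'|
            + |f (lam y + z * y ^ ξ, y) - P.eval z * y ^ e| := abs_sub _ _
      _ ≤ ε * y ^ e' + ε * y ^ e := add_le_add (k2 z hz) (k1 z hz)
      _ = ε * (y ^ e + y ^ e') := by ring
  rcases le_total e e' with hee | hee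
  · exact uniq_helper h hee hP
  · have h' : ∀ z : ℝ, ∀ ε > (0:ℝ), ∀ᶠ y in 𝓝[>] (0:ℝ),
        |Q.eval z * y ^ e' - P.eval z * y ^ e| ≤ ε * (y ^ e' + y ^ e) := by
      intro z ε hε
      filter_upwards [h z ε hε] with y hy
      rw [abs_sub_comm] at hy
      linarith [hy]
    obtain ⟨h1', h2'⟩ := uniq_helper h' hee hQ
    exact ⟨h1'.symm, h2'.symm⟩

lemma c1est {σ : ℝ × ℝ → ℝ × ℝ} {U : Set (ℝ × ℝ)} (hU : IsOpen U) (h0U : (0:ℝ×ℝ) ∈ U)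
    (hσd : ContDiffOn ℝ 1 σ U)
    (hDσ : fderiv ℝ σ 0 = ContinuousLinearMap.id ℝ (ℝ × ℝ)) :
    ∀ ε > (0:ℝ), ∃ ρ > (0:ℝ), Metric.ball (0:ℝ×ℝ) ρ ⊆ U ∧
      ∀ p ∈ Metric.ball (0:ℝ×ℝ) ρ, ∀ q ∈ Metric.ball (0:ℝ×ℝ) ρ,
        ‖σ q - σ p - (q - p)‖ ≤ ε * ‖q - p‖ := by
  intro ε hε
  have hcont : ContinuousOn (fderiv ℝ σ) U := hσd.continuousOn_fderiv_of_isOpen hU le_rfl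
  have hca : ContinuousAt (fderiv ℝ σ) 0 := hcont.continuousAt (hU.mem_nhds h0U)
  have hev : ∀ᶠ x in 𝓝 (0:ℝ×ℝ), ‖fderiv ℝ σ x - ContinuousLinearMap.id ℝ (ℝ × ℝ)‖ ≤ ε := by
    have : ∀ᶠ x in 𝓝 (0:ℝ×ℝ), fderiv ℝ σ x ∈ Metric.closedBall (fderiv ℝ σ 0) ε :=
      hca (Metric.closedBall_mem_nhds _ hε)
    filter_upwards [this] with x hx
    rw [← hDσ]
    simpa [dist_eq_norm] using hx
  obtain ⟨ρ, hρ, hball⟩ := Metric.eventually_nhds_iff_ball.mp (hev.and (hU.eventually_mem h0U))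
  refine ⟨ρ, hρ, fun x hx => (hball x hx).2, ?_⟩
  intro p hp q hq
  have hdiff : ∀ x ∈ Metric.ball (0:ℝ×ℝ) ρ, DifferentiableAt ℝ σ x := fun x hx =>
    (hσd.contDiffAt (hU.mem_nhds (hball x hx).2)).differentiableAt one_ne_zero
  have key := Convex.norm_image_sub_le_of_norm_fderiv_le
    (f := fun x => σ x - x) (C := ε) (s := Metric.ball (0:ℝ×ℝ) ρ)
    (fun x hx => ((hdiff x hx).sub differentiableAt_id)) ?_ (convex_ball _ _) hp hq
  · calc ‖σ q - σ p - (q - p)‖ = ‖(σ q - q) - (σ p - p)‖ := by ring_nf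
    _ ≤ ε * ‖q - p‖ := key
  · intro x hx
    rw [fderiv_fun_sub (hdiff x hx) differentiableAt_fun_id]
    simpa using (hball x hx).1

-- key algebraic estimate
lemma pow_diff_est {N : ℕ} (hN : 0 < N) {a b : ℝ} (hb : 0 ≤ b) (hba : b ≤ a) (ha : a ≤ 1) :
    a ^ N * (a - b) ≤ a ^ N - b ^ N := by
  have h0a : 0 ≤ a := hb.trans hba
  have h1 : a ^ N * (a - b) ≤ a ^ (N - 1) * (a - b) := by
    apply mul_le_mul_of_nonneg_right _ (by linarith)
    exact pow_le_pow_of_le_one h0a ha (Nat.sub_le N 1)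
  refine h1.trans ?_
  rw [← geom_sum₂_mul a b N]
  apply mul_le_mul_of_nonneg_right _ (by linarith)
  have hmem : N - 1 ∈ Finset.range N := Finset.mem_range.mpr (by omega)
  have := Finset.single_le_sum (f := fun i => a ^ i * b ^ (N - 1 - i))
    (fun i _ => by positivity) hmem
  simpa [Nat.sub_self] using this

/-- factorization: if `μ` is analytic at 0 and `|μ s| ≤ C s^N` for small `s ≥ 0`,
then `μ s = s^N ν s` near 0 with `ν` analytic. -/
lemma factor {μ : ℝ → ℝ} {N : ℕ} {C δ : ℝ} (hN : 0 < N) (hμ : AnalyticAt ℝ μ 0)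
    (hδ : 0 < δ) (hbd : ∀ s, 0 ≤ s → s < δ → |μ s| ≤ C * s ^ N) :
    ∃ ν : ℝ → ℝ, AnalyticAt ℝ ν 0 ∧ ∀ᶠ s in 𝓝 (0:ℝ), μ s = s ^ N * ν s := by
  rcases eq_or_ne (analyticOrderAt μ 0) ⊤ with htop | hne
  · refine ⟨0, analyticAt_const, ?_⟩
    filter_upwards [analyticOrderAt_eq_top.mp htop] with s hs
    simp [hs]
  · obtain ⟨n, hn⟩ : ∃ n : ℕ, analyticOrderAt μ 0 = n := by
      cases h : analyticOrderAt μ 0 with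
      | top => exact absurd h hne
      | coe n => exact ⟨n, rfl⟩
    obtain ⟨g, hg, hg0, hev⟩ := (hμ.analyticOrderAt_eq_natCast).mp hn
    by_cases hnN : N ≤ n
    · refine ⟨fun s => s ^ (n - N) * g s, ((analyticAt_id.pow _).mul hg), ?_⟩
      filter_upwards [hev] with s hs
      rw [hs]
      simp only [sub_zero, smul_eq_mul]
      rw [← mul_assoc, ← pow_add]
      congr 2
      omega
    · exfalso
      push_neg at hnN
      -- g s → g 0 along 𝓝[>] 0, but |g s| ≤ C s^(N-n) → 0
      have hgc : Tendsto g (𝓝[>] (0:ℝ)) (𝓝 (g 0)) :=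
        (hg.continuousAt.tendsto).mono_left nhdsWithin_le_nhds
      have hbd' : ∀ᶠ s in 𝓝[>] (0:ℝ), |g s| ≤ C * s ^ (N - n) := by
        have hev' : ∀ᶠ s in 𝓝[>] (0:ℝ), μ s = s ^ n * g s :=
          (hev.filter_mono nhdsWithin_le_nhds).mono (by intro s hs; simpa using hs)
        have hsm : ∀ᶠ s in 𝓝[>] (0:ℝ), s < δ :=
          eventually_nhdsWithin_of_eventually_nhds
            (Filter.Tendsto.eventually_lt_const hδ (tendsto_id (x := 𝓝 (0:ℝ))) )
        filter_upwards [hev', hsm, self_mem_nhdsWithin] with s hs hsδ hs0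
        have hs0' : (0:ℝ) < s := hs0
        have h1 : |μ s| ≤ C * s ^ N := hbd s hs0'.le hsδ
        rw [hs, abs_mul, abs_pow, abs_of_pos hs0'] at h1
        have hsn : (0:ℝ) < s ^ n := pow_pos hs0' n
        have h2 : s ^ n * |g s| ≤ s ^ n * (C * s ^ (N - n)) := by
          rw [show s ^ n * (C * s ^ (N-n)) = C * (s^n * s^(N-n)) by ring, ← pow_add]
          rw [show n + (N - n) = N by omega]
          linarith
        exact le_of_mul_le_mul_left h2 hsn
      have hz : Tendsto (fun s : ℝ => C * s ^ (N - n)) (𝓝[>] (0:ℝ)) (𝓝 0) := by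
        have : Tendsto (fun s : ℝ => C * s ^ (N - n)) (𝓝 (0:ℝ)) (𝓝 (C * 0 ^ (N-n))) :=
          (continuous_const.mul (continuous_pow _)).tendsto 0
        rw [zero_pow (by omega : N - n ≠ 0), mul_zero] at this
        exact this.mono_left nhdsWithin_le_nhds
      have : |g 0| ≤ 0 := by
        have habs : Tendsto (fun s => |g s|) (𝓝[>] (0:ℝ)) (𝓝 |g 0|) := hgc.abs
        exact le_of_tendsto_of_tendsto habs hz hbd'
      exact hg0 (abs_eq_zero.mp (le_antisymm this (abs_nonneg _)))

lemma lipschitz_of_allowable {lam : ℝ → ℝ} (h : AllowableBranch lam) :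
    ∃ L ≥ (0:ℝ), ∃ ε > (0:ℝ), ∀ y1 ∈ Set.Icc (0:ℝ) ε, ∀ y2 ∈ Set.Icc (0:ℝ) ε,
      |lam y1 - lam y2| ≤ L * |y1 - y2| := by
  obtain ⟨N, μ, hN, hμ, hμ0, heq, C, hC, hCb⟩ := h
  obtain ⟨ε1, hε1, hIco1⟩ := mem_nhdsGE_iff_exists_Ico_subset.mp heq
  obtain ⟨ε2, hε2, hIco2⟩ := mem_nhdsGE_iff_exists_Ico_subset.mp hCb
  have hNne : N ≠ 0 := hN.ne'
  -- bound on μ in terms of s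
  set δ0 : ℝ := min 1 (min ε1 ε2) with hδ0
  have hδ0pos : 0 < δ0 := by
    apply lt_min one_pos (lt_min hε1 hε2)
  have hbd : ∀ s, 0 ≤ s → s < δ0 → |μ s| ≤ C * s ^ N := by
    intro s hs0 hsδ
    have hs1 : s ≤ 1 := le_of_lt (lt_of_lt_of_le hsδ (min_le_left _ _))
    have hsN : s ^ N ≤ s := pow_le_of_le_one hs0 hs1 hNne
    have hyIn1 : s ^ N ∈ Set.Ico (0:ℝ) ε1 :=
      ⟨by positivity, lt_of_le_of_lt hsN (lt_of_lt_of_le hsδ ((min_le_right _ _).trans (min_le_left _ _)))⟩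
    have hyIn2 : s ^ N ∈ Set.Ico (0:ℝ) ε2 :=
      ⟨by positivity, lt_of_le_of_lt hsN (lt_of_lt_of_le hsδ ((min_le_right _ _).trans (min_le_right _ _)))⟩
    have e1 : lam (s ^ N) = μ ((s ^ N) ^ ((N:ℝ)⁻¹)) := hIco1 hyIn1
    rw [Real.pow_rpow_inv_natCast hs0 hNne] at e1
    have e2 : |lam (s ^ N)| ≤ C * s ^ N := hIco2 hyIn2
    rwa [e1] at e2
  obtain ⟨ν, hν, hνeq⟩ := factor hN hμ hδ0pos hbd
  -- Lipschitz bound for ν near 0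
  obtain ⟨K, t, ht, hlipν⟩ := (hν.contDiffAt (n := 1)).exists_lipschitzOnWith
  obtain ⟨r1, hr1, hball1⟩ := Metric.mem_nhds_iff.mp ht
  obtain ⟨r2, hr2, hball2⟩ := Metric.eventually_nhds_iff_ball.mp hνeq
  -- bound on |ν| near 0
  have hνb : ∀ᶠ s in 𝓝 (0:ℝ), |ν s| ≤ |ν 0| + 1 := by
    have := hν.continuousAt (Metric.closedBall_mem_nhds (ν 0) one_pos)
    filter_upwards [this] with s hs
    have : |ν s - ν 0| ≤ 1 := by simpa [Real.dist_eq] using hs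
    calc |ν s| = |(ν s - ν 0) + ν 0| := by ring_nf
      _ ≤ |ν s - ν 0| + |ν 0| := abs_add_le _ _
      _ ≤ |ν 0| + 1 := by linarith
  obtain ⟨r3, hr3, hball3⟩ := Metric.eventually_nhds_iff_ball.mp hνb
  set B : ℝ := |ν 0| + 1 with hB
  set r : ℝ := min 1 (min (min r1 r2) (min r3 δ0)) with hr
  have hrpos : 0 < r := by
    apply lt_min one_pos; apply lt_min (lt_min hr1 hr2) (lt_min hr3 hδ0pos)
  set ε : ℝ := (r / 2) ^ N with hε
  have hεpos : 0 < ε := by positivity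
  refine ⟨B + K, add_nonneg (by positivity) K.coe_nonneg, ε, hεpos, ?_⟩
  -- main symmetric claim
  have main : ∀ y1 ∈ Set.Icc (0:ℝ) ε, ∀ y2 ∈ Set.Icc (0:ℝ) ε, y2 ≤ y1 →
      |lam y1 - lam y2| ≤ (B + K) * |y1 - y2| := by
    intro y1 hy1 y2 hy2 hle
    set s1 : ℝ := y1 ^ ((N:ℝ)⁻¹) with hs1
    set s2 : ℝ := y2 ^ ((N:ℝ)⁻¹) with hs2
    have hy10 : 0 ≤ y1 := hy1.1
    have hy20 : 0 ≤ y2 := hy2.1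
    have hs10 : 0 ≤ s1 := Real.rpow_nonneg hy10 _
    have hs20 : 0 ≤ s2 := Real.rpow_nonneg hy20 _
    have hsle : s2 ≤ s1 := Real.rpow_le_rpow hy20 hle (by positivity)
    -- s_i < r
    have hsr : ∀ y ∈ Set.Icc (0:ℝ) ε, y ^ ((N:ℝ)⁻¹) < r := by
      intro y hy
      have h1 : y ^ ((N:ℝ)⁻¹) ≤ ε ^ ((N:ℝ)⁻¹) := Real.rpow_le_rpow hy.1 hy.2 (by positivity)
      have h2 : ε ^ ((N:ℝ)⁻¹) = r / 2 := Real.pow_rpow_inv_natCast (by positivity) hNne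
      have : r / 2 < r := by linarith
      linarith [h1, h2 ▸ h1]
    have hs1r : s1 < r := hsr y1 hy1
    have hs2r : s2 < r := hsr y2 hy2
    have hsNy : ∀ y : ℝ, 0 ≤ y → (y ^ ((N:ℝ)⁻¹)) ^ N = y := fun y hy =>
      Real.rpow_inv_natCast_pow hy hNne
    -- lam y = y * ν s
    have hεδ : ε < δ0 := by
      have hr1' : r ≤ 1 := min_le_left _ _
      have hrδ : r ≤ δ0 := le_trans (min_le_right _ _) (le_trans (min_le_right _ _) (min_le_right _ _))
      have h1 : ε ≤ r / 2 := pow_le_of_le_one (by positivity) (by linarith) hNne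
      linarith
    have hlam : ∀ y ∈ Set.Icc (0:ℝ) ε, lam y = y * ν (y ^ ((N:ℝ)⁻¹)) := by
      intro y hy
      have hsr' := hsr y hy
      have hsy0 : (0:ℝ) ≤ y ^ ((N:ℝ)⁻¹) := Real.rpow_nonneg hy.1 _
      have hyε1 : y ∈ Set.Ico (0:ℝ) ε1 := by
        refine ⟨hy.1, ?_⟩
        have : δ0 ≤ ε1 := le_trans (min_le_right _ _) (min_le_left _ _)
        linarith [hy.2]
      have e1 : lam y = μ (y ^ ((N:ℝ)⁻¹)) := hIco1 hyε1
      have hmem2 : y ^ ((N:ℝ)⁻¹) ∈ Metric.ball (0:ℝ) r2 := by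
        have : r ≤ r2 := le_trans (min_le_right _ _) (le_trans (min_le_left _ _) (min_le_right _ _))
        simp only [Metric.mem_ball, Real.dist_eq, sub_zero, abs_of_nonneg hsy0]
        linarith
      have e2 : μ (y ^ ((N:ℝ)⁻¹)) = (y ^ ((N:ℝ)⁻¹)) ^ N * ν (y ^ ((N:ℝ)⁻¹)) := hball2 _ hmem2
      rw [e1, e2, hsNy y hy.1]
    have hrr1 : r ≤ r1 := le_trans (min_le_right _ _) (le_trans (min_le_left _ _) (min_le_left _ _))
    have hrr3 : r ≤ r3 := le_trans (min_le_right _ _) (le_trans (min_le_right _ _) (min_le_left _ _))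
    have hr1le : r ≤ 1 := min_le_left _ _
    have hνs2 : |ν s2| ≤ B := hball3 s2 (by
      simp only [Metric.mem_ball, Real.dist_eq, sub_zero, abs_of_nonneg hs20]; linarith)
    have hνdiff : |ν s1 - ν s2| ≤ (K:ℝ) * (s1 - s2) := by
      have h1 : s1 ∈ t := hball1 (by
        simp only [Metric.mem_ball, Real.dist_eq, sub_zero, abs_of_nonneg hs10]; linarith)
      have h2 : s2 ∈ t := hball1 (by
        simp only [Metric.mem_ball, Real.dist_eq, sub_zero, abs_of_nonneg hs20]; linarith)
      have := hlipν.dist_le_mul s1 h1 s2 h2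
      rw [Real.dist_eq, Real.dist_eq] at this
      rwa [abs_of_nonneg (by linarith : (0:ℝ) ≤ s1 - s2)] at this
    have hkey : y1 * (s1 - s2) ≤ y1 - y2 := by
      have e1 : s1 ^ N = y1 := hsNy y1 hy10
      have e2 : s2 ^ N = y2 := hsNy y2 hy20
      have h1 : s1 ^ N * (s1 - s2) ≤ s1 ^ N - s2 ^ N :=
        pow_diff_est hN hs20 hsle (by linarith)
      rw [e1, e2] at h1
      exact h1

    rw [hlam y1 hy1, hlam y2 hy2, ← hs1, ← hs2]
    have habs : |y1 - y2| = y1 - y2 := abs_of_nonneg (by linarith)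
    calc |y1 * ν s1 - y2 * ν s2|
        = |(y1 - y2) * ν s2 + y1 * (ν s1 - ν s2)| := by ring_nf
      _ ≤ |(y1 - y2) * ν s2| + |y1 * (ν s1 - ν s2)| := abs_add_le _ _
      _ = |y1 - y2| * |ν s2| + y1 * |ν s1 - ν s2| := by
          rw [abs_mul, abs_mul, abs_of_nonneg hy10]
      _ ≤ |y1 - y2| * B + y1 * ((K:ℝ) * (s1 - s2)) := by
          apply add_le_add
          · exact mul_le_mul_of_nonneg_left hνs2 (abs_nonneg _)
          · exact mul_le_mul_of_nonneg_left hνdiff hy10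
      _ ≤ |y1 - y2| * B + (K:ℝ) * (y1 - y2) := by
          have : y1 * ((K:ℝ) * (s1 - s2)) = (K:ℝ) * (y1 * (s1 - s2)) := by ring
          rw [this]
          have := mul_le_mul_of_nonneg_left hkey (K.coe_nonneg)
          linarith
      _ = (B + (K:ℝ)) * |y1 - y2| := by rw [habs]; ring
  intro y1 hy1 y2 hy2
  rcases le_total y2 y1 with h | h
  · exact main y1 hy1 y2 hy2 h
  · rw [abs_sub_comm (lam y1), abs_sub_comm y1]
    exact main y2 hy2 y1 hy1 h

set_option maxHeartbeats 2000000

lemma small_eventually {c : ℝ} (hc : 0 < c) : ∀ᶠ y in 𝓝[>] (0:ℝ), y < c := by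
  have : Set.Ioo (0:ℝ) c ∈ 𝓝[>] (0:ℝ) :=
    mem_nhdsGT_iff_exists_Ioo_subset.mpr ⟨c, hc, subset_rfl⟩
  exact eventually_of_mem this (fun y hy => hy.2)

lemma transfer {σ : ℝ × ℝ → ℝ × ℝ} {U : Set (ℝ × ℝ)} (hU : IsOpen U) (h0U : (0:ℝ×ℝ) ∈ U)
    (hσd : ContDiffOn ℝ 1 σ U) (hσ0 : σ 0 = 0)
    (hDσ : fderiv ℝ σ 0 = ContinuousLinearMap.id ℝ (ℝ × ℝ))
    {f g : ℝ × ℝ → ℝ} (hfg : ∀ᶠ p in 𝓝 (0 : ℝ × ℝ), f p = g (σ p))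
    {lam lam' : ℝ → ℝ} {C : ℝ} (hC : 0 < C)
    (hlamb : ∀ᶠ y in 𝓝[>] (0:ℝ), |lam y| ≤ C * y)
    (hmap : ∀ᶠ y in 𝓝[>] (0:ℝ), 0 ≤ (σ (lam y, y)).2 ∧
      (σ (lam y, y)).1 = lam' ((σ (lam y, y)).2))
    {L εL : ℝ} (hL : 0 ≤ L) (hεL : 0 < εL)
    (hlip : ∀ y1 ∈ Set.Icc (0:ℝ) εL, ∀ y2 ∈ Set.Icc (0:ℝ) εL,
      |lam' y1 - lam' y2| ≤ L * |y1 - y2|)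
    {ξ e' : ℝ} (hξ : 1 ≤ ξ) {Q : Polynomial ℝ}
    (hg : AdmitsExpansion g lam' ξ e' Q) :
    AdmitsExpansion f lam ξ e' Q := by
  intro R hR ε hε
  -- bound for Q on the compact interval
  obtain ⟨MQ0, hMQ0⟩ := (isCompact_Icc (a := -(R+1)) (b := R+1)).exists_bound_of_continuousOn
    (Polynomial.continuous Q).continuousOn
  set MQ : ℝ := max MQ0 0 with hMQdef
  have hMQ : ∀ x ∈ Set.Icc (-(R+1)) (R+1), |Q.eval x| ≤ MQ := fun x hx =>
    le_trans (by simpa using hMQ0 x hx) (le_max_left _ _)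
  have hMQ0' : 0 ≤ MQ := le_max_right _ _
  -- uniform continuity of Q on the compact interval
  obtain ⟨η, hη, hηQ⟩ : ∃ η > (0:ℝ), η ≤ 1 ∧ ∀ z ∈ Set.Icc (-(R+1)) (R+1),
      ∀ w ∈ Set.Icc (-(R+1)) (R+1), |z - w| ≤ η → |Q.eval z - Q.eval w| ≤ ε/8 := by
    have huc := (isCompact_Icc (a := -(R+1)) (b := R+1)).uniformContinuousOn_of_continuous
      (Polynomial.continuous Q).continuousOn
    rw [Metric.uniformContinuousOn_iff] at huc
    obtain ⟨δ, hδ, hδ'⟩ := huc (ε/8) (by linarith)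
    refine ⟨min (δ/2) 1, by positivity, min_le_right _ _, ?_⟩
    intro z hz w hw hzw
    have : dist z w < δ := by
      rw [Real.dist_eq]
      have := min_le_left (δ/2) 1
      linarith [hzw]
    have := hδ' z hz w hw this
    rw [Real.dist_eq] at this
    linarith
  obtain ⟨hη1, hηQ⟩ := hηQ
  set δ₁ : ℝ := η / (2 * (R+1)) with hδ₁def
  set δ₂ : ℝ := ε / (8 * (MQ+1)) with hδ₂def
  have hδ₁ : 0 < δ₁ := by positivity
  have hδ₂ : 0 < δ₂ := by positivity
  -- continuity of rpow at 1
  obtain ⟨τ, hτ, hτhalf, hτu⟩ : ∃ τ > (0:ℝ), τ ≤ 1/2 ∧ ∀ u : ℝ, |u - 1| ≤ τ →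
      |u ^ (-ξ) - 1| ≤ min δ₁ 1 ∧ |u ^ e' - 1| ≤ min δ₂ 1 := by
    have h1 : ContinuousAt (fun u : ℝ => u ^ (-ξ)) 1 :=
      Real.continuousAt_rpow_const 1 (-ξ) (Or.inl one_ne_zero)
    have h2 : ContinuousAt (fun u : ℝ => u ^ e') 1 :=
      Real.continuousAt_rpow_const 1 e' (Or.inl one_ne_zero)
    have e1 : (1:ℝ) ^ (-ξ) = 1 := Real.one_rpow _
    have e2 : (1:ℝ) ^ e' = 1 := Real.one_rpow _
    have hev : ∀ᶠ u in 𝓝 (1:ℝ), |u ^ (-ξ) - 1| ≤ min δ₁ 1 ∧ |u ^ e' - 1| ≤ min δ₂ 1 := by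
      have k1 := h1 (Metric.closedBall_mem_nhds _ (lt_min hδ₁ one_pos))
      have k2 := h2 (Metric.closedBall_mem_nhds _ (lt_min hδ₂ one_pos))
      filter_upwards [k1, k2] with u hu1 hu2
      constructor
      · have : dist (u ^ (-ξ)) ((1:ℝ) ^ (-ξ)) ≤ min δ₁ 1 := by simpa using hu1
        rw [e1] at this; rwa [Real.dist_eq] at this
      · have : dist (u ^ e') ((1:ℝ) ^ e') ≤ min δ₂ 1 := by simpa using hu2
        rw [e2] at this; rwa [Real.dist_eq] at this
    obtain ⟨δ, hδ, hball⟩ := Metric.eventually_nhds_iff.mp hev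
    refine ⟨min (δ/2) (1/2), by positivity, min_le_right _ _, ?_⟩
    intro u hu
    apply hball
    rw [Real.dist_eq]
    have := min_le_left (δ/2) (1/2)
    linarith [hu]
  -- the C¹ estimate
  set εi : ℝ := min (η / (4 * (1+L) * (R+1))) (min (τ / (2 * (R+1))) (τ / (2 * (C+1)))) with hεidef
  have hεi : 0 < εi := by
    apply lt_min (by positivity) (lt_min (by positivity) (by positivity))
  obtain ⟨ρ, hρ, hballU, hkey⟩ := c1est hU h0U hσd hDσ εi hεi
  obtain ⟨ρf, hρf, hballf⟩ := Metric.eventually_nhds_iff_ball.mp hfg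
  -- the expansion of g
  obtain ⟨δS, hδSmem, hSsub⟩ := mem_nhdsGT_iff_exists_Ioo_subset.mp
    (hg (R+1) (by positivity) (ε/8) (by linarith))
  have hδS : (0:ℝ) < δS := hδSmem
  have hS : ∀ Y ∈ Set.Ioo (0:ℝ) δS, ∀ w : ℝ, |w| ≤ R+1 →
      |g (lam' Y + w * Y ^ ξ, Y) - Q.eval w * Y ^ e'| ≤ (ε/8) * Y ^ e' :=
    fun Y hY => hSsub hY
  -- main eventual statement
  filter_upwards [self_mem_nhdsWithin, small_eventually (one_pos (α := ℝ)),
    hlamb, hmap,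
    small_eventually (show (0:ℝ) < ρ / (C+R+1) by positivity),
    small_eventually (show (0:ℝ) < ρf / (C+R+1) by positivity),
    small_eventually (show (0:ℝ) < δS / 2 by linarith),
    small_eventually (show (0:ℝ) < εL / 2 by linarith)]
    with y hy0' hy1 hlamy hmapy hyρ hyρf hyδS hyεL
  intro z hz
  have hy0 : (0:ℝ) < y := hy0'
  set p : ℝ × ℝ := (lam y, y) with hpdef
  set q : ℝ × ℝ := (lam y + z * y ^ ξ, y) with hqdef
  set ty : ℝ := (σ p).2 with htydef
  have hty0 : 0 ≤ ty := hmapy.1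
  have htylam : (σ p).1 = lam' ty := hmapy.2
  have hyξpos : 0 < y ^ ξ := Real.rpow_pos_of_pos hy0 ξ
  have hyξy : y ^ ξ ≤ y := by
    have := Real.rpow_le_rpow_of_exponent_ge hy0 hy1.le hξ
    simpa [Real.rpow_one] using this
  -- norms
  have hnp : ‖p‖ ≤ (C+1) * y := by
    rw [Prod.norm_def]
    apply max_le
    · simp only [Real.norm_eq_abs]
      calc |p.1| = |lam y| := rfl
        _ ≤ C * y := hlamy
        _ ≤ (C+1) * y := by nlinarith
    · simp only [Real.norm_eq_abs]
      calc |p.2| = y := abs_of_pos hy0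
        _ ≤ (C+1)*y := by nlinarith
  have hnq : ‖q‖ ≤ (C+R+1) * y := by
    rw [Prod.norm_def]
    apply max_le
    · simp only [Real.norm_eq_abs]
      calc |q.1| = |lam y + z * y ^ ξ| := rfl
        _ ≤ |lam y| + |z| * y ^ ξ := by
            refine (abs_add_le _ _).trans ?_
            rw [abs_mul, abs_of_pos hyξpos]
        _ ≤ C * y + R * y := by
            apply add_le_add hlamy
            calc |z| * y ^ ξ ≤ R * y ^ ξ := mul_le_mul_of_nonneg_right hz hyξpos.le
              _ ≤ R * y := mul_le_mul_of_nonneg_left hyξy hR.le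
        _ ≤ (C+R+1) * y := by nlinarith
    · simp only [Real.norm_eq_abs]
      calc |q.2| = y := abs_of_pos hy0
        _ ≤ (C+R+1)*y := by nlinarith
  have hCR1 : (0:ℝ) < C+R+1 := by linarith
  have hyρ' : (C+R+1) * y < ρ := by
    have := (lt_div_iff₀ hCR1).mp hyρ
    linarith
  have hyρf' : (C+R+1) * y < ρf := by
    have := (lt_div_iff₀ hCR1).mp hyρf
    linarith
  have hpball : p ∈ Metric.ball (0:ℝ×ℝ) ρ := by
    rw [mem_ball_zero_iff]
    have : (C+1)*y ≤ (C+R+1)*y := by nlinarith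
    linarith
  have hqball : q ∈ Metric.ball (0:ℝ×ℝ) ρ := by
    rw [mem_ball_zero_iff]; linarith
  have h0ball : (0:ℝ×ℝ) ∈ Metric.ball (0:ℝ×ℝ) ρ := Metric.mem_ball_self hρ
  -- the displacement r
  set r : ℝ × ℝ := σ q - σ p - (q - p) with hrdef
  have hqp : q - p = (z * y ^ ξ, 0) := by
    rw [hqdef, hpdef, Prod.mk_sub_mk]
    simp
  have hnqp : ‖q - p‖ = |z| * y ^ ξ := by
    rw [hqp, Prod.norm_def]
    simp only [Real.norm_eq_abs, abs_mul, abs_of_pos hyξpos, norm_zero]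
    rw [max_eq_left (by positivity)]
  have hnr : ‖r‖ ≤ εi * (R * y ^ ξ) := by
    have := hkey p hpball q hqball
    rw [hnqp] at this
    refine this.trans ?_
    have : |z| * y ^ ξ ≤ R * y ^ ξ := by nlinarith
    nlinarith [hεi.le]
  have hr1 : |r.1| ≤ εi * R * y ^ ξ := by
    have := (norm_fst_le r).trans hnr
    rw [Real.norm_eq_abs] at this; linarith
  have hr2 : |r.2| ≤ εi * R * y ^ ξ := by
    have := (norm_snd_le r).trans hnr
    rw [Real.norm_eq_abs] at this; linarith
  -- estimate on ty
  have hσp : ‖σ p - p‖ ≤ εi * ((C+1) * y) := by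
    have := hkey 0 h0ball p hpball
    rw [hσ0] at this
    simp only [sub_zero, zero_sub] at this
    have h2 : ‖σ p - p‖ ≤ εi * ‖p‖ := by
      have e : σ p - 0 - (p - 0) = σ p - p := by abel
      simpa [e] using this
    refine h2.trans ?_
    nlinarith [hεi.le, norm_nonneg p]
  have htyy : |ty - y| ≤ (τ/2) * y := by
    have h1 : |ty - y| ≤ ‖σ p - p‖ := by
      have := norm_snd_le (σ p - p)
      simp only [Prod.snd_sub, Real.norm_eq_abs] at this
      exact this
    have hεi3 : εi ≤ τ / (2 * (C+1)) := le_trans (min_le_right _ _) (min_le_right _ _)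
    calc |ty - y| ≤ εi * ((C+1)*y) := h1.trans hσp
      _ ≤ (τ / (2*(C+1))) * ((C+1)*y) := by
          apply mul_le_mul_of_nonneg_right hεi3 (by positivity)
      _ = (τ/2) * y := by field_simp
  -- the second coordinate Y
  set Y : ℝ := (σ q).2 with hYdef
  have hYty : Y = ty + r.2 := by
    rw [hrdef]
    simp [hqp]; rw [hYdef, htydef]; ring
  have hεi2 : εi ≤ τ / (2 * (R+1)) := le_trans (min_le_right _ _) (min_le_left _ _)
  have hr2' : |r.2| ≤ (τ/2) * y := by
    calc |r.2| ≤ εi * R * y ^ ξ := hr2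
      _ ≤ εi * R * y := mul_le_mul_of_nonneg_left hyξy (mul_nonneg hεi.le hR.le)
      _ ≤ (τ / (2*(R+1))) * R * y := by
          apply mul_le_mul_of_nonneg_right
            (mul_le_mul_of_nonneg_right hεi2 hR.le) hy0.le
      _ ≤ (τ/2) * y := by
          rw [div_mul_eq_mul_div, div_mul_eq_mul_div, div_le_iff₀ (by positivity)]
          nlinarith
  have hYy : |Y - y| ≤ τ * y := by
    calc |Y - y| = |(ty - y) + r.2| := by rw [hYty]; ring_nf
      _ ≤ |ty - y| + |r.2| := abs_add_le _ _
      _ ≤ (τ/2)*y + (τ/2)*y := add_le_add htyy hr2'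
      _ = τ * y := by ring
  set u : ℝ := Y / y with hudef
  have hu1 : |u - 1| ≤ τ := by
    rw [hudef]
    rw [show Y / y - 1 = (Y - y)/y by field_simp]
    rw [abs_div, abs_of_pos hy0, div_le_iff₀ hy0]
    linarith [hYy]
  obtain ⟨huξ, hue⟩ := hτu u hu1
  have hu0 : (1:ℝ)/2 ≤ u := by
    have := abs_le.mp hu1; linarith
  have hu2 : u ≤ 2 := by
    have := abs_le.mp hu1; linarith
  have hupos : 0 < u := by linarith
  have hYu : Y = u * y := by rw [hudef]; field_simp
  have hYpos : 0 < Y := by rw [hYu]; exact mul_pos hupos hy0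
  have hY2y : Y ≤ 2 * y := by
    rw [hYu]; exact mul_le_mul_of_nonneg_right hu2 hy0.le
  have hYIoo : Y ∈ Set.Ioo (0:ℝ) δS := ⟨hYpos, by linarith⟩
  have hYεL : Y ∈ Set.Icc (0:ℝ) εL := ⟨hYpos.le, by linarith⟩
  have htyabs := abs_le.mp htyy
  have htyεL : ty ∈ Set.Icc (0:ℝ) εL := by
    constructor
    · exact hty0
    · have h2 : (τ/2)*y ≤ (1/4)*y :=
        mul_le_mul_of_nonneg_right (by linarith) hy0.le
      linarith
  -- powers of Y
  have hYξ : Y ^ ξ = u ^ ξ * y ^ ξ := by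
    rw [hYu]; exact Real.mul_rpow hupos.le hy0.le
  have hYξpos : 0 < Y ^ ξ := Real.rpow_pos_of_pos hYpos ξ
  have huξinv : y ^ ξ / Y ^ ξ = u ^ (-ξ) := by
    rw [Real.rpow_neg hupos.le, hYξ]
    rw [eq_comm, inv_eq_iff_eq_inv, eq_comm, inv_div]
    rw [mul_div_assoc, div_self hyξpos.ne', mul_one]
  have huξ1 : |u ^ (-ξ) - 1| ≤ δ₁ := huξ.trans (min_le_left _ _)
  have huξ2 : u ^ (-ξ) ≤ 2 := by
    have := abs_le.mp (huξ.trans (min_le_right _ _)); linarith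
  have hue1 : |u ^ e' - 1| ≤ δ₂ := hue.trans (min_le_left _ _)
  have hue2 : u ^ e' ≤ 2 := by
    have := abs_le.mp (hue.trans (min_le_right _ _)); linarith
  -- the first coordinate and the new parameter w
  set X : ℝ := (σ q).1 with hXdef
  have hXeq : X = lam' ty + z * y ^ ξ + r.1 := by
    have h1 : r.1 = X - (σ p).1 - (z * y ^ ξ) := by
      rw [hrdef]; simp [hqp]; exact hXdef.symm
    rw [htylam] at h1; linarith
  set w : ℝ := (X - lam' Y) / Y ^ ξ with hwdef
  have hwX : lam' Y + w * Y ^ ξ = X := by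
    rw [hwdef]; field_simp; ring
  have hlipd : |lam' ty - lam' Y| ≤ L * |r.2| := by
    have h1 := hlip ty htyεL Y hYεL
    have h2 : |ty - Y| = |r.2| := by
      rw [hYty, show ty - (ty + r.2) = -r.2 by ring, abs_neg]
    rwa [h2] at h1
  have hyY : y ^ ξ ≤ 2 * Y ^ ξ := by
    have h : y ^ ξ / Y ^ ξ ≤ 2 := by rw [huξinv]; exact huξ2
    rw [div_le_iff₀ hYξpos] at h
    linarith
  have hR1 : R/(R+1) ≤ 1 := by
    rw [div_le_one (by linarith)]; linarith
  have hwz : |w - z| ≤ η := by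
    have hwz_eq : w - z = (lam' ty - lam' Y + r.1) / Y ^ ξ + z * (y ^ ξ / Y ^ ξ - 1) := by
      rw [hwdef, hXeq]; field_simp; ring
    have hnum : |lam' ty - lam' Y + r.1| ≤ (1+L) * (εi * R * y ^ ξ) := by
      calc |lam' ty - lam' Y + r.1| ≤ |lam' ty - lam' Y| + |r.1| := abs_add_le _ _
        _ ≤ L * (εi * R * y ^ ξ) + εi * R * y ^ ξ := by
            refine add_le_add (hlipd.trans ?_) hr1
            exact mul_le_mul_of_nonneg_left hr2 hL
        _ = (1+L) * (εi * R * y ^ ξ) := by ring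
    have hεi1 : εi ≤ η / (4*(1+L)*(R+1)) := min_le_left _ _
    have hscal : (1+L) * εi * R * 2 ≤ η / 2 := by
      have hc0 : (0:ℝ) ≤ (1+L) * R * 2 := by
        have : (0:ℝ) ≤ (1+L) * R := mul_nonneg (by linarith) hR.le
        linarith
      have h1 : ((1+L) * R * 2) * εi ≤ ((1+L) * R * 2) * (η / (4*(1+L)*(R+1))) :=
        mul_le_mul_of_nonneg_left hεi1 hc0
      have h2 : ((1+L) * R * 2) * (η / (4*(1+L)*(R+1))) = (η/2) * (R/(R+1)) := by
        field_simp; ring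
      have h3 : (η/2) * (R/(R+1)) ≤ η/2 :=
        mul_le_of_le_one_right (by positivity) hR1
      linarith only [h1, h2, h3]
    have ht1 : |(lam' ty - lam' Y + r.1) / Y ^ ξ| ≤ η/2 := by
      rw [abs_div, abs_of_pos hYξpos, div_le_iff₀ hYξpos]
      calc |lam' ty - lam' Y + r.1| ≤ (1+L) * (εi * R * y ^ ξ) := hnum
        _ ≤ (1+L) * (εi * R * (2 * Y ^ ξ)) := by
            apply mul_le_mul_of_nonneg_left _ (by linarith : (0:ℝ) ≤ 1+L)
            exact mul_le_mul_of_nonneg_left hyY (mul_nonneg hεi.le hR.le)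
        _ = ((1+L) * εi * R * 2) * Y ^ ξ := by ring
        _ ≤ (η/2) * Y ^ ξ := mul_le_mul_of_nonneg_right hscal hYξpos.le
    have ht2 : |z * (y ^ ξ / Y ^ ξ - 1)| ≤ η/2 := by
      rw [abs_mul, huξinv]
      calc |z| * |u ^ (-ξ) - 1| ≤ R * δ₁ :=
            mul_le_mul hz huξ1 (abs_nonneg _) hR.le
        _ = (η/2) * (R/(R+1)) := by rw [hδ₁def]; field_simp
        _ ≤ η/2 := mul_le_of_le_one_right (by positivity) hR1
    calc |w - z| = |(lam' ty - lam' Y + r.1) / Y ^ ξ + z * (y ^ ξ / Y ^ ξ - 1)| := by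
          rw [hwz_eq]
      _ ≤ |(lam' ty - lam' Y + r.1) / Y ^ ξ| + |z * (y ^ ξ / Y ^ ξ - 1)| := abs_add_le _ _
      _ ≤ η/2 + η/2 := add_le_add ht1 ht2
      _ = η := by ring
  have hwR : |w| ≤ R + 1 := by
    calc |w| = |(w - z) + z| := by ring_nf
      _ ≤ |w - z| + |z| := abs_add_le _ _
      _ ≤ η + R := add_le_add hwz hz
      _ ≤ R + 1 := by linarith
  have hgw := hS Y hYIoo w hwR
  have hσqXY : σ q = (X, Y) := by
    rw [hXdef, hYdef]
  have hgσ : g (σ q) = g (lam' Y + w * Y ^ ξ, Y) := by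
    rw [hσqXY, hwX]
  have hfq : f q = g (σ q) := by
    apply hballf
    rw [mem_ball_zero_iff]
    calc ‖q‖ ≤ (C+R+1)*y := hnq
      _ < ρf := hyρf'
  -- powers of Y at exponent e'
  have hye'pos : 0 < y ^ e' := Real.rpow_pos_of_pos hy0 e'
  have hYe'pos : 0 < Y ^ e' := Real.rpow_pos_of_pos hYpos e'
  have hYe : Y ^ e' = u ^ e' * y ^ e' := by
    rw [hYu]; exact Real.mul_rpow hupos.le hy0.le
  have hYe2 : Y ^ e' ≤ 2 * y ^ e' := by
    rw [hYe]; exact mul_le_mul_of_nonneg_right hue2 hye'pos.le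
  have hYediff : |Y ^ e' - y ^ e'| ≤ δ₂ * y ^ e' := by
    rw [hYe, show u ^ e' * y ^ e' - y ^ e' = (u ^ e' - 1) * y ^ e' by ring,
      abs_mul, abs_of_pos hye'pos]
    exact mul_le_mul_of_nonneg_right hue1 hye'pos.le
  have hQz : |Q.eval z| ≤ MQ := hMQ z (abs_le.mp (hz.trans (by linarith)))
  have hQwz : |Q.eval w - Q.eval z| ≤ ε/8 :=
    hηQ w (abs_le.mp hwR) z (abs_le.mp (hz.trans (by linarith))) hwz
  have hMδ : MQ * δ₂ ≤ ε/8 := by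
    have h1 : MQ * δ₂ = (ε/8) * (MQ/(MQ+1)) := by
      rw [hδ₂def]; field_simp
    have h2 : MQ/(MQ+1) ≤ 1 := by
      rw [div_le_one (by linarith)]; linarith
    rw [h1]
    exact mul_le_of_le_one_right (by positivity) h2
  have hA : |g (σ q) - Q.eval w * Y ^ e'| ≤ (ε/8) * (2 * y ^ e') := by
    rw [hgσ]
    refine hgw.trans ?_
    exact mul_le_mul_of_nonneg_left hYe2 (by linarith)
  have hB : |(Q.eval w - Q.eval z) * Y ^ e'| ≤ (ε/8) * (2 * y ^ e') := by
    rw [abs_mul, abs_of_pos hYe'pos]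
    exact mul_le_mul hQwz hYe2 hYe'pos.le (by linarith)
  have hCterm : |Q.eval z * (Y ^ e' - y ^ e')| ≤ MQ * (δ₂ * y ^ e') := by
    rw [abs_mul]
    exact mul_le_mul hQz hYediff (abs_nonneg _) hMQ0'
  have hMδt : MQ * (δ₂ * y ^ e') ≤ (ε/8) * y ^ e' := by
    rw [← mul_assoc]
    exact mul_le_mul_of_nonneg_right hMδ hye'pos.le
  calc |f q - Q.eval z * y ^ e'|
      = |(g (σ q) - Q.eval w * Y ^ e') + ((Q.eval w - Q.eval z) * Y ^ e'
          + Q.eval z * (Y ^ e' - y ^ e'))| := by rw [hfq]; ring_nf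
    _ ≤ |g (σ q) - Q.eval w * Y ^ e'| + |(Q.eval w - Q.eval z) * Y ^ e'
          + Q.eval z * (Y ^ e' - y ^ e')| := abs_add_le _ _
    _ ≤ |g (σ q) - Q.eval w * Y ^ e'| + (|(Q.eval w - Q.eval z) * Y ^ e'|
          + |Q.eval z * (Y ^ e' - y ^ e')|) := by
        have := abs_add_le ((Q.eval w - Q.eval z) * Y ^ e') (Q.eval z * (Y ^ e' - y ^ e'))
        linarith
    _ ≤ (ε/8) * (2 * y ^ e') + ((ε/8) * (2 * y ^ e') + MQ * (δ₂ * y ^ e')) := by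
        refine add_le_add hA (add_le_add hB hCterm)
    _ ≤ ε * y ^ e' := by linarith only [hMδt, mul_nonneg hε.le hye'pos.le]



/-- If `σ` is a C¹ diffeomorphism germ with `Dσ(0) = Id`, `f = g ∘ σ` and `σ(γ) = γ̃` as set
germs, then the coefficient polynomials of `f` along `γ` and of `g` along `γ̃` coincide for
all `ξ ≥ 1`. -/
theorem stmt7 (σ : ℝ × ℝ → ℝ × ℝ) (hσ : IsC1DiffeoGerm σ)
    (hDσ : fderiv ℝ σ 0 = ContinuousLinearMap.id ℝ (ℝ × ℝ))
    (f g : ℝ × ℝ → ℝ) (hfa : AnalyticAt ℝ f 0) (hga : AnalyticAt ℝ g 0)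
    (hf0 : f 0 = 0) (hg0 : g 0 = 0)
    (hfm : MiniRegularInX f) (hgm : MiniRegularInX g)
    (hfg : ∀ᶠ p in 𝓝 (0 : ℝ × ℝ), f p = g (σ p))
    (lam lam' : ℝ → ℝ) (hγ : AllowableBranch lam) (hγ' : AllowableBranch lam')
    (himage : ∃ U : Set (ℝ × ℝ), IsOpen U ∧ (0 : ℝ × ℝ) ∈ U ∧
      σ '' (branchSet lam ∩ U) = branchSet lam' ∩ (σ '' U)) :
    ∀ ξ : ℝ, 1 ≤ ξ → ∀ (e e' : ℝ) (P Q : Polynomial ℝ), P ≠ 0 → Q ≠ 0 →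
      AdmitsExpansion f lam ξ e P → AdmitsExpansion g lam' ξ e' Q →
      e = e' ∧ P = Q := by
  intro ξ hξ e e' P Q hP hQ hPexp hQexp
  obtain ⟨hσ0, U, V, τf, hUopen, hVopen, h0U, h0V, hmapsUV, hmapsVU, hinv1, hinv2,
    hσC1, hτC1⟩ := hσ
  obtain ⟨U₀, hU₀open, h0U₀, himg⟩ := himage
  obtain ⟨_, _, _, _, _, _, C, hC, hCb⟩ := hγ
  have hmono : 𝓝[>] (0:ℝ) ≤ 𝓝[≥] (0:ℝ) :=
    nhdsWithin_mono 0 Set.Ioi_subset_Ici_self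
  have hlamb : ∀ᶠ y in 𝓝[>] (0:ℝ), |lam y| ≤ C * y := hCb.filter_mono hmono
  obtain ⟨ρ₀, hρ₀, hball₀⟩ := Metric.mem_nhds_iff.mp (hU₀open.mem_nhds h0U₀)
  have hmap : ∀ᶠ y in 𝓝[>] (0:ℝ), 0 ≤ (σ (lam y, y)).2 ∧
      (σ (lam y, y)).1 = lam' ((σ (lam y, y)).2) := by
    filter_upwards [hlamb, self_mem_nhdsWithin,
      small_eventually (show (0:ℝ) < ρ₀ / (C+1) by positivity)] with y hly hy0' hys
    have hy0 : (0:ℝ) < y := hy0'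
    have hyU₀ : (lam y, y) ∈ U₀ := by
      apply hball₀
      rw [mem_ball_zero_iff, Prod.norm_def]
      have h1 : (C+1) * y < ρ₀ := by
        have := (lt_div_iff₀ (by positivity : (0:ℝ) < C+1)).mp hys
        linarith
      have hCy : 0 < C * y := mul_pos hC hy0
      apply max_lt
      · simp only [Real.norm_eq_abs]
        linarith [hly]
      · simp only [Real.norm_eq_abs, abs_of_pos hy0]
        linarith
    have hbr : (lam y, y) ∈ branchSet lam ∩ U₀ := ⟨⟨hy0.le, rfl⟩, hyU₀⟩
    have hmem : σ (lam y, y) ∈ branchSet lam' ∩ (σ '' U₀) := by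
      rw [← himg]
      exact Set.mem_image_of_mem σ hbr
    exact ⟨hmem.1.1, hmem.1.2⟩
  obtain ⟨L, hL, εL, hεL, hlip⟩ := lipschitz_of_allowable hγ'
  have hQf : AdmitsExpansion f lam ξ e' Q :=
    transfer hUopen h0U hσC1 hσ0 hDσ hfg hC hlamb hmap hL hεL hlip hξ hQexp
  exact uniq hP hQ hPexp hQf
end
end

section
/- Let σ : (ℝ²,0) → (ℝ²,0) be a C¹ diffeomorphism germ with Dσ(0) = Id, and let f, g : (ℝ²,0) → (ℝ,0) be real analytic germs, mini-regular in x, with f = g ∘ σ on a neighbourhood of the origin. Let γ : x = λ(y) and γ̃ : x = λ̃(y) be allowable real analytic demi-branches and suppose there exist ξ₀ ≥ 1 and N > 0 with σ(γ) ⊂ H_{ξ₀}(γ̃; N) as germs at the origin. Fix ξ with 1 ≤ ξ ≤ ξ₀ and suppose f admits along γ the expansion (e, P) at rate ξ and g admits along γ̃ the expansion (ẽ, Q) at rate ξ, with P and Q nonzero polynomials. Then e = ẽ; if moreover ξ < ξ₀ then P = Q, while if ξ = ξ₀ then P and Q have the same degree and the same leading coefficient. -/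
open Filter Topology Polynomial

noncomputable section

lemma ev_ge_extract' {p : ℝ → Prop} (h : ∀ᶠ y in 𝓝[≥] (0:ℝ), p y) :
    ∃ δ > (0:ℝ), ∀ y : ℝ, 0 ≤ y → y < δ → p y := by
  rw [Filter.eventually_iff, mem_nhdsGE_iff_exists_Ico_subset] at h
  obtain ⟨u, hu, h⟩ := h
  exact ⟨u, hu, fun y hy hyu => h ⟨hy, hyu⟩⟩


lemma ev_gt_iff {p : ℝ → Prop} :
    (∀ᶠ y in 𝓝[>] (0:ℝ), p y) ↔ ∃ δ > (0:ℝ), ∀ y : ℝ, 0 < y → y < δ → p y := by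
  rw [Filter.eventually_iff, mem_nhdsGT_iff_exists_Ioo_subset]
  constructor
  · rintro ⟨u, hu, h⟩
    exact ⟨u, hu, fun y hy hyu => h ⟨hy, hyu⟩⟩
  · rintro ⟨δ, hδ, h⟩
    exact ⟨δ, hδ, fun y hy => h y hy.1 hy.2⟩

lemma ev_ge_extract {p : ℝ → Prop} (h : ∀ᶠ y in 𝓝[≥] (0:ℝ), p y) :
    ∃ δ > (0:ℝ), ∀ y : ℝ, 0 ≤ y → y < δ → p y := by
  rw [Filter.eventually_iff, mem_nhdsGE_iff_exists_Ico_subset] at h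
  obtain ⟨u, hu, h⟩ := h
  exact ⟨u, hu, fun y hy hyu => h ⟨hy, hyu⟩⟩

lemma ev_lt {r : ℝ} (hr : 0 < r) : ∀ᶠ y in 𝓝[>] (0:ℝ), y < r :=
  ev_gt_iff.2 ⟨r, hr, fun _ _ h => h⟩

lemma poly_bound (Q : Polynomial ℝ) (A : ℝ) :
    ∃ M > (0:ℝ), ∀ x : ℝ, |x| ≤ A → |Q.eval x| ≤ M := by
  obtain ⟨M, hM⟩ := (isCompact_Icc (a := -A) (b := A)).exists_bound_of_continuousOn
    (Q.continuous).continuousOn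
  refine ⟨max M 1, lt_of_lt_of_le one_pos (le_max_right _ _), fun x hx => ?_⟩
  have := hM x (by rw [Set.mem_Icc]; constructor <;> [linarith [abs_le.1 hx]; linarith [abs_le.1 hx]])
  calc |Q.eval x| = ‖Q.eval x‖ := rfl
  _ ≤ M := this
  _ ≤ max M 1 := le_max_left _ _

lemma poly_ucont (Q : Polynomial ℝ) (A : ℝ) :
    ∀ ε > (0:ℝ), ∃ δ > (0:ℝ), ∀ x y : ℝ, |x| ≤ A → |y| ≤ A → |x - y| ≤ δ →
      |Q.eval x - Q.eval y| ≤ ε := by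
  intro ε hε
  have hc : UniformContinuousOn (fun x => Q.eval x) (Set.Icc (-A) A) :=
    (isCompact_Icc).uniformContinuousOn_of_continuous (Q.continuous).continuousOn
  rw [Metric.uniformContinuousOn_iff] at hc
  obtain ⟨δ, hδ, h⟩ := hc ε hε
  refine ⟨δ/2, by linarith, fun x y hx hy hxy => ?_⟩
  have hx' : x ∈ Set.Icc (-A) A := by rw [Set.mem_Icc]; exact ⟨by linarith [abs_le.1 hx], (abs_le.1 hx).2⟩
  have hy' : y ∈ Set.Icc (-A) A := by rw [Set.mem_Icc]; exact ⟨by linarith [abs_le.1 hy], (abs_le.1 hy).2⟩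
  have := h x hx' y hy' (by rw [Real.dist_eq]; linarith)
  rw [Real.dist_eq] at this
  linarith

lemma rpow_tendsto_zero {a : ℝ} (ha : 0 < a) :
    Tendsto (fun y : ℝ => y ^ a) (𝓝[>] (0:ℝ)) (𝓝 0) := by
  have := (Real.continuousAt_rpow_const 0 a (Or.inr ha.le)).tendsto
  rw [Real.zero_rpow ha.ne'] at this
  exact this.mono_left nhdsWithin_le_nhds

lemma exists_eval_ne {P : Polynomial ℝ} (hP : P ≠ 0) : ∃ z : ℝ, P.eval z ≠ 0 := by
  by_contra h
  push_neg at h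
  exact hP (Polynomial.funext (fun r => by simp [h r]))

lemma diffeo_est (σ : ℝ × ℝ → ℝ × ℝ) (hσ : IsC1DiffeoGerm σ)
    (hDσ : fderiv ℝ σ 0 = ContinuousLinearMap.id ℝ (ℝ × ℝ)) :
    ∀ ε > (0:ℝ), ∃ δ > (0:ℝ), ∀ p q : ℝ × ℝ, ‖p‖ < δ → ‖q‖ < δ →
      ‖σ q - σ p - (q - p)‖ ≤ ε * ‖q - p‖ := by
  obtain ⟨h0, U, V, τ, hU, hV, hU0, hV0, _, _, _, _, hC1, _⟩ := hσ
  intro ε hε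
  have hdiff : ∀ x ∈ U, HasFDerivAt σ (fderiv ℝ σ x) x := fun x hx =>
    ((hC1.contDiffAt (hU.mem_nhds hx)).differentiableAt one_ne_zero).hasFDerivAt
  have hcont : ContinuousOn (fderiv ℝ σ) U := hC1.continuousOn_fderiv_of_isOpen hU le_rfl
  have hat : ContinuousAt (fderiv ℝ σ) 0 := hcont.continuousAt (hU.mem_nhds hU0)
  rw [Metric.continuousAt_iff] at hat
  obtain ⟨δ₁, hδ₁, h₁⟩ := hat ε hε
  obtain ⟨δ₂, hδ₂, h₂⟩ := Metric.isOpen_iff.1 hU 0 hU0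
  refine ⟨min δ₁ δ₂, lt_min hδ₁ hδ₂, fun p q hp hq => ?_⟩
  set s := Metric.ball (0 : ℝ × ℝ) (min δ₁ δ₂) with hs
  have hsU : s ⊆ U := fun x hx => h₂ (Metric.mem_ball.2 (lt_of_lt_of_le (Metric.mem_ball.1 hx) (min_le_right _ _)))
  have key : ∀ x ∈ s, HasFDerivWithinAt (fun x => σ x - x)
      (fderiv ℝ σ x - ContinuousLinearMap.id ℝ (ℝ × ℝ)) s x := by
    intro x hx
    exact ((hdiff x (hsU hx)).sub (hasFDerivAt_id x)).hasFDerivWithinAt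
  have hbound : ∀ x ∈ s, ‖fderiv ℝ σ x - ContinuousLinearMap.id ℝ (ℝ × ℝ)‖ ≤ ε := by
    intro x hx
    have hx1 : dist x 0 < δ₁ := lt_of_lt_of_le (Metric.mem_ball.1 hx) (min_le_left _ _)
    have := h₁ hx1
    rw [dist_eq_norm, hDσ] at this
    exact this.le
  have hps : p ∈ s := by simpa [hs, Metric.mem_ball, dist_eq_norm] using hp
  have hqs : q ∈ s := by simpa [hs, Metric.mem_ball, dist_eq_norm] using hq
  have := (convex_ball (0 : ℝ × ℝ) (min δ₁ δ₂)).norm_image_sub_le_of_norm_hasFDerivWithin_le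
    key hbound hps hqs
  have heq : σ q - q - (σ p - p) = σ q - σ p - (q - p) := by abel
  rw [heq] at this
  exact this

lemma branch_lipschitz {lam : ℝ → ℝ} (h : AllowableBranch lam) :
    ∃ L > (0:ℝ), ∃ δ > (0:ℝ), ∀ y₁ y₂ : ℝ, y₁ ∈ Set.Ioo (0:ℝ) δ → y₂ ∈ Set.Ioo (0:ℝ) δ →
      |lam y₁ - lam y₂| ≤ L * |y₁ - y₂| := by
  obtain ⟨N, μ, hN, hμa, hμ0, heq, C, hC, hbd⟩ := h
  obtain ⟨δ₁, hδ₁, heq'⟩ := ev_ge_extract' heq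
  obtain ⟨δ₂, hδ₂, hbd'⟩ := ev_ge_extract' hbd
  have hNR : (0:ℝ) < (N:ℝ) := by exact_mod_cast hN
  have hNne : ((N:ℝ))⁻¹ ≠ 0 := inv_ne_zero hNR.ne'
  have hNinvpos : (0:ℝ) < (N:ℝ)⁻¹ := inv_pos.2 hNR
  -- t ↦ (t^N)^(N⁻¹) = t for t ≥ 0
  have hroot : ∀ t : ℝ, 0 ≤ t → ((t ^ N : ℝ)) ^ ((N:ℝ)⁻¹) = t := by
    intro t ht
    rw [← Real.rpow_natCast t N, ← Real.rpow_mul ht, mul_inv_cancel₀ hNR.ne', Real.rpow_one]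
  -- bound |μ t| ≤ C t^N for small t ≥ 0
  set δ₃ : ℝ := min 1 (min δ₁ δ₂) with hδ₃def
  have hδ₃ : 0 < δ₃ := lt_min one_pos (lt_min hδ₁ hδ₂)
  have hμbd : ∀ t : ℝ, 0 ≤ t → t < δ₃ → |μ t| ≤ C * t ^ N := by
    intro t ht htδ
    have ht1 : t < 1 := lt_of_lt_of_le htδ (min_le_left _ _)
    have htN : t ^ N ≤ t := by
      calc t ^ N ≤ t ^ 1 := pow_le_pow_of_le_one ht ht1.le hN
      _ = t := pow_one t
    have htNlt : t ^ N < min δ₁ δ₂ := lt_of_le_of_lt htN (lt_of_lt_of_le htδ (min_le_right _ _))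
    have h1 : lam (t ^ N) = μ ((t ^ N : ℝ) ^ ((N:ℝ)⁻¹)) :=
      heq' _ (pow_nonneg ht N) (lt_of_lt_of_le htNlt (min_le_left _ _))
    have h2 : |lam (t ^ N)| ≤ C * t ^ N :=
      hbd' _ (pow_nonneg ht N) (lt_of_lt_of_le htNlt (min_le_right _ _))
    rwa [h1, hroot t ht] at h2
  rcases eq_or_ne (analyticOrderAt μ 0) ⊤ with hord | hord
  · -- μ vanishes identically near 0
    have hz := analyticOrderAt_eq_top.1 hord
    obtain ⟨ρ, hρ, hzero⟩ := Metric.eventually_nhds_iff.1 hz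
    refine ⟨1, one_pos, min δ₁ (ρ ^ N), lt_min hδ₁ (pow_pos hρ N), fun y₁ y₂ h₁ h₂ => ?_⟩
    have key : ∀ y : ℝ, y ∈ Set.Ioo (0:ℝ) (min δ₁ (ρ ^ N)) → lam y = 0 := by
      intro y hy
      have hy0 : (0:ℝ) ≤ y := hy.1.le
      have h1 : lam y = μ (y ^ ((N:ℝ)⁻¹)) := heq' y hy0 (lt_of_lt_of_le hy.2 (min_le_left _ _))
      have hyr : y ^ ((N:ℝ)⁻¹) < ρ := by
        have : y < ρ ^ N := lt_of_lt_of_le hy.2 (min_le_right _ _)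
        have hlt : y ^ ((N:ℝ)⁻¹) < ((ρ ^ N : ℝ)) ^ ((N:ℝ)⁻¹) :=
          Real.rpow_lt_rpow hy0 this hNinvpos
        rwa [hroot ρ hρ.le] at hlt
      have : μ (y ^ ((N:ℝ)⁻¹)) = 0 := by
        apply hzero
        rw [Real.dist_eq, sub_zero, abs_of_nonneg (Real.rpow_nonneg hy0 _)]
        exact hyr
      rw [h1, this]
    rw [key y₁ h₁, key y₂ h₂]
    simp [abs_nonneg]
  · -- finite order k : μ t = t^k * g t, k ≥ N
    obtain ⟨k, hk⟩ := Option.ne_none_iff_exists'.1 hord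
    obtain ⟨g, hga, hg0, hev⟩ := (hμa.analyticOrderAt_eq_natCast (n := k)).1 hk
    obtain ⟨ρ, hρ, hev'⟩ := Metric.eventually_nhds_iff.1 hev
    -- k ≥ N
    have hkN : N ≤ k := by
      by_contra hlt
      push_neg at hlt
      have hgc : ContinuousAt g 0 := hga.continuousAt
      have htend : Tendsto (fun t : ℝ => |g t|) (𝓝[>] 0) (𝓝 |g 0|) :=
        ((continuous_abs.continuousAt).comp hgc).tendsto.mono_left nhdsWithin_le_nhds
      have htend0 : Tendsto (fun t : ℝ => C * t ^ (N - k)) (𝓝[>] (0:ℝ)) (𝓝 0) := by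
        have : Tendsto (fun t : ℝ => t ^ (N - k)) (𝓝 (0:ℝ)) (𝓝 ((0:ℝ) ^ (N - k))) :=
          (continuous_pow (N - k)).continuousAt
        rw [zero_pow (by omega : N - k ≠ 0)] at this
        simpa using (this.const_mul C).mono_left nhdsWithin_le_nhds
      have hevle : ∀ᶠ t in 𝓝[>] (0:ℝ), |g t| ≤ C * t ^ (N - k) := by
        rw [Filter.eventually_iff, mem_nhdsGT_iff_exists_Ioo_subset]
        refine ⟨min δ₃ ρ, lt_min hδ₃ hρ, fun t ht => ?_⟩
        obtain ⟨ht0, htlt⟩ := ht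
        have h1 : μ t = t ^ k * g t := by
          have hd : dist t (0:ℝ) < ρ := by
            rw [Real.dist_eq, sub_zero, abs_of_pos ht0]; exact lt_of_lt_of_le htlt (min_le_right _ _)
          have := hev' hd
          simpa [sub_zero, smul_eq_mul] using this
        have h2 : |μ t| ≤ C * t ^ N := hμbd t ht0.le (lt_of_lt_of_le htlt (min_le_left _ _))
        rw [h1, abs_mul, abs_pow, abs_of_pos ht0] at h2
        have hkpos : (0:ℝ) < t ^ k := pow_pos ht0 k
        have hsplit : t ^ N = t ^ k * t ^ (N - k) := by
          rw [← pow_add]; congr 1; omega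
        rw [hsplit, ← mul_assoc] at h2
        have h2' : t ^ k * |g t| ≤ t ^ k * (C * t ^ (N - k)) := by
          calc t ^ k * |g t| ≤ C * t ^ k * t ^ (N - k) := h2
          _ = t ^ k * (C * t ^ (N - k)) := by ring
        exact (mul_le_mul_iff_of_pos_left hkpos).1 h2'
      have : |g 0| ≤ 0 := le_of_tendsto_of_tendsto htend htend0 hevle
      exact hg0 (abs_nonpos_iff.mp (by linarith [abs_nonneg (g 0)]) )
    -- now build the Lipschitz bound
    set b : ℝ := (N:ℝ)⁻¹ with hbdef
    set a : ℝ := (N:ℝ)⁻¹ * k with hadef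
    have hb0 : 0 < b := hNinvpos
    have hb1 : b ≤ 1 := by
      rw [hbdef]
      have : (1:ℝ) ≤ (N:ℝ) := by exact_mod_cast hN
      exact inv_le_one_of_one_le₀ this
    have ha1 : 1 ≤ a := by
      rw [hadef]
      rw [inv_mul_eq_div, le_div_iff₀ hNR, one_mul]
      exact_mod_cast hkN
    -- regularity data for g near 0
    have hgcd : ContDiffAt ℝ 1 g 0 := hga.contDiffAt
    obtain ⟨u, hu, hcd⟩ := hgcd.contDiffOn le_rfl (by simp)
    obtain ⟨r, hr, hball⟩ := Metric.mem_nhds_iff.1 hu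
    have hcd' : ContDiffOn ℝ 1 g (Metric.ball (0:ℝ) r) := hcd.mono hball
    have hgd : ∀ t : ℝ, t ∈ Metric.ball (0:ℝ) r → DifferentiableAt ℝ g t := by
      intro t ht
      exact ((hcd'.differentiableOn one_ne_zero).differentiableAt (Metric.isOpen_ball.mem_nhds ht))
    have hdc : ContinuousOn (deriv g) (Metric.ball (0:ℝ) r) :=
      hcd'.continuousOn_deriv_of_isOpen Metric.isOpen_ball le_rfl
    have hr2 : (0:ℝ) < r/2 := by linarith
    have hsub : Metric.closedBall (0:ℝ) (r/2) ⊆ Metric.ball (0:ℝ) r := by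
      intro x hx
      rw [Metric.mem_closedBall] at hx
      rw [Metric.mem_ball]
      linarith
    obtain ⟨M₁', hM₁'⟩ := (isCompact_closedBall (0:ℝ) (r/2)).exists_bound_of_continuousOn
      ((hcd'.continuousOn).mono hsub)
    obtain ⟨M₂', hM₂'⟩ := (isCompact_closedBall (0:ℝ) (r/2)).exists_bound_of_continuousOn
      (hdc.mono hsub)
    set M₁ : ℝ := max M₁' 1 with hM₁def
    set M₂ : ℝ := max M₂' 0 with hM₂def
    have hM₁pos : (0:ℝ) < M₁ := lt_of_lt_of_le one_pos (le_max_right _ _)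
    have hM₂nn : (0:ℝ) ≤ M₂ := le_max_right _ _
    -- the working interval
    set s0 : ℝ := min (r/2) ρ with hs0def
    have hs0 : 0 < s0 := lt_min hr2 hρ
    set δ' : ℝ := min δ₁ (min 1 (s0 ^ N)) with hδ'def
    have hδ' : 0 < δ' := lt_min hδ₁ (lt_min one_pos (pow_pos hs0 N))
    -- root bounds on the interval
    have hmem : ∀ y : ℝ, y ∈ Set.Ioo (0:ℝ) δ' → 0 < y ∧ y ≤ 1 ∧ y ^ b < s0 := by
      intro y hy
      obtain ⟨hy0, hyδ⟩ := hy
      refine ⟨hy0, le_of_lt (lt_of_lt_of_le hyδ (le_trans (min_le_right _ _) (min_le_left _ _))), ?_⟩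
      have : y < s0 ^ N := lt_of_lt_of_le hyδ (le_trans (min_le_right _ _) (min_le_right _ _))
      have hlt : y ^ b < ((s0 ^ N : ℝ)) ^ ((N:ℝ)⁻¹) := Real.rpow_lt_rpow hy0.le this hNinvpos
      rwa [hroot s0 hs0.le] at hlt
    -- lam y = y^a * g (y^b) on the interval
    have hF : ∀ y : ℝ, y ∈ Set.Ioo (0:ℝ) δ' → lam y = y ^ a * g (y ^ b) := by
      intro y hy
      obtain ⟨hy0, hy1, hyb⟩ := hmem y hy
      have h1 : lam y = μ (y ^ b) :=
        heq' y hy0.le (lt_of_lt_of_le hy.2 (min_le_left _ _))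
      have hd : dist (y ^ b) (0:ℝ) < ρ := by
        rw [Real.dist_eq, sub_zero, abs_of_nonneg (Real.rpow_nonneg hy0.le _)]
        exact lt_of_lt_of_le hyb (min_le_right _ _)
      have h2 : μ (y ^ b) = (y ^ b) ^ k * g (y ^ b) := by
        have := hev' hd
        simpa [sub_zero, smul_eq_mul] using this
      have h3 : (y ^ b) ^ k = y ^ a := by
        rw [← Real.rpow_natCast (y ^ b) k, ← Real.rpow_mul hy0.le, hadef]
      rw [h1, h2, h3]
    -- derivative of F
    set F' : ℝ → ℝ := fun y =>
      a * y ^ (a - 1) * g (y ^ b) + y ^ a * (deriv g (y ^ b) * (b * y ^ (b - 1))) with hF'def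
    have hFder : ∀ y ∈ Set.Ioo (0:ℝ) δ',
        HasDerivWithinAt (fun y : ℝ => y ^ a * g (y ^ b)) (F' y) (Set.Ioo (0:ℝ) δ') y := by
      intro y hy
      obtain ⟨hy0, hy1, hyb⟩ := hmem y hy
      have h1 : HasDerivAt (fun y : ℝ => y ^ a) (a * y ^ (a - 1)) y :=
        Real.hasDerivAt_rpow_const (Or.inl hy0.ne')
      have h2 : HasDerivAt (fun y : ℝ => y ^ b) (b * y ^ (b - 1)) y :=
        Real.hasDerivAt_rpow_const (Or.inl hy0.ne')
      have hmemball : y ^ b ∈ Metric.ball (0:ℝ) r := by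
        rw [Metric.mem_ball, Real.dist_eq, sub_zero, abs_of_nonneg (Real.rpow_nonneg hy0.le _)]
        exact lt_of_lt_of_le hyb (le_trans (min_le_left _ _) (by linarith))
      have h3 : HasDerivAt g (deriv g (y ^ b)) (y ^ b) := (hgd _ hmemball).hasDerivAt
      have h4 : HasDerivAt (fun y : ℝ => g (y ^ b)) (deriv g (y ^ b) * (b * y ^ (b - 1))) y :=
        h3.comp y h2
      exact ((h1.mul h4).hasDerivWithinAt)
    -- bound on the derivative
    set L : ℝ := a * M₁ + M₂ * b with hLdef
    have hLpos : 0 < L := by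
      have : (0:ℝ) < a * M₁ := mul_pos (by linarith) hM₁pos
      nlinarith [mul_nonneg hM₂nn hb0.le]
    have hFbd : ∀ y ∈ Set.Ioo (0:ℝ) δ', ‖F' y‖ ≤ L := by
      intro y hy
      obtain ⟨hy0, hy1, hyb⟩ := hmem y hy
      have hybcb : y ^ b ∈ Metric.closedBall (0:ℝ) (r/2) := by
        rw [Metric.mem_closedBall, Real.dist_eq, sub_zero,
          abs_of_nonneg (Real.rpow_nonneg hy0.le _)]
        exact le_of_lt (lt_of_lt_of_le hyb (min_le_left _ _))
      have hgb : |g (y ^ b)| ≤ M₁ := le_trans (hM₁' _ hybcb) (le_max_left _ _)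
      have hdb : |deriv g (y ^ b)| ≤ M₂ := le_trans (hM₂' _ hybcb) (le_max_left _ _)
      have hya1 : y ^ (a - 1) ≤ 1 := Real.rpow_le_one hy0.le hy1 (by linarith)
      have hcomb : y ^ a * y ^ (b - 1) ≤ 1 := by
        rw [← Real.rpow_add hy0]
        exact Real.rpow_le_one hy0.le hy1 (by linarith)
      have hterm1 : |a * y ^ (a - 1) * g (y ^ b)| ≤ a * M₁ := by
        rw [abs_mul, abs_mul, abs_of_nonneg (by linarith : (0:ℝ) ≤ a),
          abs_of_nonneg (Real.rpow_nonneg hy0.le _)]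
        calc a * y ^ (a-1) * |g (y ^ b)| ≤ a * 1 * M₁ := by
              apply mul_le_mul _ hgb (abs_nonneg _) (by positivity)
              exact mul_le_mul_of_nonneg_left hya1 (by linarith)
        _ = a * M₁ := by ring
      have hterm2 : |y ^ a * (deriv g (y ^ b) * (b * y ^ (b - 1)))| ≤ M₂ * b := by
        rw [abs_mul, abs_mul, abs_mul, abs_of_nonneg (Real.rpow_nonneg hy0.le _),
          abs_of_nonneg (Real.rpow_nonneg hy0.le _), abs_of_nonneg hb0.le]
        calc y ^ a * (|deriv g (y ^ b)| * (b * y ^ (b-1)))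
            = (|deriv g (y ^ b)| * b) * (y ^ a * y ^ (b-1)) := by ring
        _ ≤ (M₂ * b) * 1 := by
              apply mul_le_mul _ hcomb (by positivity) (by positivity)
              exact mul_le_mul_of_nonneg_right hdb hb0.le
        _ = M₂ * b := by ring
      calc ‖F' y‖ = |F' y| := rfl
      _ ≤ |a * y ^ (a - 1) * g (y ^ b)| + |y ^ a * (deriv g (y ^ b) * (b * y ^ (b - 1)))| :=
          abs_add_le _ _
      _ ≤ a * M₁ + M₂ * b := add_le_add hterm1 hterm2
    refine ⟨L, hLpos, δ', hδ', fun y₁ y₂ h₁ h₂ => ?_⟩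
    have := (convex_Ioo (0:ℝ) δ').norm_image_sub_le_of_norm_hasDerivWithin_le hFder hFbd h₂ h₁
    rw [hF y₁ h₁, hF y₂ h₂]
    exact this

set_option maxHeartbeats 1600000 in
lemma main_comparison
    (σ : ℝ × ℝ → ℝ × ℝ) (hσ0 : σ 0 = 0)
    (hσd : ∀ ε > (0:ℝ), ∃ δ > (0:ℝ), ∀ p q : ℝ × ℝ, ‖p‖ < δ → ‖q‖ < δ →
      ‖σ q - σ p - (q - p)‖ ≤ ε * ‖q - p‖)
    (f g : ℝ × ℝ → ℝ) (hfg : ∀ᶠ p in 𝓝 (0 : ℝ × ℝ), f p = g (σ p))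
    (lam lam' : ℝ → ℝ)
    (C₁ : ℝ) (hC₁ : 0 < C₁) (hlam : ∀ᶠ y in 𝓝[>] (0:ℝ), |lam y| ≤ C₁ * y)
    (L δL : ℝ) (hL : 0 < L) (hδL : 0 < δL)
    (hlip : ∀ y₁ y₂ : ℝ, y₁ ∈ Set.Ioo (0:ℝ) δL → y₂ ∈ Set.Ioo (0:ℝ) δL →
      |lam' y₁ - lam' y₂| ≤ L * |y₁ - y₂|)
    (ξ₀ N : ℝ) (hξ₀ : 1 ≤ ξ₀) (hN : 0 < N)
    (hincl : ∀ᶠ y in 𝓝[>] (0 : ℝ), σ (lam y, y) ∈ Horn ξ₀ lam' N)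
    (ξ : ℝ) (hξ1 : 1 ≤ ξ) (hξ2 : ξ ≤ ξ₀)
    (e e' : ℝ) (P Q : Polynomial ℝ)
    (hPexp : AdmitsExpansion f lam ξ e P) (hQexp : AdmitsExpansion g lam' ξ e' Q) :
    ∃ M > (0:ℝ), ∃ c : ℝ → ℝ,
      (∀ᶠ y in 𝓝[>] (0:ℝ), |c y| ≤ M * y ^ (ξ₀ - ξ)) ∧
      ∀ R ≥ (1:ℝ), ∀ ε > (0:ℝ), ∀ᶠ y in 𝓝[>] (0:ℝ),
        ∀ z : ℝ, |z| ≤ R →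
          |P.eval z * y ^ e - Q.eval (z + c y) * y ^ e'| ≤ ε * (y ^ e + y ^ e') := by
  have hξ0' : (0:ℝ) ≤ ξ := by linarith
  have hξ₀0 : (0:ℝ) ≤ ξ₀ := by linarith
  set c : ℝ → ℝ := fun y => ((σ (lam y, y)).1 - lam' ((σ (lam y, y)).2)) / y ^ ξ with hcdef
  set M : ℝ := N * 2 ^ (ξ₀ : ℝ) with hMdef
  have h2ξ₀ : (0:ℝ) < 2 ^ (ξ₀ : ℝ) := Real.rpow_pos_of_pos two_pos ξ₀
  have hMpos : 0 < M := mul_pos hN h2ξ₀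
  set K : ℝ := C₁ + 1 with hKdef
  have hKpos : (0:ℝ) < K := by linarith
  have hKne : K ≠ 0 := ne_of_gt hKpos
  clear_value c M K
  obtain ⟨δσ₂, hδσ₂, hσ₂⟩ := hσd (1/(2*K)) (by positivity)
  -- the bound on c
  have hc : ∀ᶠ y in 𝓝[>] (0:ℝ), |c y| ≤ M * y ^ (ξ₀ - ξ) := by
    filter_upwards [self_mem_nhdsWithin, hlam, hincl,
      ev_lt (show (0:ℝ) < δσ₂/K by positivity)] with y hy0 hlamy hhorn hyδ
    rw [Set.mem_Ioi] at hy0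
    have ht0 : (0:ℝ) < y ^ ξ := Real.rpow_pos_of_pos hy0 ξ
    have hn0 : ‖((lam y, y) : ℝ × ℝ)‖ ≤ K * y := by
      rw [Prod.norm_def]
      apply max_le
      · simp only [Real.norm_eq_abs]; nlinarith
      · simp only [Real.norm_eq_abs, abs_of_pos hy0]; nlinarith
    have hn0δ : ‖((lam y, y) : ℝ × ℝ)‖ < δσ₂ := by
      apply lt_of_le_of_lt hn0
      have := (lt_div_iff₀ hKpos).1 hyδ
      nlinarith
    -- σ estimate at (lam y, y)
    have hz0 : ‖(0 : ℝ × ℝ)‖ < δσ₂ := by simpa using hδσ₂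
    have est := hσ₂ 0 (lam y, y) hz0 hn0δ
    simp only [hσ0, sub_zero] at est
    have est2 : ‖σ (lam y, y) - (lam y, y)‖ ≤ 1/(2*K) * (K * y) := by
      calc ‖σ (lam y, y) - (lam y, y)‖ ≤ 1/(2*K) * ‖((lam y, y) : ℝ × ℝ)‖ := est
      _ ≤ 1/(2*K) * (K * y) := by gcongr
    have hhalf : 1/(2*K) * (K * y) = y/2 := by field_simp
    rw [hhalf] at est2
    have hty : |(σ (lam y, y)).2 - y| ≤ y/2 := by
      have h := norm_snd_le (σ (lam y, y) - (lam y, y))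
      rw [Prod.snd_sub] at h
      calc |(σ (lam y, y)).2 - y| = ‖(σ (lam y, y)).2 - y‖ := rfl
      _ ≤ ‖σ (lam y, y) - (lam y, y)‖ := h
      _ ≤ y/2 := est2
    have hty2 : (σ (lam y, y)).2 ≤ 2*y := by
      have := (abs_le.1 hty).2; linarith
    have hhorn1 : 0 < (σ (lam y, y)).2 := hhorn.1
    have hhorn2 : |(σ (lam y, y)).1 - lam' ((σ (lam y, y)).2)| ≤ N * (σ (lam y, y)).2 ^ ξ₀ :=
      hhorn.2
    have hstep : (σ (lam y, y)).2 ^ ξ₀ ≤ 2 ^ (ξ₀:ℝ) * y ^ ξ₀ := by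
      calc (σ (lam y, y)).2 ^ ξ₀ ≤ (2*y) ^ ξ₀ := Real.rpow_le_rpow hhorn1.le hty2 hξ₀0
      _ = 2 ^ (ξ₀:ℝ) * y ^ ξ₀ := Real.mul_rpow (by norm_num) hy0.le
    calc |c y| = |(σ (lam y, y)).1 - lam' ((σ (lam y, y)).2)| / y ^ ξ := by
          simp only [hcdef]
          rw [abs_div, abs_of_pos ht0]
    _ ≤ (N * ((σ (lam y, y)).2 ^ ξ₀)) / y ^ ξ := by gcongr
    _ ≤ (N * (2 ^ (ξ₀:ℝ) * y ^ ξ₀)) / y ^ ξ := by gcongr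
    _ = M * (y ^ ξ₀ / y ^ ξ) := by rw [hMdef]; ring
    _ = M * y ^ (ξ₀ - ξ) := by rw [← Real.rpow_sub hy0]
  refine ⟨M, hMpos, c, hc, ?_⟩
  intro R hR ε hε
  have hRpos : (0:ℝ) < R := by linarith
  set K' : ℝ := C₁ + R + 1 with hK'def
  have hK'pos : (0:ℝ) < K' := by linarith
  have hK'1 : (1:ℝ) ≤ K' := by linarith
  set R' : ℝ := R + M + 2 with hR'def
  have hR'pos : (0:ℝ) < R' := by linarith
  obtain ⟨MQ, hMQ, hMQb⟩ := poly_bound Q (R' + 1)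
  obtain ⟨η₁, hη₁, hη₁b⟩ := poly_ucont Q (R' + 1) (ε/8) (by positivity)
  set η₁' : ℝ := min η₁ 1 with hη₁'def
  have hη₁'pos : 0 < η₁' := lt_min hη₁ one_pos
  have hcont2 : ContinuousAt (fun u : ℝ => u ^ e') 1 :=
    Real.continuousAt_rpow_const 1 e' (Or.inl one_ne_zero)
  rw [Metric.continuousAt_iff] at hcont2
  obtain ⟨η₂, hη₂, hη₂b⟩ := hcont2 (min 1 (ε/(8*MQ))) (by positivity)
  have hcont3 : ContinuousAt (fun u : ℝ => u ^ ξ) 1 :=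
    Real.continuousAt_rpow_const 1 ξ (Or.inl one_ne_zero)
  rw [Metric.continuousAt_iff] at hcont3
  obtain ⟨η₃, hη₃, hη₃b⟩ := hcont3 (min 1 (η₁'/(2*(R+M+1)))) (by positivity)
  set ε₁ : ℝ := min (min (1/2) (min η₂ η₃) / (2*(K'+R) + 1)) (η₁' / (4*R*(1+L) + 1))
    with hε₁def
  have hmm : (0:ℝ) < min (1/2) (min η₂ η₃) := lt_min (by norm_num) (lt_min hη₂ hη₃)
  have hε₁pos : 0 < ε₁ := lt_min (by positivity) (by positivity)
  clear_value K' R' η₁' ε₁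
  obtain ⟨δσ, hδσ, hσδ⟩ := hσd ε₁ hε₁pos
  obtain ⟨δQ, hδQ, hQb⟩ := ev_gt_iff.1 (hQexp R' hR'pos (ε/8) (by positivity))
  obtain ⟨r₀, hr₀, hgerm⟩ := Metric.eventually_nhds_iff.1 hfg
  filter_upwards [self_mem_nhdsWithin, hlam, hincl, hc,
    hPexp R hRpos (ε/8) (by positivity),
    ev_lt one_pos, ev_lt (show (0:ℝ) < δσ/K' by positivity),
    ev_lt (show (0:ℝ) < δQ/2 by positivity),
    ev_lt (show (0:ℝ) < r₀/K' by positivity),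
    ev_lt (show (0:ℝ) < δL/2 by positivity)]
    with y hy0 hlamy hhorn hcy hPy hy1 hyδσ hyδQ hyr₀ hyδL
  rw [Set.mem_Ioi] at hy0
  intro z hz
  have hye : (0:ℝ) < y ^ e := Real.rpow_pos_of_pos hy0 e
  have hye' : (0:ℝ) < y ^ e' := Real.rpow_pos_of_pos hy0 e'
  have ht0 : (0:ℝ) < y ^ ξ := Real.rpow_pos_of_pos hy0 ξ
  have hty : y ^ ξ ≤ y := by
    calc y ^ ξ ≤ y ^ (1:ℝ) := Real.rpow_le_rpow_of_exponent_ge hy0 hy1.le hξ1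
    _ = y := Real.rpow_one y
  -- points and basic norms
  have hzt : |z * y ^ ξ| ≤ R * y ^ ξ := by
    rw [abs_mul, abs_of_pos ht0]; gcongr
  have hCK : C₁ + R ≤ K' := by rw [hK'def]; linarith
  have hn0 : ‖((lam y, y) : ℝ × ℝ)‖ ≤ K' * y := by
    rw [Prod.norm_def]
    apply max_le
    · simp only [Real.norm_eq_abs]
      calc |lam y| ≤ C₁ * y := hlamy
      _ ≤ K' * y := mul_le_mul_of_nonneg_right (by linarith) hy0.le
    · simp only [Real.norm_eq_abs, abs_of_pos hy0]
      exact le_mul_of_one_le_left hy0.le hK'1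
  have hnz : ‖((lam y + z * y ^ ξ, y) : ℝ × ℝ)‖ ≤ K' * y := by
    rw [Prod.norm_def]
    apply max_le
    · simp only [Real.norm_eq_abs]
      have h2 : R * y ^ ξ ≤ R * y := by gcongr
      calc |lam y + z * y ^ ξ| ≤ |lam y| + |z * y ^ ξ| := abs_add_le _ _
      _ ≤ C₁ * y + R * y := by linarith [hlamy, hzt]
      _ = (C₁ + R) * y := by ring
      _ ≤ K' * y := mul_le_mul_of_nonneg_right hCK hy0.le
    · simp only [Real.norm_eq_abs, abs_of_pos hy0]
      exact le_mul_of_one_le_left hy0.le hK'1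
  have hKy : K' * y < δσ := by
    have h := (lt_div_iff₀ hK'pos).1 hyδσ
    calc K' * y = y * K' := mul_comm _ _
    _ < δσ := h
  have hn0δ : ‖((lam y, y) : ℝ × ℝ)‖ < δσ := lt_of_le_of_lt hn0 hKy
  have hnzδ : ‖((lam y + z * y ^ ξ, y) : ℝ × ℝ)‖ < δσ := lt_of_le_of_lt hnz hKy
  -- σ estimates
  have hz0 : ‖(0 : ℝ × ℝ)‖ < δσ := by simpa using hδσ
  have est2 : ‖σ (lam y, y) - (lam y, y)‖ ≤ ε₁ * (K' * y) := by
    have h := hσδ 0 (lam y, y) hz0 hn0δ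
    simp only [hσ0, sub_zero] at h
    calc ‖σ (lam y, y) - (lam y, y)‖ ≤ ε₁ * ‖((lam y, y) : ℝ × ℝ)‖ := h
    _ ≤ ε₁ * (K' * y) := by gcongr
  have hsubp : ((lam y + z * y ^ ξ, y) : ℝ × ℝ) - (lam y, y) = (z * y ^ ξ, 0) := by
    rw [Prod.mk_sub_mk]; norm_num
  have hnsub : ‖((z * y ^ ξ, 0) : ℝ × ℝ)‖ = |z| * y ^ ξ := by
    rw [Prod.norm_def]
    simp only [Real.norm_eq_abs, abs_zero]
    rw [abs_mul, abs_of_pos ht0]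
    exact max_eq_left (by positivity)
  have est1 : ‖σ (lam y + z * y ^ ξ, y) - σ (lam y, y) - (z * y ^ ξ, 0)‖ ≤ ε₁ * (R * y ^ ξ) := by
    have h := hσδ (lam y, y) (lam y + z * y ^ ξ, y) hn0δ hnzδ
    rw [hsubp, hnsub] at h
    calc ‖σ (lam y + z * y ^ ξ, y) - σ (lam y, y) - (z * y ^ ξ, 0)‖
        ≤ ε₁ * (|z| * y ^ ξ) := h
    _ ≤ ε₁ * (R * y ^ ξ) := by gcongr
  -- coordinates
  set ty : ℝ := (σ (lam y, y)).2 with htydef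
  set tx : ℝ := (σ (lam y, y)).1 with htxdef
  set yb : ℝ := (σ (lam y + z * y ^ ξ, y)).2 with hybdef
  set xb : ℝ := (σ (lam y + z * y ^ ξ, y)).1 with hxbdef
  clear_value ty tx yb xb
  have h_ty : |ty - y| ≤ ε₁ * (K' * y) := by
    rw [htydef]
    have h := norm_snd_le (σ (lam y, y) - (lam y, y))
    rw [Prod.snd_sub] at h
    exact le_trans h est2
  have h_yb : |yb - ty| ≤ ε₁ * (R * y ^ ξ) := by
    have h := norm_snd_le (σ (lam y + z * y ^ ξ, y) - σ (lam y, y) - (z * y ^ ξ, 0))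
    have h2 : (σ (lam y + z * y ^ ξ, y) - σ (lam y, y) - ((z * y ^ ξ, 0) : ℝ × ℝ)).2
        = yb - ty := by simp [hybdef, htydef, Prod.snd_sub]
    rw [h2] at h
    exact le_trans h est1
  have h_xb : |xb - tx - z * y ^ ξ| ≤ ε₁ * (R * y ^ ξ) := by
    have h := norm_fst_le (σ (lam y + z * y ^ ξ, y) - σ (lam y, y) - (z * y ^ ξ, 0))
    have h2 : (σ (lam y + z * y ^ ξ, y) - σ (lam y, y) - ((z * y ^ ξ, 0) : ℝ × ℝ)).1
        = xb - tx - z * y ^ ξ := by simp [hxbdef, htxdef, Prod.fst_sub]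
    rw [h2] at h
    exact le_trans h est1
  -- ε₁ numeric consequences
  have hε₁a : ε₁ * (2*(K'+R) + 1) ≤ min (1/2) (min η₂ η₃) := by
    calc ε₁ * (2*(K'+R) + 1)
        ≤ (min (1/2) (min η₂ η₃) / (2*(K'+R) + 1)) * (2*(K'+R) + 1) := by
          gcongr
          rw [hε₁def]
          exact min_le_left _ _
    _ = min (1/2) (min η₂ η₃) := div_mul_cancel₀ _ (by positivity)
  have hstrict : ε₁ * (2*(K'+R)) < min (1/2) (min η₂ η₃) := by
    have hx : ε₁ * (2*(K'+R) + 1) = ε₁ * (2*(K'+R)) + ε₁ := by ring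
    linarith [hε₁a, hε₁pos, hx]
  have hKR : ε₁ * (K'+R) < 1/4 := by
    have h1 : min (1/2) (min η₂ η₃) ≤ 1/2 := min_le_left _ _
    have hx : ε₁ * (2*(K'+R)) = 2 * (ε₁ * (K'+R)) := by ring
    linarith [hstrict, h1, hx]
  have h_tyy : |ty - y| ≤ y/4 := by
    have hb1 : ε₁ * (K' * y) ≤ (1/4) * y := by
      have hb2 : ε₁ * K' ≤ ε₁ * (K'+R) :=
        mul_le_mul_of_nonneg_left (by linarith [hRpos]) hε₁pos.le
      have hb3 : (ε₁ * K') * y ≤ (1/4) * y :=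
        mul_le_mul_of_nonneg_right (by linarith [hb2, hKR]) hy0.le
      calc ε₁ * (K' * y) = (ε₁ * K') * y := by ring
      _ ≤ (1/4) * y := hb3
    linarith [h_ty, hb1]
  have h_ybyA : |yb - y| ≤ (ε₁ * (K'+R)) * y := by
    have h1 : ε₁ * (R * y ^ ξ) ≤ ε₁ * (R * y) := by gcongr
    have h2 : |yb - y| ≤ |yb - ty| + |ty - y| := abs_sub_le _ _ _
    have h3 : ε₁ * (R * y) + ε₁ * (K' * y) = (ε₁ * (K' + R)) * y := by ring
    linarith [h1, h2, h3, h_yb, h_ty]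
  have h_yby : |yb - y| ≤ y/2 := by
    have e2 : (ε₁*(K'+R))*y ≤ (1/4)*y := mul_le_mul_of_nonneg_right hKR.le hy0.le
    linarith [h_ybyA, e2, hy0]
  have hyb0 : (0:ℝ) < yb := by
    have := (abs_le.1 h_yby).1; linarith
  have hyb2y : yb ≤ 2*y := by
    have := (abs_le.1 h_yby).2; linarith
  have hybhalf : y/2 ≤ yb := by
    have := (abs_le.1 h_yby).1; linarith
  have hty0 : 0 < ty := by rw [htydef]; exact hhorn.1
  have hty2y : ty ≤ 2*y := by
    have := (abs_le.1 h_tyy).2; linarith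
  -- Horn data
  have hhorn2 : |tx - lam' ty| ≤ N * ty ^ ξ₀ := by
    rw [htxdef, htydef]; exact hhorn.2
  -- c y equation
  have hcyeq : tx - lam' ty = c y * y ^ ξ := by
    simp only [hcdef, htxdef, htydef]
    field_simp
  -- Lipschitz
  have hlipb : |lam' yb - lam' ty| ≤ L * (ε₁ * (R * y ^ ξ)) := by
    have h1 : yb ∈ Set.Ioo (0:ℝ) δL := ⟨hyb0, by linarith⟩
    have h2 : ty ∈ Set.Ioo (0:ℝ) δL := ⟨hty0, by linarith⟩
    calc |lam' yb - lam' ty| ≤ L * |yb - ty| := hlip yb ty h1 h2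
    _ ≤ L * (ε₁ * (R * y ^ ξ)) := by gcongr
  -- numerator estimate
  set E : ℝ := xb - lam' yb - (z + c y) * y ^ ξ with hEdef
  clear_value E
  have hnum : |E| ≤ ε₁ * (R * (1+L)) * y ^ ξ := by
    have heq2 : E = (xb - tx - z * y ^ ξ) + (lam' ty - lam' yb) + ((tx - lam' ty) - c y * y ^ ξ) := by
      rw [hEdef]; ring
    rw [hcyeq] at heq2
    simp only [sub_self, add_zero] at heq2
    rw [heq2]
    calc |xb - tx - z * y ^ ξ + (lam' ty - lam' yb)|
        ≤ |xb - tx - z * y ^ ξ| + |lam' ty - lam' yb| := abs_add_le _ _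
    _ ≤ ε₁ * (R * y ^ ξ) + L * (ε₁ * (R * y ^ ξ)) := by
        rw [abs_sub_comm (lam' ty)]
        exact add_le_add h_xb hlipb
    _ = ε₁ * (R * (1+L)) * y ^ ξ := by ring
  -- w
  have hybξ : (0:ℝ) < yb ^ ξ := Real.rpow_pos_of_pos hyb0 ξ
  set w : ℝ := (xb - lam' yb) / yb ^ ξ with hwdef
  clear_value w
  have hweq : lam' yb + w * yb ^ ξ = xb := by
    rw [hwdef, div_mul_cancel₀ _ (ne_of_gt hybξ)]; ring
  -- ratio bounds
  have hratyb : |yb / y - 1| < η₂ := by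
    have h1 : yb / y - 1 = (yb - y)/y := by field_simp
    rw [h1, abs_div, abs_of_pos hy0]
    have h5 : |yb - y| / y ≤ ε₁ * (K'+R) := by
      rw [div_le_iff₀ hy0]; linarith [h_ybyA]
    have h6 : ε₁ * (K'+R) < η₂ := by
      have hm : min (1/2) (min η₂ η₃) ≤ η₂ := le_trans (min_le_right _ _) (min_le_left _ _)
      have hx : ε₁ * (2*(K'+R)) = 2 * (ε₁ * (K'+R)) := by ring
      have hp : 0 < ε₁ * (K'+R) := by positivity
      linarith [hstrict, hm, hx, hp]
    linarith [h5, h6]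
  have hratyyb : |y / yb - 1| < η₃ := by
    have h1 : y / yb - 1 = (y - yb)/yb := by field_simp
    rw [h1, abs_div, abs_of_pos hyb0]
    have h2 : |y - yb| ≤ (ε₁ * (K'+R)) * y := by
      rw [abs_sub_comm]; exact h_ybyA
    have h5 : |y - yb| / yb ≤ 2 * (ε₁ * (K'+R)) := by
      rw [div_le_iff₀ hyb0]
      calc |y - yb| ≤ (ε₁ * (K'+R)) * y := h2
      _ = 2 * (ε₁ * (K'+R)) * (y/2) := by ring
      _ ≤ 2 * (ε₁ * (K'+R)) * yb := mul_le_mul_of_nonneg_left hybhalf (by positivity)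
    have h6 : 2 * (ε₁ * (K'+R)) < η₃ := by
      have hm : min (1/2) (min η₂ η₃) ≤ η₃ := le_trans (min_le_right _ _) (min_le_right _ _)
      have hx : ε₁ * (2*(K'+R)) = 2 * (ε₁ * (K'+R)) := by ring
      linarith [hstrict, hm, hx]
    linarith [h5, h6]
  have hpow3 : |(y/yb) ^ ξ - 1| ≤ min 1 (η₁'/(2*(R+M+1))) := by
    have h := hη₃b (show dist (y/yb) 1 < η₃ by rw [Real.dist_eq]; exact hratyyb)
    rw [Real.dist_eq, Real.one_rpow] at h
    exact h.le
  have hpow2 : |(yb/y) ^ e' - 1| ≤ min 1 (ε/(8*MQ)) := by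
    have h := hη₂b (show dist (yb/y) 1 < η₂ by rw [Real.dist_eq]; exact hratyb)
    rw [Real.dist_eq, Real.one_rpow] at h
    exact h.le
  -- bound c y by M
  have hMc : |c y| ≤ M := by
    calc |c y| ≤ M * y ^ (ξ₀ - ξ) := hcy
    _ ≤ M * 1 := by
        gcongr
        exact Real.rpow_le_one hy0.le hy1.le (by linarith)
    _ = M := mul_one M
  have hzc : |z + c y| ≤ R + M := by
    calc |z + c y| ≤ |z| + |c y| := abs_add_le _ _
    _ ≤ R + M := add_le_add hz hMc
  -- w decomposition
  have hdivpow : y ^ ξ / yb ^ ξ = (y/yb) ^ ξ := by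
    rw [Real.div_rpow hy0.le hyb0.le]
  have hwd : w - (z + c y) = (z + c y) * ((y/yb) ^ ξ - 1) + E / yb ^ ξ := by
    have h1 : w = ((z + c y) * y ^ ξ + E) / yb ^ ξ := by
      rw [hwdef, hEdef]; field_simp; ring
    rw [h1, ← hdivpow]
    field_simp
    ring
  have hEd : |E / yb ^ ξ| ≤ 2 * (ε₁ * (R * (1+L))) := by
    rw [abs_div, abs_of_pos hybξ, div_le_iff₀ hybξ]
    have hpow3' : (y/yb) ^ ξ ≤ 2 := by
      have := (abs_le.1 hpow3).2
      have h2 : min 1 (η₁'/(2*(R+M+1))) ≤ 1 := min_le_left _ _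
      linarith
    have h3 : y ^ ξ ≤ 2 * yb ^ ξ := by
      have h4 : (y/yb) ^ ξ = y ^ ξ / yb ^ ξ := hdivpow.symm
      rw [h4, div_le_iff₀ hybξ] at hpow3'
      linarith
    calc |E| ≤ ε₁ * (R * (1+L)) * y ^ ξ := hnum
    _ ≤ ε₁ * (R * (1+L)) * (2 * yb ^ ξ) := by gcongr
    _ = 2 * (ε₁ * (R * (1+L))) * yb ^ ξ := by ring
  have hε₁b : 2 * (ε₁ * (R * (1+L))) ≤ η₁'/2 := by
    have h1 : ε₁ ≤ η₁' / (4*R*(1+L) + 1) := by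
      rw [hε₁def]; exact min_le_right _ _
    have h2 : ε₁ * (4*R*(1+L) + 1) ≤ η₁' := by
      calc ε₁ * (4*R*(1+L) + 1) ≤ (η₁' / (4*R*(1+L) + 1)) * (4*R*(1+L) + 1) := by
            gcongr
      _ = η₁' := div_mul_cancel₀ _ (by positivity)
    have hx : ε₁ * (4*R*(1+L) + 1) = 2 * (2 * (ε₁ * (R * (1+L)))) + ε₁ := by ring
    linarith [h2, hx, hε₁pos]
  have hwzc : |w - (z + c y)| ≤ η₁' := by
    rw [hwd]
    calc |(z + c y) * ((y/yb) ^ ξ - 1) + E / yb ^ ξ|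
        ≤ |(z + c y)| * |(y/yb) ^ ξ - 1| + |E / yb ^ ξ| := by
          rw [← abs_mul]; exact abs_add_le _ _
    _ ≤ (R + M) * (η₁'/(2*(R+M+1))) + η₁'/2 := by
        apply add_le_add
        · apply mul_le_mul hzc (le_trans hpow3 (min_le_right _ _)) (abs_nonneg _)
          linarith
        · exact le_trans hEd hε₁b
    _ ≤ η₁'/2 + η₁'/2 := by
        refine add_le_add ?_ le_rfl
        rw [mul_div_assoc', div_le_div_iff₀ (by positivity : (0:ℝ) < 2*(R+M+1)) (by norm_num : (0:ℝ) < 2)]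
        have hx : η₁' * (2*(R+M+1)) - (R+M) * η₁' * 2 = 2 * η₁' := by ring
        linarith [hx, hη₁'pos]
    _ = η₁' := by ring
  have hwR : |w| ≤ R' := by
    calc |w| ≤ |z + c y| + |w - (z + c y)| := by
          have := abs_add_le (z + c y) (w - (z + c y))
          simpa using this
    _ ≤ (R + M) + 1 := add_le_add hzc (le_trans hwzc (by rw [hη₁'def]; exact min_le_right _ _))
    _ ≤ R' := by rw [hR'def]; linarith
  -- apply g expansion at yb
  have hybδQ : yb < δQ := by
    have : y < δQ/2 := hyδQ
    linarith
  have hgexp := hQb yb hyb0 hybδQ w hwR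
  rw [hweq] at hgexp
  -- identify the point with σ pz
  have hpt : ((xb, yb) : ℝ × ℝ) = σ (lam y + z * y ^ ξ, y) := by
    rw [hxbdef, hybdef]
  rw [hpt] at hgexp
  -- germ: f = g ∘ σ at pz
  have hfgy : f (lam y + z * y ^ ξ, y) = g (σ (lam y + z * y ^ ξ, y)) := by
    apply hgerm
    rw [dist_zero_right]
    calc ‖((lam y + z * y ^ ξ, y) : ℝ × ℝ)‖ ≤ K' * y := hnz
    _ < r₀ := by
        have hx := (lt_div_iff₀ hK'pos).1 hyr₀
        calc K' * y = y * K' := mul_comm _ _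
        _ < r₀ := hx
  -- f expansion
  have hfexp := hPy z hz
  -- compare Q w * yb^e' with Q (z + c y) * y^e'
  have hybe' : yb ^ e' = (yb/y) ^ e' * y ^ e' := by
    rw [← Real.mul_rpow (by positivity) hy0.le, div_mul_cancel₀ _ (ne_of_gt hy0)]
  have hpow2' : (yb/y) ^ e' ≤ 2 := by
    have := (abs_le.1 hpow2).2
    have h2 : min 1 (ε/(8*MQ)) ≤ 1 := min_le_left _ _
    linarith
  have hybe'le : yb ^ e' ≤ 2 * y ^ e' := by
    rw [hybe']
    exact mul_le_mul_of_nonneg_right hpow2' hye'.le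
  have hybe'pos : (0:ℝ) < yb ^ e' := Real.rpow_pos_of_pos hyb0 e'
  have hQdiff : |Q.eval w - Q.eval (z + c y)| ≤ ε/8 := by
    apply hη₁b
    · calc |w| ≤ R' := hwR
      _ ≤ R' + 1 := by linarith
    · calc |z + c y| ≤ R + M := hzc
      _ ≤ R' + 1 := by rw [hR'def]; linarith
    · refine le_trans hwzc ?_
      rw [hη₁'def]; exact min_le_left _ _
  have hQbd : |Q.eval (z + c y)| ≤ MQ := by
    apply hMQb
    calc |z + c y| ≤ R + M := hzc
    _ ≤ R' + 1 := by rw [hR'def]; linarith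
  have hpe' : |yb ^ e' - y ^ e'| ≤ (ε/(8*MQ)) * y ^ e' := by
    rw [hybe']
    have h1 : (yb/y) ^ e' * y ^ e' - y ^ e' = ((yb/y) ^ e' - 1) * y ^ e' := by ring
    rw [h1, abs_mul, abs_of_pos hye']
    gcongr
    exact le_trans hpow2 (min_le_right _ _)
  have step1 : |Q.eval w * yb ^ e' - Q.eval (z + c y) * y ^ e'| ≤ (3*ε/8) * y ^ e' := by
    have hsplit : Q.eval w * yb ^ e' - Q.eval (z + c y) * y ^ e'
        = (Q.eval w - Q.eval (z + c y)) * yb ^ e' + Q.eval (z + c y) * (yb ^ e' - y ^ e') := by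
      ring
    rw [hsplit]
    calc |(Q.eval w - Q.eval (z + c y)) * yb ^ e' + Q.eval (z + c y) * (yb ^ e' - y ^ e')|
        ≤ |Q.eval w - Q.eval (z + c y)| * yb ^ e' + |Q.eval (z + c y)| * |yb ^ e' - y ^ e'| := by
          calc |(Q.eval w - Q.eval (z + c y)) * yb ^ e' + Q.eval (z + c y) * (yb ^ e' - y ^ e')|
              ≤ |(Q.eval w - Q.eval (z + c y)) * yb ^ e'|
              + |Q.eval (z + c y) * (yb ^ e' - y ^ e')| := abs_add_le _ _
          _ = |Q.eval w - Q.eval (z + c y)| * yb ^ e' + |Q.eval (z + c y)| * |yb ^ e' - y ^ e'| := by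
              rw [abs_mul, abs_mul, abs_of_pos hybe'pos]
    _ ≤ (ε/8) * (2 * y ^ e') + MQ * ((ε/(8*MQ)) * y ^ e') := by
        apply add_le_add
        · apply mul_le_mul hQdiff hybe'le (by positivity) (by positivity)
        · exact mul_le_mul hQbd hpe' (abs_nonneg _) hMQ.le
    _ = (3*ε/8) * y ^ e' + (MQ * (ε/(8*MQ)) - ε/8) * y ^ e' := by ring
    _ = (3*ε/8) * y ^ e' := by
        have : MQ * (ε/(8*MQ)) = ε/8 := by field_simp
        rw [this]; ring
  -- final combination
  have final : |P.eval z * y ^ e - Q.eval (z + c y) * y ^ e'|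
      ≤ |P.eval z * y ^ e - f (lam y + z * y ^ ξ, y)|
        + |f (lam y + z * y ^ ξ, y) - Q.eval w * yb ^ e'|
        + |Q.eval w * yb ^ e' - Q.eval (z + c y) * y ^ e'| := by
    have h1 := abs_sub_le (P.eval z * y ^ e) (f (lam y + z * y ^ ξ, y)) (Q.eval (z + c y) * y ^ e')
    have h2 := abs_sub_le (f (lam y + z * y ^ ξ, y)) (Q.eval w * yb ^ e') (Q.eval (z + c y) * y ^ e')
    linarith
  have hterm1 : |P.eval z * y ^ e - f (lam y + z * y ^ ξ, y)| ≤ (ε/8) * y ^ e := by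
    rw [abs_sub_comm]; exact hfexp
  have hterm2 : |f (lam y + z * y ^ ξ, y) - Q.eval w * yb ^ e'| ≤ (ε/8) * (2 * y ^ e') := by
    rw [hfgy]
    calc |g (σ (lam y + z * y ^ ξ, y)) - Q.eval w * yb ^ e'| ≤ (ε/8) * yb ^ e' := hgexp
    _ ≤ (ε/8) * (2 * y ^ e') := by gcongr
  calc |P.eval z * y ^ e - Q.eval (z + c y) * y ^ e'|
      ≤ (ε/8) * y ^ e + (ε/8) * (2 * y ^ e') + (3*ε/8) * y ^ e' := by
        linarith [final, hterm1, hterm2, step1]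
  _ ≤ ε * (y ^ e + y ^ e') := by
        have q1 : (ε/8) * y ^ e ≤ ε * y ^ e :=
          mul_le_mul_of_nonneg_right (by linarith [hε]) hye.le
        have q2 : (ε/8) * (2 * y ^ e') + (3*ε/8) * y ^ e' = (5*ε/8) * y ^ e' := by ring
        have q3 : (5*ε/8) * y ^ e' ≤ ε * y ^ e' :=
          mul_le_mul_of_nonneg_right (by linarith [hε]) hye'.le
        have q4 : ε * (y ^ e + y ^ e') = ε * y ^ e + ε * y ^ e' := by ring
        linarith [q1, q2, q3, q4]

set_option maxHeartbeats 1600000 in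
/-- C¹ invariance (with `Dσ(0) = Id`) of the coefficient polynomials under a horn inclusion:
for `ξ < ξ₀` the polynomials coincide; for `ξ = ξ₀` their degrees and leading coefficients
coincide. -/
theorem stmt8 (σ : ℝ × ℝ → ℝ × ℝ) (hσ : IsC1DiffeoGerm σ)
    (hDσ : fderiv ℝ σ 0 = ContinuousLinearMap.id ℝ (ℝ × ℝ))
    (f g : ℝ × ℝ → ℝ) (hfa : AnalyticAt ℝ f 0) (hga : AnalyticAt ℝ g 0)
    (hf0 : f 0 = 0) (hg0 : g 0 = 0)
    (hfm : MiniRegularInX f) (hgm : MiniRegularInX g)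
    (hfg : ∀ᶠ p in 𝓝 (0 : ℝ × ℝ), f p = g (σ p))
    (lam lam' : ℝ → ℝ) (hγ : AllowableBranch lam) (hγ' : AllowableBranch lam')
    (ξ₀ N : ℝ) (hξ₀ : 1 ≤ ξ₀) (hN : 0 < N)
    (hincl : ∀ᶠ y in 𝓝[>] (0 : ℝ), σ (lam y, y) ∈ Horn ξ₀ lam' N)
    (ξ : ℝ) (hξ1 : 1 ≤ ξ) (hξ2 : ξ ≤ ξ₀)
    (e e' : ℝ) (P Q : Polynomial ℝ) (hP : P ≠ 0) (hQ : Q ≠ 0)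
    (hPexp : AdmitsExpansion f lam ξ e P) (hQexp : AdmitsExpansion g lam' ξ e' Q) :
    e = e' ∧ (ξ < ξ₀ → P = Q) ∧
      (ξ = ξ₀ → P.degree = Q.degree ∧ P.leadingCoeff = Q.leadingCoeff) := by
  -- set up the comparison
  have hσ0 : σ 0 = 0 := hσ.1
  have hσd := diffeo_est σ hσ hDσ
  obtain ⟨_, _, _, _, _, hle, C₁, hC₁, hlamb'⟩ := hγ
  have hlamb : ∀ᶠ y in 𝓝[>] (0:ℝ), |lam y| ≤ C₁ * y :=
    hlamb'.filter_mono (nhdsWithin_mono 0 Set.Ioi_subset_Ici_self)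
  obtain ⟨L, hLpos, δL, hδLpos, hlip⟩ := branch_lipschitz hγ'
  obtain ⟨M, hMpos, c, hcbd, hcomp⟩ := main_comparison σ hσ0 hσd f g hfg lam lam' C₁ hC₁ hlamb
    L δL hLpos hδLpos hlip ξ₀ N hξ₀ hN hincl ξ hξ1 hξ2 e e' P Q hPexp hQexp
  have hξd : (0:ℝ) ≤ ξ₀ - ξ := by linarith
  have hcM : ∀ᶠ y in 𝓝[>] (0:ℝ), |c y| ≤ M := by
    filter_upwards [hcbd, self_mem_nhdsWithin, ev_lt one_pos] with y hy hy0 hy1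
    rw [Set.mem_Ioi] at hy0
    calc |c y| ≤ M * y ^ (ξ₀ - ξ) := hy
    _ ≤ M * 1 := by gcongr; exact Real.rpow_le_one hy0.le hy1.le hξd
    _ = M := mul_one M
  -- step 1 : e = e'
  have hee : e = e' := by
    by_contra hne
    rcases lt_or_gt_of_ne hne with hlt | hgt
    · -- e < e' : P would vanish at z₀
      obtain ⟨z₀, hz₀⟩ := exists_eval_ne hP
      have hR : (1:ℝ) ≤ max 1 |z₀| := le_max_left _ _
      obtain ⟨MQ, hMQ, hMQb⟩ := poly_bound Q (max 1 |z₀| + M)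
      have hcontr : ∀ ε : ℝ, 0 < ε → ε ≤ 1 → |P.eval z₀| ≤ ε * (MQ + 2) := by
        intro ε hε hε1
        have hsm : ∀ᶠ y in 𝓝[>] (0:ℝ), y ^ (e' - e) ≤ ε := by
          have h := Metric.tendsto_nhds.1 (rpow_tendsto_zero
            (show (0:ℝ) < e' - e by linarith)) ε hε
          filter_upwards [h, self_mem_nhdsWithin] with y h1 h2
          rw [Set.mem_Ioi] at h2
          rw [Real.dist_eq, sub_zero, abs_of_pos (Real.rpow_pos_of_pos h2 _)] at h1
          exact h1.le
        obtain ⟨y, hy1, hy2, hy3, hy4⟩ :=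
          ((hcomp (max 1 |z₀|) hR ε hε).and ((hcM).and (hsm.and self_mem_nhdsWithin))).exists
        replace hy4 : (0:ℝ) < y := hy4
        have hye : (0:ℝ) < y ^ e := Real.rpow_pos_of_pos hy4 e
        have hye' : (0:ℝ) < y ^ e' := Real.rpow_pos_of_pos hy4 e'
        have h1 := hy1 z₀ (le_max_right _ _)
        have hQb : |Q.eval (z₀ + c y)| ≤ MQ := by
          apply hMQb
          calc |z₀ + c y| ≤ |z₀| + |c y| := abs_add_le _ _
          _ ≤ max 1 |z₀| + M := add_le_add (le_max_right _ _) hy2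
        have h2 : |P.eval z₀| * y ^ e ≤ MQ * y ^ e' + ε * (y ^ e + y ^ e') := by
          have h3 : |P.eval z₀ * y ^ e| ≤ |Q.eval (z₀ + c y) * y ^ e'| + ε * (y ^ e + y ^ e') := by
            have h4 := abs_sub_abs_le_abs_sub (P.eval z₀ * y ^ e) (Q.eval (z₀ + c y) * y ^ e')
            linarith [h1]
          rw [abs_mul, abs_of_pos hye, abs_mul, abs_of_pos hye'] at h3
          have h4 : |Q.eval (z₀ + c y)| * y ^ e' ≤ MQ * y ^ e' :=
            mul_le_mul_of_nonneg_right hQb hye'.le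
          linarith
        have h5 : y ^ e' = y ^ (e' - e) * y ^ e := by
          rw [← Real.rpow_add hy4]; ring_nf
        have h6 : |P.eval z₀| * y ^ e ≤ (ε * (MQ + 2)) * y ^ e := by
          rw [h5] at h2
          have c1 : MQ * (y ^ (e'-e) * y ^ e) ≤ MQ * (ε * y ^ e) :=
            mul_le_mul_of_nonneg_left (mul_le_mul_of_nonneg_right hy3 hye.le) hMQ.le
          have c2 : ε * (y ^ e + y ^ (e'-e) * y ^ e) ≤ ε * (y ^ e + 1 * y ^ e) := by
            have c3 : y ^ (e'-e) * y ^ e ≤ 1 * y ^ e :=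
              mul_le_mul_of_nonneg_right (le_trans hy3 hε1) hye.le
            exact mul_le_mul_of_nonneg_left (by linarith) hε.le
          have c4 : MQ * (ε * y ^ e) + ε * (y ^ e + 1 * y ^ e) = (ε * (MQ + 2)) * y ^ e := by
            ring
          linarith
        exact le_of_mul_le_mul_right h6 hye
      have habs : |P.eval z₀| ≤ 0 := by
        by_contra hcon
        push_neg at hcon
        have hεp : (0:ℝ) < min 1 (|P.eval z₀| / (2*(MQ+2))) :=
          lt_min one_pos (by positivity)
        have h := hcontr _ hεp (min_le_left _ _)
        have h2 : min 1 (|P.eval z₀| / (2*(MQ+2))) * (MQ+2) ≤ |P.eval z₀|/2 := by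
          calc min 1 (|P.eval z₀| / (2*(MQ+2))) * (MQ+2)
              ≤ (|P.eval z₀|/(2*(MQ+2))) * (MQ+2) := by
                apply mul_le_mul_of_nonneg_right (min_le_right _ _) (by linarith)
          _ = |P.eval z₀|/2 := by field_simp
        linarith
      exact hz₀ (abs_eq_zero.mp (le_antisymm habs (abs_nonneg _)))
    · -- e > e' : Q would vanish on [-1,1]
      obtain ⟨MP, hMP, hMPb⟩ := poly_bound P (M + 2)
      have hRge : (1:ℝ) ≤ M + 2 := by linarith
      have hQzero : ∀ u : ℝ, u ∈ Set.Icc (-1:ℝ) 1 → Q.IsRoot u := by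
        intro u hu
        rw [Set.mem_Icc] at hu
        have huabs : |u| ≤ 1 := abs_le.2 ⟨hu.1, hu.2⟩
        have hcontr : ∀ ε : ℝ, 0 < ε → ε ≤ 1 → |Q.eval u| ≤ ε * (MP + 2) := by
          intro ε hε hε1
          have hsm : ∀ᶠ y in 𝓝[>] (0:ℝ), y ^ (e - e') ≤ ε := by
            have h := Metric.tendsto_nhds.1 (rpow_tendsto_zero
              (show (0:ℝ) < e - e' by linarith)) ε hε
            filter_upwards [h, self_mem_nhdsWithin] with y h1 h2
            rw [Set.mem_Ioi] at h2
            rw [Real.dist_eq, sub_zero, abs_of_pos (Real.rpow_pos_of_pos h2 _)] at h1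
            exact h1.le
          obtain ⟨y, hy1, hy2, hy3, hy4⟩ :=
            ((hcomp (M + 2) hRge ε hε).and ((hcM).and (hsm.and self_mem_nhdsWithin))).exists
          replace hy4 : (0:ℝ) < y := hy4
          have hye : (0:ℝ) < y ^ e := Real.rpow_pos_of_pos hy4 e
          have hye' : (0:ℝ) < y ^ e' := Real.rpow_pos_of_pos hy4 e'
          have hz : |u - c y| ≤ M + 2 := by
            calc |u - c y| ≤ |u| + |c y| := abs_sub _ _
            _ ≤ 1 + M := add_le_add huabs hy2
            _ ≤ M + 2 := by linarith
          have h1 := hy1 (u - c y) hz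
          rw [sub_add_cancel] at h1
          have hPb : |P.eval (u - c y)| ≤ MP := hMPb _ hz
          have h2 : |Q.eval u| * y ^ e' ≤ MP * y ^ e + ε * (y ^ e + y ^ e') := by
            have h3 : |Q.eval u * y ^ e'| ≤ |P.eval (u - c y) * y ^ e| + ε * (y ^ e + y ^ e') := by
              have h4 := abs_sub_abs_le_abs_sub (Q.eval u * y ^ e') (P.eval (u - c y) * y ^ e)
              rw [abs_sub_comm] at h4
              linarith [h1]
            rw [abs_mul, abs_of_pos hye', abs_mul, abs_of_pos hye] at h3
            have h4 : |P.eval (u - c y)| * y ^ e ≤ MP * y ^ e :=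
              mul_le_mul_of_nonneg_right hPb hye.le
            linarith
          have h5 : y ^ e = y ^ (e - e') * y ^ e' := by
            rw [← Real.rpow_add hy4]; ring_nf
          have h6 : |Q.eval u| * y ^ e' ≤ (ε * (MP + 2)) * y ^ e' := by
            rw [h5] at h2
            have c1 : MP * (y ^ (e-e') * y ^ e') ≤ MP * (ε * y ^ e') :=
              mul_le_mul_of_nonneg_left (mul_le_mul_of_nonneg_right hy3 hye'.le) hMP.le
            have c2 : ε * (y ^ (e-e') * y ^ e' + y ^ e') ≤ ε * (1 * y ^ e' + y ^ e') := by
              have c3 : y ^ (e-e') * y ^ e' ≤ 1 * y ^ e' :=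
                mul_le_mul_of_nonneg_right (le_trans hy3 hε1) hye'.le
              exact mul_le_mul_of_nonneg_left (by linarith) hε.le
            have c4 : MP * (ε * y ^ e') + ε * (1 * y ^ e' + y ^ e') = (ε * (MP + 2)) * y ^ e' := by
              ring
            linarith
          exact le_of_mul_le_mul_right h6 hye'
        have habs : |Q.eval u| ≤ 0 := by
          by_contra hcon
          push_neg at hcon
          have hεp : (0:ℝ) < min 1 (|Q.eval u| / (2*(MP+2))) :=
            lt_min one_pos (by positivity)
          have h := hcontr _ hεp (min_le_left _ _)
          have h2 : min 1 (|Q.eval u| / (2*(MP+2))) * (MP+2) ≤ |Q.eval u|/2 := by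
            calc min 1 (|Q.eval u| / (2*(MP+2))) * (MP+2)
                ≤ (|Q.eval u|/(2*(MP+2))) * (MP+2) := by
                  apply mul_le_mul_of_nonneg_right (min_le_right _ _) (by linarith)
            _ = |Q.eval u|/2 := by field_simp
          linarith
        exact abs_eq_zero.mp (le_antisymm habs (abs_nonneg _))
      exact hQ (Q.eq_zero_of_infinite_isRoot
        (Set.Infinite.mono hQzero (Set.Icc_infinite (by norm_num : (-1:ℝ) < 1))))
  subst hee
  -- key comparison with equal exponents
  have key2 : ∀ R : ℝ, 1 ≤ R → ∀ ε : ℝ, 0 < ε → ∀ᶠ y in 𝓝[>] (0:ℝ),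
      (0 < y ∧ |c y| ≤ M * y ^ (ξ₀ - ξ) ∧ |c y| ≤ M) ∧
      ∀ z : ℝ, |z| ≤ R → |P.eval z - Q.eval (z + c y)| ≤ ε := by
    intro R hR ε hε
    filter_upwards [hcomp R hR (ε/2) (by positivity), hcbd, hcM, self_mem_nhdsWithin]
      with y h1 h2 h2' h3
    rw [Set.mem_Ioi] at h3
    refine ⟨⟨h3, h2, h2'⟩, fun z hz => ?_⟩
    have hye : (0:ℝ) < y ^ e := Real.rpow_pos_of_pos h3 e
    have h4 := h1 z hz
    have h5 : |P.eval z - Q.eval (z + c y)| * y ^ e ≤ ε * y ^ e := by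
      calc |P.eval z - Q.eval (z + c y)| * y ^ e
          = |(P.eval z - Q.eval (z + c y)) * y ^ e| := by rw [abs_mul, abs_of_pos hye]
      _ = |P.eval z * y ^ e - Q.eval (z + c y) * y ^ e| := by rw [sub_mul]
      _ ≤ (ε/2) * (y ^ e + y ^ e) := h4
      _ = ε * y ^ e := by ring
    exact le_of_mul_le_mul_right h5 hye
  refine ⟨rfl, ?_, ?_⟩
  · -- ξ < ξ₀ : P = Q
    intro hltξ
    apply Polynomial.funext
    intro r
    have hbound : ∀ ε : ℝ, 0 < ε → |P.eval r - Q.eval r| ≤ 2 * ε := by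
      intro ε hε
      obtain ⟨η, hη, hηb⟩ := poly_ucont Q (|r| + M + 1) ε hε
      have hsm : ∀ᶠ y in 𝓝[>] (0:ℝ), M * y ^ (ξ₀ - ξ) ≤ η := by
        have h := Metric.tendsto_nhds.1 (rpow_tendsto_zero
          (show (0:ℝ) < ξ₀ - ξ by linarith)) (η/M) (by positivity)
        filter_upwards [h, self_mem_nhdsWithin] with y h1 h2
        rw [Set.mem_Ioi] at h2
        rw [Real.dist_eq, sub_zero, abs_of_pos (Real.rpow_pos_of_pos h2 _)] at h1
        rw [← le_div_iff₀' hMpos]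
        exact h1.le
      obtain ⟨y, ⟨⟨hy0, hycb, hycM⟩, hy1⟩, hy2⟩ :=
        ((key2 (max 1 |r|) (le_max_left _ _) ε hε).and hsm).exists
      have h1 := hy1 r (le_max_right _ _)
      have hcη : |c y| ≤ η := le_trans hycb hy2
      have h2 : |Q.eval (r + c y) - Q.eval r| ≤ ε := by
        apply hηb
        · calc |r + c y| ≤ |r| + |c y| := abs_add_le _ _
          _ ≤ |r| + M + 1 := by linarith [hycM]
        · linarith [abs_nonneg r, hMpos]
        · calc |r + c y - r| = |c y| := by ring_nf
          _ ≤ η := hcη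
      calc |P.eval r - Q.eval r|
          ≤ |P.eval r - Q.eval (r + c y)| + |Q.eval (r + c y) - Q.eval r| := abs_sub_le _ _ _
      _ ≤ ε + ε := add_le_add h1 h2
      _ = 2 * ε := by ring
    by_contra hcon
    have hpos : 0 < |P.eval r - Q.eval r| := by
      rcases eq_or_ne (P.eval r) (Q.eval r) with h | h
      · exact absurd h hcon
      · exact abs_pos.2 (sub_ne_zero.2 h)
    have := hbound (|P.eval r - Q.eval r|/4) (by positivity)
    linarith
  · -- ξ = ξ₀ : same degree and leading coefficient
    intro heqξ
    have hkey : ∀ n : ℕ, ∃ y : ℝ, (0 < y ∧ |c y| ≤ M) ∧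
        ∀ z : ℝ, |z| ≤ (n:ℝ) + 1 → |P.eval z - Q.eval (z + c y)| ≤ 1/((n:ℝ)+1) := by
      intro n
      obtain ⟨y, ⟨hy0, _, hyM⟩, hy1⟩ :=
        (key2 ((n:ℝ)+1) (by norm_num : (1:ℝ) ≤ (n:ℝ)+1) (1/((n:ℝ)+1)) (by positivity)).exists
      exact ⟨y, ⟨hy0, hyM⟩, hy1⟩
    choose v hv1 hv2 using hkey
    obtain ⟨c₀, _, φ, hφ, hφt⟩ := tendsto_subseq_of_bounded (Metric.isBounded_Icc (-M) M)
      (x := fun n => c (v n)) (fun n => by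
        rw [Set.mem_Icc]
        exact abs_le.1 (hv1 n).2)
    have hPQ : ∀ r : ℝ, P.eval r = Q.eval (r + c₀) := by
      intro r
      have h1 : Tendsto (fun k => Q.eval (r + c (v (φ k)))) atTop (𝓝 (Q.eval (r + c₀))) := by
        have h2 : Tendsto (fun k => r + c (v (φ k))) atTop (𝓝 (r + c₀)) :=
          tendsto_const_nhds.add hφt
        exact (Q.continuous.tendsto (r + c₀)).comp h2
      have h3 : Tendsto (fun k => P.eval r - Q.eval (r + c (v (φ k)))) atTop
          (𝓝 (P.eval r - Q.eval (r + c₀))) := tendsto_const_nhds.sub h1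
      have h4 : Tendsto (fun k => P.eval r - Q.eval (r + c (v (φ k)))) atTop (𝓝 0) := by
        apply squeeze_zero_norm' (a := fun k : ℕ => 1/((k:ℝ)+1))
        · filter_upwards [eventually_ge_atTop (Nat.ceil |r|)] with k hk
          have hrk : |r| ≤ (k:ℝ) := le_trans (Nat.le_ceil _) (by exact_mod_cast hk)
          have hkφ : (k:ℝ) ≤ (φ k : ℝ) := by exact_mod_cast hφ.le_apply
          have h5 := hv2 (φ k) r (by linarith)
          calc ‖P.eval r - Q.eval (r + c (v (φ k)))‖
              = |P.eval r - Q.eval (r + c (v (φ k)))| := rfl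
          _ ≤ 1/((φ k : ℝ)+1) := h5
          _ ≤ 1/((k:ℝ)+1) := by
              apply one_div_le_one_div_of_le (by positivity)
              linarith
        · exact tendsto_one_div_add_atTop_nhds_zero_nat
      have h5 := tendsto_nhds_unique h3 h4
      linarith [h5]
    have hP' : P = Q.comp (X + C c₀) := by
      apply Polynomial.funext
      intro r
      rw [Polynomial.eval_comp]
      simp only [Polynomial.eval_add, Polynomial.eval_X, Polynomial.eval_C]
      exact hPQ r
    constructor
    · have hnd : P.natDegree = Q.natDegree := by
        rw [hP', Polynomial.natDegree_comp, Polynomial.natDegree_X_add_C, mul_one]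
      rw [Polynomial.degree_eq_natDegree hP, Polynomial.degree_eq_natDegree hQ, hnd]
    · rw [hP', Polynomial.leadingCoeff_comp
        (by rw [Polynomial.natDegree_X_add_C]; exact one_ne_zero)]
      rw [(Polynomial.monic_X_add_C c₀).leadingCoeff, one_pow, mul_one]
end
end
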